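/- arXiv:math/0109127 — 8 statements merged into one kernel-verified Lean document; each statement's English description precedes it below -/
import Mathlib

section
/- Let A, B ⊂ ℤ be finite sets whose elements are distinct modulo M. Define D_A = {gcd(a-a', M) : a,a' ∈ A, a ≠ a'} and D_B analogously. Then A ⊕ B = ℤ/Mℤ if and only if |A|·|B| = M and D_A ∩ D_B = ∅. -/
open Finset Polynomial

section Aux

lemma gcd_congr_mod (M : ℕ) {x y : ℤ} (h : (M:ℤ) ∣ x - y) : Int.gcd x M = Int.gcd y M := by
  have key : ∀ x y : ℤ, (M:ℤ) ∣ x - y → Int.gcd x M ∣ Int.gcd y M := by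
    intro x y h
    have h1 : (Int.gcd x M : ℤ) ∣ x := Int.gcd_dvd_left x M
    have h2 : (Int.gcd x M : ℤ) ∣ (M:ℤ) := Int.gcd_dvd_right x M
    have h3 : (Int.gcd x M : ℤ) ∣ y := by
      have h4 : (Int.gcd x M : ℤ) ∣ x - y := h2.trans h
      have := dvd_sub h1 h4
      simpa using this
    exact Int.natCast_dvd_natCast.mp (Int.dvd_coe_gcd h3 h2)
  exact Nat.dvd_antisymm (key x y h) (key y x (by simpa using (dvd_neg.mpr h)))

lemma zpow_congr_mod (M : ℕ) {ω : ℂ} (hω : ω ≠ 0) (h1 : ω ^ (M:ℤ) = 1) {b c : ℤ}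
    (h : (M:ℤ) ∣ b - c) : ω ^ b = ω ^ c := by
  obtain ⟨q, hq⟩ := h
  have hb : b = c + (M:ℤ) * q := by linarith
  rw [hb, zpow_add₀ hω, zpow_mul, h1, one_zpow, mul_one]

lemma zpow_val_eq (M : ℕ) [NeZero M] {ω : ℂ} (hω : ω ≠ 0) (h1 : ω ^ (M:ℤ) = 1) (b : ℤ) :
    ω ^ b = ω ^ (((b : ZMod M).val : ℕ)) := by
  rw [← zpow_natCast]
  apply zpow_congr_mod M hω h1
  rw [← ZMod.intCast_zmod_eq_zero_iff_dvd]
  push_cast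
  rw [ZMod.natCast_val, ZMod.cast_id]
  ring

lemma geom_vanish (M : ℕ) (hM : 0 < M) {ζ : ℂ} (hζ : IsPrimitiveRoot ζ M) (t : ℤ) :
    ∑ j ∈ Finset.range M, ζ ^ ((j:ℤ) * t) = if (M:ℤ) ∣ t then (M:ℂ) else 0 := by
  have hζ0 : ζ ≠ 0 := hζ.ne_zero hM.ne'
  have hconv : ∀ j ∈ Finset.range M, ζ ^ ((j:ℤ) * t) = (ζ ^ t) ^ j := by
    intro j _
    rw [mul_comm, zpow_mul, zpow_natCast]
  rw [Finset.sum_congr rfl hconv]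
  by_cases hd : (M:ℤ) ∣ t
  · have : ζ ^ t = 1 := (hζ.zpow_eq_one_iff_dvd t).mpr hd
    simp [this, hd]
  · have hne : ζ ^ t ≠ 1 := fun hc => hd ((hζ.zpow_eq_one_iff_dvd t).mp hc)
    rw [if_neg hd, geom_sum_eq hne]
    have : (ζ ^ t) ^ M = 1 := by
      rw [← zpow_natCast, ← zpow_mul, mul_comm, zpow_mul, hζ.zpow_eq_one, one_zpow]
    rw [this, sub_self, zero_div]

lemma exists_k (M : ℕ) (hM : 0 < M) (α β : ℤ) (hg : Int.gcd α M = Int.gcd β M) :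
    ∃ k : ℕ, Nat.Coprime k M ∧ (M:ℤ) ∣ α - (k:ℤ) * β := by
  haveI : NeZero M := ⟨hM.ne'⟩
  set d : ℕ := Int.gcd α M with hd
  have hd0 : 0 < d := by
    rcases Nat.eq_zero_or_pos d with h | h
    · exfalso
      have h2 : (M:ℤ) = 0 := (Int.gcd_eq_zero_iff.mp (hd ▸ h : Int.gcd α (M:ℤ) = 0)).2
      simp at h2; omega
    · exact h
  have hdM : d ∣ M := Int.natCast_dvd_natCast.mp (Int.gcd_dvd_right α M)
  set e : ℕ := M / d with he
  have hMde : M = d * e := (Nat.mul_div_cancel' hdM).symm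
  have he0 : 0 < e := Nat.div_pos (Nat.le_of_dvd hM hdM) hd0
  haveI : NeZero e := ⟨he0.ne'⟩
  have hdα : (d:ℤ) ∣ α := Int.gcd_dvd_left α M
  have hdβ : (d:ℤ) ∣ β := hg ▸ Int.gcd_dvd_left β M
  set α' : ℤ := α / (d:ℤ) with hα'
  set β' : ℤ := β / (d:ℤ) with hβ'
  have hαd : α = (d:ℤ) * α' := (Int.mul_ediv_cancel' hdα).symm
  have hβd : β = (d:ℤ) * β' := (Int.mul_ediv_cancel' hdβ).symm
  have hMe : ((M:ℤ)) / (d:ℤ) = (e:ℤ) := by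
    rw [hMde]; push_cast; rw [Int.mul_ediv_cancel_left _ (by exact_mod_cast hd0.ne')]
  have hcopα : Int.gcd α' e = 1 := by
    have := Int.gcd_div_gcd_div_gcd (i := α) (j := (M:ℤ)) (by exact_mod_cast hd0)
    rwa [← hd, hMe] at this
  have hcopβ : Int.gcd β' e = 1 := by
    have h1 : Int.gcd β (M:ℤ) = d := hg.symm
    have := Int.gcd_div_gcd_div_gcd (i := β) (j := (M:ℤ)) (by rw [h1]; exact_mod_cast hd0)
    rwa [h1, hMe] at this
  have huβ : IsUnit ((β' : ZMod e)) := by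
    obtain ⟨u, v, huv⟩ := Int.isCoprime_iff_gcd_eq_one.mpr hcopβ
    refine IsUnit.of_mul_eq_one (u : ZMod e) ?_
    have : ((u * β' + v * e : ℤ) : ZMod e) = 1 := by rw [huv]; simp
    push_cast at this
    simpa [mul_comm, ZMod.natCast_self] using this
  have huα : IsUnit ((α' : ZMod e)) := by
    obtain ⟨u, v, huv⟩ := Int.isCoprime_iff_gcd_eq_one.mpr hcopα
    refine IsUnit.of_mul_eq_one (u : ZMod e) ?_
    have : ((u * α' + v * e : ℤ) : ZMod e) = 1 := by rw [huv]; simp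
    push_cast at this
    simpa [mul_comm, ZMod.natCast_self] using this
  set w : (ZMod e)ˣ := huα.unit * huβ.unit⁻¹ with hw
  obtain ⟨U, hU⟩ := ZMod.unitsMap_surjective (n := e) (m := M) ⟨d, by rw [hMde, Nat.mul_comm]⟩ w
  refine ⟨(U : ZMod M).val, ZMod.val_coe_unit_coprime U, ?_⟩
  have hkβ : ((((U : ZMod M).val : ℤ) * β' - α' : ℤ) : ZMod e) = 0 := by
    have hcast : ((((U : ZMod M).val : ℕ) : ZMod e)) = (w : ZMod e) := by
      rw [← hU]
      rw [ZMod.unitsMap_def]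
      simp [ZMod.natCast_val]
    have hwval : (w : ZMod e) * (β' : ZMod e) = (α' : ZMod e) := by
      rw [← huβ.unit_spec, ← huα.unit_spec, hw, Units.val_mul, mul_assoc, ← Units.val_mul,
        inv_mul_cancel, Units.val_one, mul_one]
    push_cast
    rw [hcast, hwval]
    ring
  have hediv : (e:ℤ) ∣ ((U : ZMod M).val : ℤ) * β' - α' :=
    (ZMod.intCast_zmod_eq_zero_iff_dvd _ e).mp hkβ
  have hMZ : (M:ℤ) = (d:ℤ) * (e:ℤ) := by exact_mod_cast hMde
  have hdvd : (M:ℤ) ∣ (d:ℤ) * (((U : ZMod M).val : ℤ) * β' - α') := by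
    rw [hMZ]
    exact mul_dvd_mul_left _ hediv
  have hfinal : (d:ℤ) * (((U : ZMod M).val : ℤ) * β' - α') = ((U : ZMod M).val : ℤ) * β - α := by
    rw [hαd, hβd]; ring
  rw [hfinal] at hdvd
  have := dvd_neg.mpr hdvd
  simpa [neg_sub] using this

lemma conj_vanish (M : ℕ) (hM : 0 < M) (B : Finset ℤ) {ζ : ℂ} (hζ : IsPrimitiveRoot ζ M)
    (j k : ℕ) (hk : Nat.Coprime k M)
    (h0 : ∑ b ∈ B, ζ ^ ((j:ℤ) * b) = 0) : ∑ b ∈ B, ζ ^ (((j * k : ℕ):ℤ) * b) = 0 := by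
  haveI : NeZero M := ⟨hM.ne'⟩
  have hζ0 : ζ ≠ 0 := hζ.ne_zero hM.ne'
  set g : ℕ := Nat.gcd j M with hgdef
  have hg0 : 0 < g := Nat.gcd_pos_of_pos_right _ hM
  have hgM : g ∣ M := Nat.gcd_dvd_right _ _
  set e : ℕ := M / g with hedef
  have hMe : M = g * e := (Nat.mul_div_cancel' hgM).symm
  have he0 : 0 < e := Nat.div_pos (Nat.le_of_dvd hM hgM) hg0
  set j' : ℕ := j / g with hj'def
  have hgj : g ∣ j := Nat.gcd_dvd_left _ _
  have hjj : j = g * j' := (Nat.mul_div_cancel' hgj).symm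
  have hcop : Nat.Coprime j' e := Nat.coprime_div_gcd_div_gcd hg0
  have hprimg : IsPrimitiveRoot (ζ ^ g) e := hζ.pow hM hMe
  set ω : ℂ := ζ ^ j with hωdef
  have hωprim : IsPrimitiveRoot ω e := by
    have := hprimg.pow_of_coprime j' hcop
    rwa [← pow_mul, ← hjj] at this
  have hcopk : Nat.Coprime k e :=
    Nat.Coprime.coprime_dvd_right (by exact ⟨g, by rw [hMe, Nat.mul_comm]⟩) hk
  have hωkprim : IsPrimitiveRoot (ω ^ k) e := hωprim.pow_of_coprime k hcopk
  have hω0 : ω ≠ 0 := pow_ne_zero _ hζ0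
  have hωk0 : ω ^ k ≠ 0 := pow_ne_zero _ hω0
  have hζM : ζ ^ (M:ℤ) = 1 := by rw [zpow_natCast, hζ.pow_eq_one]
  have hωM : ω ^ (M:ℤ) = 1 := by
    rw [hωdef, ← zpow_natCast ζ j, ← zpow_mul, mul_comm, zpow_mul, hζM, one_zpow]
  have hωkM : (ω ^ k) ^ (M:ℤ) = 1 := by
    rw [← zpow_natCast, ← zpow_mul, mul_comm, zpow_mul, hωM, one_zpow]
  set P : ℚ[X] := ∑ b ∈ B, X ^ (((b : ZMod M).val : ℕ)) with hP
  have haevalP : ∀ (x : ℂ), (aeval x) P = ∑ b ∈ B, x ^ (((b : ZMod M).val : ℕ)) := by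
    intro x
    rw [hP, map_sum]
    simp
  have hPω : (aeval ω) P = 0 := by
    rw [haevalP]
    rw [← h0]
    apply Finset.sum_congr rfl
    intro b _
    rw [← zpow_val_eq M hω0 hωM, hωdef, ← zpow_natCast ζ j, ← zpow_mul]
  have hdvd : minpoly ℚ ω ∣ P := minpoly.dvd ℚ ω hPω
  have hmin : minpoly ℚ ω = cyclotomic e ℚ := (cyclotomic_eq_minpoly_rat hωprim he0).symm
  have hrootk : (aeval (ω ^ k)) (cyclotomic e ℚ) = 0 := by
    have h1 : IsRoot (cyclotomic e ℂ) (ω ^ k) := hωkprim.isRoot_cyclotomic he0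
    rw [aeval_def, ← eval_map, map_cyclotomic]
    exact h1
  have hPωk : (aeval (ω ^ k)) P = 0 := by
    obtain ⟨Q, hQ⟩ := hdvd
    have hz : (aeval (ω ^ k)) (minpoly ℚ ω) = 0 := by rw [hmin]; exact hrootk
    rw [hQ, map_mul, hz, zero_mul]
  rw [← hPωk, haevalP]
  apply Finset.sum_congr rfl
  intro b _
  rw [← zpow_val_eq M hωk0 hωkM, hωdef, ← pow_mul, ← zpow_natCast ζ (j * k), ← zpow_mul]

lemma sumsq_fibers {γ : Type*} [DecidableEq γ] [Fintype γ] (T : Finset (ℤ×ℤ)) (g : ℤ×ℤ → γ) :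
    ((T ×ˢ T).filter (fun r => g r.1 = g r.2)).card
      = ∑ c : γ, (T.filter fun p => g p = c).card * (T.filter fun p => g p = c).card := by
  rw [Finset.card_eq_sum_card_fiberwise (f := fun r => g r.1) (t := Finset.univ)
    (fun _ _ => Finset.mem_univ _)]
  apply Finset.sum_congr rfl
  intro c _
  rw [← Finset.card_product]
  congr 1
  ext r
  simp only [Finset.mem_filter, Finset.mem_product]
  constructor
  · rintro ⟨⟨⟨h1, h2⟩, h3⟩, h4⟩
    exact ⟨⟨h1, h4⟩, ⟨h2, h3 ▸ h4⟩⟩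
  · rintro ⟨⟨h1, h4⟩, h2, h5⟩
    exact ⟨⟨⟨h1, h2⟩, h4.trans h5.symm⟩, h4⟩

end Aux

theorem stmt_4 (M : ℕ) (hM : 0 < M) (A B : Finset ℤ)
    (hA : ∀ a ∈ A, ∀ a' ∈ A, (M : ℤ) ∣ a - a' → a = a')
    (hB : ∀ b ∈ B, ∀ b' ∈ B, (M : ℤ) ∣ b - b' → b = b') :
    (∀ n : ℤ, ∃! p : ℤ × ℤ, p.1 ∈ A ∧ p.2 ∈ B ∧ (M : ℤ) ∣ p.1 + p.2 - n) ↔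
      (A.card * B.card = M ∧
        {m : ℕ | ∃ a ∈ A, ∃ a' ∈ A, a ≠ a' ∧ Int.gcd (a - a') M = m} ∩
          {m : ℕ | ∃ b ∈ B, ∃ b' ∈ B, b ≠ b' ∧ Int.gcd (b - b') M = m} = ∅) := by
  classical
  haveI : NeZero M := ⟨hM.ne'⟩
  set T : Finset (ℤ × ℤ) := A ×ˢ B with hT
  set f : ℤ × ℤ → ZMod M := fun p => ((p.1 + p.2 : ℤ) : ZMod M) with hf
  have hdvd_iff : ∀ x y : ℤ, ((x : ZMod M) = (y : ZMod M)) ↔ (M:ℤ) ∣ x - y := by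
    intro x y
    rw [← sub_eq_zero, ← Int.cast_sub, ZMod.intCast_zmod_eq_zero_iff_dvd]
  constructor
  · -- forward direction
    intro h
    -- injectivity of f on T
    have hinj : ∀ p ∈ T, ∀ q ∈ T, f p = f q → p = q := by
      intro p hp q hq hfq
      rw [hT, Finset.mem_product] at hp hq
      have hd : (M:ℤ) ∣ (p.1 + p.2) - (q.1 + q.2) := (hdvd_iff _ _).mp hfq
      have h1 := (h (q.1 + q.2)).unique (y₁ := p) (y₂ := q)
        ⟨hp.1, hp.2, hd⟩ ⟨hq.1, hq.2, by simp⟩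
      exact h1
    have hsurj : ∀ c : ZMod M, ∃ p ∈ T, f p = c := by
      intro c
      obtain ⟨p, ⟨hpa, hpb, hd⟩, -⟩ := h ((c.val : ℤ))
      refine ⟨p, by rw [hT, Finset.mem_product]; exact ⟨hpa, hpb⟩, ?_⟩
      have h2 : ((p.1 + p.2 : ℤ) : ZMod M) = (((c.val : ℤ)) : ZMod M) := (hdvd_iff _ _).mpr hd
      show ((p.1 + p.2 : ℤ) : ZMod M) = c
      rw [h2]
      push_cast
      rw [ZMod.natCast_val, ZMod.cast_id]
    have himg : T.image f = Finset.univ := by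
      apply Finset.eq_univ_of_forall
      intro c
      obtain ⟨p, hp, hfp⟩ := hsurj c
      exact Finset.mem_image.mpr ⟨p, hp, hfp⟩
    have hcardT : T.card = M := by
      have h1 : (T.image f).card = T.card := Finset.card_image_of_injOn hinj
      rw [himg] at h1
      rw [← h1, Finset.card_univ, ZMod.card]
    have hcard : A.card * B.card = M := by
      rw [← Finset.card_product, ← hT, hcardT]
    refine ⟨hcard, ?_⟩
    -- disjointness of gcd sets
    rw [Set.eq_empty_iff_forall_notMem]
    rintro m ⟨⟨a₁, ha₁, a₂, ha₂, hane, hga⟩, ⟨b₁, hb₁, b₂, hb₂, hbne, hgb⟩⟩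
    have hg : Int.gcd (a₁ - a₂) M = Int.gcd (b₁ - b₂) M := hga.trans hgb.symm
    obtain ⟨k, hkcop, hkdvd⟩ := exists_k M hM (a₁ - a₂) (b₁ - b₂) hg
    set ζ : ℂ := Complex.exp (2 * Real.pi * Complex.I / M) with hζdef
    have hζ : IsPrimitiveRoot ζ M := Complex.isPrimitiveRoot_exp M hM.ne'
    have hζ0 : ζ ≠ 0 := hζ.ne_zero hM.ne'
    set s : ℤ × ℤ → ℤ := fun p => p.1 + (k:ℤ) * p.2 with hs
    set gk : ℤ × ℤ → ZMod M := fun p => ((s p : ℤ) : ZMod M) with hgk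
    set count : ZMod M → ℕ := fun c => (T.filter fun p => gk p = c).card with hcount
    have hsum1 : ∑ c : ZMod M, count c = M := by
      have h1 := (Finset.card_eq_sum_card_fiberwise (s := T) (t := Finset.univ) (f := gk)
        (fun p _ => Finset.mem_univ (gk p)))
      rw [hcardT] at h1
      exact h1.symm
    set W : ℕ := ((T ×ˢ T).filter (fun r => gk r.1 = gk r.2)).card with hW
    have hsum2 : ∑ c : ZMod M, count c * count c = W := (sumsq_fibers T gk).symm
    -- the big complex computation : W = M
    have hWM : W = M := by
      have hstep1 : ∀ r ∈ T ×ˢ T,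
          ∑ j ∈ Finset.range M, ζ ^ ((j:ℤ) * (s r.1 - s r.2))
            = if gk r.1 = gk r.2 then (M:ℂ) else 0 := by
        intro r _
        rw [geom_vanish M hM hζ]
        congr 1
        rw [eq_iff_iff]
        exact (hdvd_iff (s r.1) (s r.2)).symm
      have hleft : ∑ r ∈ T ×ˢ T, ∑ j ∈ Finset.range M, ζ ^ ((j:ℤ) * (s r.1 - s r.2))
          = (W : ℂ) * M := by
        rw [Finset.sum_congr rfl hstep1, Finset.sum_ite, Finset.sum_const, Finset.sum_const]
        simp [hW, mul_comm]
      -- evaluate by swapping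
      have hswap : ∑ r ∈ T ×ˢ T, ∑ j ∈ Finset.range M, ζ ^ ((j:ℤ) * (s r.1 - s r.2))
          = ∑ j ∈ Finset.range M, ∑ r ∈ T ×ˢ T, ζ ^ ((j:ℤ) * (s r.1 - s r.2)) :=
        Finset.sum_comm
      -- key vanishing for j ≠ 0
      have hEzero : ∀ j ∈ Finset.range M, j ≠ 0 →
          (∑ p ∈ T, ζ ^ ((j:ℤ) * s p)) = 0 := by
        intro j hjr hj0
        have hjM : ¬ (M ∣ j) := by
          intro hc
          rw [Finset.mem_range] at hjr
          have := Nat.le_of_dvd (Nat.pos_of_ne_zero hj0) hc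
          omega
        have hjMZ : ¬ ((M:ℤ) ∣ (j:ℤ)) := fun hc => hjM (Int.natCast_dvd_natCast.mp hc)
        have hζM : ζ ^ (M:ℤ) = 1 := by rw [zpow_natCast, hζ.pow_eq_one]
        -- factorization of the twisted sum
        have hfact : ∑ p ∈ T, ζ ^ ((j:ℤ) * s p)
            = (∑ a ∈ A, ζ ^ ((j:ℤ) * a)) * (∑ b ∈ B, ζ ^ (((j * k : ℕ):ℤ) * b)) := by
          rw [Finset.sum_mul_sum, hT, Finset.sum_product]
          apply Finset.sum_congr rfl; intro a _
          apply Finset.sum_congr rfl; intro b _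
          rw [← zpow_add₀ hζ0]
          congr 1
          simp only [hs]
          push_cast
          ring
        -- the tiling forces the untwisted product to vanish
        have hprod : (∑ a ∈ A, ζ ^ ((j:ℤ) * a)) * (∑ b ∈ B, ζ ^ ((j:ℤ) * b)) = 0 := by
          have hstep : (∑ a ∈ A, ζ ^ ((j:ℤ) * a)) * (∑ b ∈ B, ζ ^ ((j:ℤ) * b))
              = ∑ p ∈ T, ζ ^ ((j:ℤ) * (((f p).val : ℕ) : ℤ)) := by
            rw [Finset.sum_mul_sum, hT, Finset.sum_product]
            apply Finset.sum_congr rfl; intro a _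
            apply Finset.sum_congr rfl; intro b _
            rw [← zpow_add₀ hζ0]
            apply zpow_congr_mod M hζ0 hζM
            have hbase : (M:ℤ) ∣ (a + b) - ((((f (a, b)).val : ℕ)) : ℤ) := by
              rw [← ZMod.intCast_zmod_eq_zero_iff_dvd]
              push_cast
              rw [ZMod.natCast_val, ZMod.cast_id]
              simp only [hf]
              push_cast
              ring
            have hmul := hbase.mul_left (j:ℤ)
            have heq : (j:ℤ) * ((a + b) - ((((f (a, b)).val : ℕ)) : ℤ))
                = ((j:ℤ) * a + (j:ℤ) * b) - (j:ℤ) * ((((f (a, b)).val : ℕ)) : ℤ) := by ring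
            rwa [heq] at hmul
          have himage : ∑ p ∈ T, ζ ^ ((j:ℤ) * (((f p).val : ℕ) : ℤ))
              = ∑ c : ZMod M, ζ ^ ((j:ℤ) * (((c.val : ℕ)) : ℤ)) := by
            rw [← himg]
            exact (Finset.sum_image (s := T) (g := f)
              (f := fun c : ZMod M => ζ ^ ((j:ℤ) * (((c.val : ℕ)) : ℤ)))
              (fun p hp q hq => hinj p hp q hq)).symm
          have hrange : ∑ c : ZMod M, ζ ^ ((j:ℤ) * (((c.val : ℕ)) : ℤ))
              = ∑ i ∈ Finset.range M, ζ ^ ((i:ℤ) * (j:ℤ)) := by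
            apply Finset.sum_nbij' (i := fun c : ZMod M => c.val)
              (j := fun i : ℕ => ((i : ℕ) : ZMod M))
            · intro c _
              exact Finset.mem_range.mpr (ZMod.val_lt c)
            · intro i _
              exact Finset.mem_univ _
            · intro c _
              rw [ZMod.natCast_val, ZMod.cast_id]
            · intro i hi
              exact ZMod.val_natCast_of_lt (Finset.mem_range.mp hi)
            · intro c _
              congr 1
              ring
          rw [hstep, himage, hrange, geom_vanish M hM hζ ((j:ℤ)), if_neg hjMZ]
        rcases mul_eq_zero.mp hprod with hA0 | hB0
        · rw [hfact, hA0, zero_mul]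
        · rw [hfact, conj_vanish M hM B hζ j k hkcop hB0, mul_zero]
      -- assembling the evaluation
      have hterm : ∀ j ∈ Finset.range M,
          ∑ r ∈ T ×ˢ T, ζ ^ ((j:ℤ) * (s r.1 - s r.2))
            = (∑ p ∈ T, ζ ^ ((j:ℤ) * s p)) * (∑ q ∈ T, ζ ^ (-((j:ℤ) * s q))) := by
        intro j _
        rw [Finset.sum_mul_sum, Finset.sum_product]
        apply Finset.sum_congr rfl; intro p _
        apply Finset.sum_congr rfl; intro q _
        rw [← zpow_add₀ hζ0]
        congr 1
        ring
      have hrhs : ∑ j ∈ Finset.range M, ∑ r ∈ T ×ˢ T, ζ ^ ((j:ℤ) * (s r.1 - s r.2))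
          = (M:ℂ) * M := by
        rw [Finset.sum_congr rfl hterm]
        rw [Finset.sum_eq_single_of_mem 0 (Finset.mem_range.mpr hM)]
        · simp [hcardT]
        · intro j hjr hj0
          rw [hEzero j hjr hj0, zero_mul]
      have hfin : (W:ℂ) * M = (M:ℂ) * M := by rw [← hleft, hswap, hrhs]
      have hWC : (W:ℂ) = M := mul_right_cancel₀ (Nat.cast_ne_zero.mpr hM.ne') hfin
      exact_mod_cast hWC
    -- counts are at most 1
    have hle : ∀ c : ZMod M, c ∈ (Finset.univ : Finset (ZMod M)) → count c ≤ count c * count c := by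
      intro c _
      rcases Nat.eq_zero_or_pos (count c) with h0 | h0
      · simp [h0]
      · exact Nat.le_mul_of_pos_left _ h0
    have heq : ∀ c : ZMod M, count c = count c * count c := by
      have hsums : ∑ c : ZMod M, count c = ∑ c : ZMod M, count c * count c := by
        rw [hsum1, hsum2, hWM]
      intro c
      exact (Finset.sum_eq_sum_iff_of_le hle).mp hsums c (Finset.mem_univ c)
    have hle1 : ∀ c : ZMod M, count c ≤ 1 := by
      intro c
      by_contra hc
      push_neg at hc
      have h2 : 2 ≤ count c := hc
      have := heq c
      nlinarith [heq c]
    -- but the collision gives a fiber of size ≥ 2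
    set p₀ : ℤ × ℤ := (a₁, b₂) with hp₀
    set q₀ : ℤ × ℤ := (a₂, b₁) with hq₀
    have hp₀T : p₀ ∈ T := by rw [hT, Finset.mem_product]; exact ⟨ha₁, hb₂⟩
    have hq₀T : q₀ ∈ T := by rw [hT, Finset.mem_product]; exact ⟨ha₂, hb₁⟩
    have hgkeq : gk p₀ = gk q₀ := by
      have hd : (M:ℤ) ∣ s p₀ - s q₀ := by
        have : s p₀ - s q₀ = (a₁ - a₂) - (k:ℤ) * (b₁ - b₂) := by
          simp only [hs, hp₀, hq₀]
          ring
        rw [this]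
        exact hkdvd
      exact (hdvd_iff _ _).mpr hd
    have hne : p₀ ≠ q₀ := by
      intro hc
      apply hane
      have := congrArg Prod.fst hc
      simpa [hp₀, hq₀] using this
    have h2le : 2 ≤ count (gk p₀) := by
      have hsub : ({p₀, q₀} : Finset (ℤ × ℤ)) ⊆ T.filter (fun p => gk p = gk p₀) := by
        intro r hr
        rcases Finset.mem_insert.mp hr with h | h
        · subst h; exact Finset.mem_filter.mpr ⟨hp₀T, rfl⟩
        · rw [Finset.mem_singleton] at h
          subst h
          exact Finset.mem_filter.mpr ⟨hq₀T, hgkeq.symm⟩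
      have := Finset.card_le_card hsub
      rwa [Finset.card_pair hne] at this
    have := hle1 (gk p₀)
    omega
  · -- backward direction
    rintro ⟨hcard, hdisj⟩ n
    have hinj : ∀ p ∈ T, ∀ q ∈ T, f p = f q → p = q := by
      intro p hp q hq hfq
      rw [hT, Finset.mem_product] at hp hq
      have hd : (M:ℤ) ∣ (p.1 + p.2) - (q.1 + q.2) := (hdvd_iff _ _).mp hfq
      by_cases h1 : p.1 = q.1
      · have : (M:ℤ) ∣ p.2 - q.2 := by
          have : (p.1 + p.2) - (q.1 + q.2) = p.2 - q.2 := by rw [h1]; ring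
          rwa [this] at hd
        have := hB p.2 hp.2 q.2 hq.2 this
        exact Prod.ext h1 this
      · exfalso
        have h2 : p.2 ≠ q.2 := by
          intro hc
          apply h1
          apply hA p.1 hp.1 q.1 hq.1
          have : (p.1 + p.2) - (q.1 + q.2) = p.1 - q.1 := by rw [hc]; ring
          rwa [this] at hd
        have hgeq : Int.gcd (p.1 - q.1) M = Int.gcd (q.2 - p.2) M := by
          apply gcd_congr_mod
          have : (p.1 - q.1) - (q.2 - p.2) = (p.1 + p.2) - (q.1 + q.2) := by ring
          rw [this]; exact hd
        have : Int.gcd (p.1 - q.1) M ∈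
            ({m : ℕ | ∃ a ∈ A, ∃ a' ∈ A, a ≠ a' ∧ Int.gcd (a - a') M = m} ∩
              {m : ℕ | ∃ b ∈ B, ∃ b' ∈ B, b ≠ b' ∧ Int.gcd (b - b') M = m}) := by
          constructor
          · exact ⟨p.1, hp.1, q.1, hq.1, h1, rfl⟩
          · exact ⟨q.2, hq.2, p.2, hp.2, fun hc => h2 hc.symm, hgeq.symm⟩
        rw [hdisj] at this
        exact this
    have hcardT : T.card = M := by rw [hT, Finset.card_product, hcard]
    have himg : T.image f = Finset.univ := by
      apply Finset.eq_univ_of_card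
      rw [Finset.card_image_of_injOn hinj, hcardT]
      exact (ZMod.card M).symm
    obtain ⟨p, hp, hfp⟩ : ∃ p ∈ T, f p = ((n : ZMod M)) := by
      have : (n : ZMod M) ∈ T.image f := by rw [himg]; exact Finset.mem_univ _
      obtain ⟨p, hp, hfp⟩ := Finset.mem_image.mp this
      exact ⟨p, hp, hfp⟩
    rw [hT, Finset.mem_product] at hp
    refine ⟨p, ⟨hp.1, hp.2, ?_⟩, ?_⟩
    · have : ((p.1 + p.2 : ℤ) : ZMod M) = ((n:ℤ) : ZMod M) := hfp
      exact (hdvd_iff _ _).mp this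
    · rintro q ⟨hqa, hqb, hqd⟩
      apply hinj q (by rw [hT, Finset.mem_product]; exact ⟨hqa, hqb⟩) p
        (by rw [hT, Finset.mem_product]; exact ⟨hp.1, hp.2⟩)
      have h1 : ((q.1 + q.2 : ℤ) : ZMod M) = (n : ZMod M) := (hdvd_iff _ _).mpr hqd
      show ((q.1 + q.2 : ℤ) : ZMod M) = ((p.1 + p.2 : ℤ) : ZMod M)
      rw [h1]
      exact hfp.symm
end

section
/- Let A, B ⊂ ℤ be finite sets whose elements are distinct modulo M, with D_A = {gcd(a-a', M) : a,a' ∈ A, a ≠ a'} and D_B analogous. If D_A ∩ D_B = ∅, then |A|·|B| ≤ M, with equality if and only if A ⊕ B = ℤ/Mℤ. -/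
open Finset

theorem stmt_5 (M : ℕ) (hM : 0 < M) (A B : Finset ℤ)
    (hA : ∀ a ∈ A, ∀ a' ∈ A, (M : ℤ) ∣ a - a' → a = a')
    (hB : ∀ b ∈ B, ∀ b' ∈ B, (M : ℤ) ∣ b - b' → b = b')
    (hD : {m : ℕ | ∃ a ∈ A, ∃ a' ∈ A, a ≠ a' ∧ Int.gcd (a - a') M = m} ∩
            {m : ℕ | ∃ b ∈ B, ∃ b' ∈ B, b ≠ b' ∧ Int.gcd (b - b') M = m} = ∅) :
    A.card * B.card ≤ M ∧
      (A.card * B.card = M ↔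
        ∀ n : ℤ, ∃! p : ℤ × ℤ, p.1 ∈ A ∧ p.2 ∈ B ∧ (M : ℤ) ∣ p.1 + p.2 - n) := by
  haveI : NeZero M := ⟨hM.ne'⟩
  -- gcd invariance under mod M
  have hg : ∀ x y : ℤ, (M : ℤ) ∣ x - y → Int.gcd x M = Int.gcd y M := by
    intro x y hxy
    have h1 : ∀ u v : ℤ, (M : ℤ) ∣ u - v → (Int.gcd u M : ℤ) ∣ (Int.gcd v M : ℤ) := by
      intro u v huv
      apply Int.dvd_coe_gcd
      · have h1' : (Int.gcd u M : ℤ) ∣ u := Int.gcd_dvd_left _ _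
        have h2 := (Int.gcd_dvd_right _ _ : (Int.gcd u M : ℤ) ∣ (M : ℤ)).trans huv
        have : (Int.gcd u M : ℤ) ∣ u - (u - v) := dvd_sub h1' h2
        simpa using this
      · exact Int.gcd_dvd_right _ _
    exact Nat.dvd_antisymm (Int.ofNat_dvd.mp (h1 x y hxy))
      (Int.ofNat_dvd.mp (h1 y x (by simpa using dvd_neg.mpr hxy)))
  -- key injectivity
  have key : ∀ a ∈ A, ∀ b ∈ B, ∀ a' ∈ A, ∀ b' ∈ B,
      (M : ℤ) ∣ (a + b) - (a' + b') → a = a' ∧ b = b' := by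
    intro a ha b hb a' ha' b' hb' hdvd
    by_cases hab : a = a'
    · subst hab
      have : (M : ℤ) ∣ b - b' := by simpa using hdvd
      exact ⟨rfl, hB b hb b' hb' this⟩
    · exfalso
      have hbb : b ≠ b' := by
        intro h; subst h
        exact hab (hA a ha a' ha' (by simpa using hdvd))
      have hgeq : Int.gcd (a - a') M = Int.gcd (b' - b) M := by
        apply hg
        have : (a - a') - (b' - b) = (a + b) - (a' + b') := by ring
        rw [this]; exact hdvd
      have : Int.gcd (a - a') M ∈ ({m : ℕ | ∃ a ∈ A, ∃ a' ∈ A, a ≠ a' ∧ Int.gcd (a - a') M = m} ∩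
            {m : ℕ | ∃ b ∈ B, ∃ b' ∈ B, b ≠ b' ∧ Int.gcd (b - b') M = m}) :=
        ⟨⟨a, ha, a', ha', hab, rfl⟩, ⟨b', hb', b, hb, hbb.symm, hgeq.symm⟩⟩
      rw [hD] at this
      exact this
  -- the map to ZMod M
  set F : ℤ × ℤ → ZMod M := fun p => (p.1 + p.2 : ℤ) with hF
  have hcast : ∀ x y : ℤ, ((x : ZMod M) = (y : ZMod M)) ↔ (M : ℤ) ∣ x - y := by
    intro x y
    rw [ZMod.intCast_eq_intCast_iff, Int.modEq_iff_dvd, dvd_sub_comm]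
  have hinj : Set.InjOn F (A ×ˢ B : Finset (ℤ × ℤ)) := by
    intro p hp q hq hpq
    simp only [Finset.coe_mem, Finset.mem_coe, Finset.mem_product] at hp hq
    have := key p.1 hp.1 p.2 hp.2 q.1 hq.1 q.2 hq.2 ((hcast _ _).mp (by simpa [hF] using hpq))
    exact Prod.ext this.1 this.2
  have hcardle : A.card * B.card ≤ M := by
    have := Finset.card_le_card_of_injOn F (fun p _ => Finset.mem_univ (F p)) hinj
    simpa [Finset.card_product, ZMod.card] using this
  refine ⟨hcardle, ?_, ?_⟩
  · -- equality → unique representation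
    intro hcard n
    have himage : (A ×ˢ B).image F = Finset.univ := by
      apply Finset.eq_univ_of_card
      rw [Finset.card_image_of_injOn hinj, Finset.card_product, hcard, ZMod.card]
    obtain ⟨p, hp, hpn⟩ := Finset.mem_image.mp (himage ▸ Finset.mem_univ ((n : ZMod M)))
    rw [Finset.mem_product] at hp
    refine ⟨p, ⟨hp.1, hp.2, (hcast _ _).mp hpn⟩, ?_⟩
    rintro q ⟨hq1, hq2, hqn⟩
    apply hinj (by simp [Finset.mem_product, hq1, hq2]) (by simp [Finset.mem_product, hp])
    show ((q.1 + q.2 : ℤ) : ZMod M) = ((p.1 + p.2 : ℤ) : ZMod M)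
    rw [hcast]
    have h1 := (hcast _ _).mp hpn
    have h2 := dvd_sub hqn h1
    have h3 : q.1 + q.2 - n - (p.1 + p.2 - n) = q.1 + q.2 - (p.1 + p.2) := by ring
    rwa [h3] at h2
  · -- unique representation → equality
    intro hrep
    have hsurj : ∀ c : ZMod M, ∃ p ∈ A ×ˢ B, F p = c := by
      intro c
      obtain ⟨p, ⟨hp1, hp2, hpd⟩, _⟩ := hrep c.val
      refine ⟨p, Finset.mem_product.mpr ⟨hp1, hp2⟩, ?_⟩
      show ((p.1 + p.2 : ℤ) : ZMod M) = c
      rw [show c = ((c.val : ℤ) : ZMod M) by simp [ZMod.intCast_cast], hcast]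
      exact hpd
    have himage : (A ×ˢ B).image F = Finset.univ :=
      Finset.eq_univ_of_forall (fun c => Finset.mem_image.mpr
        (by obtain ⟨p, hp, hpc⟩ := hsurj c; exact ⟨p, hp, hpc⟩))
    have := congrArg Finset.card himage
    rw [Finset.card_image_of_injOn hinj, Finset.card_product, Finset.card_univ, ZMod.card] at this
    exact this
end

section
/- Suppose A ⊕ B = ℤ/Mℤ and N | M. For each divisor m of N let A_m = #{(a,a') ∈ A×A : gcd(a-a', N) = m}, and for c ∈ ℤ∖B let b_m(c) = #{b ∈ B : gcd(b-c, N) = m}. Then the quantity ∑_{m|N} b_m(c) A_m / φ(N/m) does not depend on the choice of c ∈ ℤ∖B. -/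
open Finset

-- geometric sum
lemma aux_geom {x : ℂ} {K : ℕ} (h1 : x ≠ 1) (hx : x ^ K = 1) :
    ∑ i ∈ range K, x ^ i = 0 := by
  rw [geom_sum_eq h1, hx, sub_self, zero_div]

-- orthogonality
lemma aux_orth {N : ℕ} (hN : 0 < N) {ζ : ℂ} (hζ : IsPrimitiveRoot ζ N) (w : ℤ) :
    ∑ k ∈ range N, ζ ^ ((k : ℤ) * w) = if (N : ℤ) ∣ w then (N : ℂ) else 0 := by
  have hζ0 : ζ ≠ 0 := hζ.ne_zero hN.ne'
  have hrw : ∀ k : ℕ, ζ ^ ((k : ℤ) * w) = (ζ ^ w) ^ k := by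
    intro k
    rw [mul_comm, zpow_mul, zpow_natCast]
  simp only [hrw]
  by_cases h : (N : ℤ) ∣ w
  · rw [if_pos h]
    have : ζ ^ w = 1 := (hζ.zpow_eq_one_iff_dvd w).mpr h
    simp [this]
  · rw [if_neg h]
    have h1 : ζ ^ w ≠ 1 := fun hh => h ((hζ.zpow_eq_one_iff_dvd w).mp hh)
    have hpow : (ζ ^ w) ^ N = 1 := by
      rw [← zpow_natCast (ζ ^ w), ← zpow_mul, mul_comm, zpow_mul, show ζ ^ ((N:ℤ)) = 1 from (hζ.zpow_eq_one_iff_dvd (N:ℤ)).mpr dvd_rfl, one_zpow]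
    exact aux_geom h1 hpow

-- evaluation of the mod-d exponent polynomial
lemma aux_poly_eval {d : ℕ} (hd : 0 < d) {τ : ℂ} (hτ1 : τ ^ d = 1) (hτ0 : τ ≠ 0) (A : Finset ℤ) :
    Polynomial.aeval τ (∑ a ∈ A, (Polynomial.X : Polynomial ℤ) ^ (a % (d : ℤ)).toNat)
      = ∑ a ∈ A, τ ^ a := by
  rw [map_sum]
  refine Finset.sum_congr rfl fun a _ => ?_
  rw [Polynomial.aeval_X_pow]
  have hnn : 0 ≤ a % (d : ℤ) := Int.emod_nonneg a (by exact_mod_cast hd.ne')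
  have h1 : ((a % (d:ℤ)).toNat : ℤ) = a % (d:ℤ) := Int.toNat_of_nonneg hnn
  rw [← zpow_natCast, h1]
  conv_rhs => rw [← Int.emod_add_mul_ediv a (d:ℤ)]
  rw [zpow_add₀ hτ0, zpow_mul]
  norm_num
  rw [hτ1, one_zpow, mul_one]

-- class-uniform vanishing via cyclotomic polynomials
lemma aux_classUnif {d : ℕ} (hd : 0 < d) {μ ν : ℂ} (hμ : IsPrimitiveRoot μ d)
    (hν : IsPrimitiveRoot ν d) (A : Finset ℤ) (h : ∑ a ∈ A, μ ^ a = 0) :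
    ∑ a ∈ A, ν ^ a = 0 := by
  set P : Polynomial ℤ := ∑ a ∈ A, (Polynomial.X : Polynomial ℤ) ^ (a % (d : ℤ)).toNat with hP
  set p : Polynomial ℚ := P.map (Int.castRingHom ℚ) with hp
  have hμ0 : μ ≠ 0 := hμ.ne_zero hd.ne'
  have hν0 : ν ≠ 0 := hν.ne_zero hd.ne'
  have haevalμ : Polynomial.aeval μ p = 0 := by
    rw [hp, show (Int.castRingHom ℚ) = algebraMap ℤ ℚ from rfl, Polynomial.aeval_map_algebraMap,
      aux_poly_eval hd (hμ.pow_eq_one) hμ0 A, h]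
  have hdvd : Polynomial.cyclotomic d ℚ ∣ p := by
    rw [Polynomial.cyclotomic_eq_minpoly_rat hμ hd]
    exact minpoly.dvd ℚ μ haevalμ
  obtain ⟨q, hq⟩ := hdvd
  have : Polynomial.aeval ν p = 0 := by
    rw [hq, map_mul]
    have : Polynomial.aeval ν (Polynomial.cyclotomic d ℚ) = 0 := by
      have := hν.isRoot_cyclotomic hd
      rw [Polynomial.IsRoot.def] at this
      rw [Polynomial.aeval_def, ← Polynomial.eval_map, Polynomial.map_cyclotomic]
      exact this
    rw [this, zero_mul]
  rw [hp, show (Int.castRingHom ℚ) = algebraMap ℤ ℚ from rfl, Polynomial.aeval_map_algebraMap,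
    aux_poly_eval hd (hν.pow_eq_one) hν0 A] at this
  exact this

-- order of powers of a primitive root
lemma aux_pow_prim {N : ℕ} (hN : 0 < N) {ζ : ℂ} (hζ : IsPrimitiveRoot ζ N) {j : ℕ}
    (hj : j ≠ 0) : IsPrimitiveRoot (ζ ^ j) (N / Nat.gcd N j) := by
  have ho : orderOf ζ = N := hζ.eq_orderOf.symm
  have := orderOf_pow' ζ hj
  rw [ho] at this
  have h2 : IsPrimitiveRoot (ζ ^ j) (orderOf (ζ ^ j)) := IsPrimitiveRoot.orderOf _
  rwa [this] at h2

-- tiling Fourier condition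
lemma aux_tiling {M N : ℕ} (hM : 0 < M) (hNM : N ∣ M) {ζ : ℂ} (hζ : IsPrimitiveRoot ζ N)
    (A B : Finset ℤ)
    (htile : ∀ n : ℤ, ∃! p : ℤ × ℤ, p.1 ∈ A ∧ p.2 ∈ B ∧ (M : ℤ) ∣ p.1 + p.2 - n)
    (k : ℤ) (hk : ζ ^ k ≠ 1) :
    (∑ a ∈ A, ζ ^ (k * a)) * (∑ b ∈ B, ζ ^ (k * b)) = 0 := by
  have hN : 0 < N := Nat.pos_of_dvd_of_pos hNM hM
  have hζ0 : ζ ≠ 0 := hζ.ne_zero hN.ne'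
  have hζM : ζ ^ (M : ℤ) = 1 := (hζ.zpow_eq_one_iff_dvd _).mpr (by exact_mod_cast hNM)
  rw [Finset.sum_mul_sum]
  have key : ∑ a ∈ A, ∑ b ∈ B, ζ ^ (k * a) * ζ ^ (k * b)
      = ∑ n ∈ range M, ζ ^ (k * (n : ℤ)) := by
    rw [← Finset.sum_product']
    refine Finset.sum_bij (fun p _ => ((p.1 + p.2) % (M : ℤ)).toNat) ?_ ?_ ?_ ?_
    · rintro ⟨a, b⟩ hab
      simp only [Finset.mem_product] at hab
      simp only [Finset.mem_range]
      have h0 : (0:ℤ) < (M:ℤ) := by exact_mod_cast hM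
      have := Int.emod_lt_of_pos (a + b) h0
      omega
    · rintro ⟨a, b⟩ hab ⟨a', b'⟩ hab' hh
      simp only [Finset.mem_product] at hab hab'
      dsimp only at hh
      have h0 : (0:ℤ) < (M:ℤ) := by exact_mod_cast hM
      have e1 : (a + b) % (M:ℤ) = (a' + b') % (M:ℤ) := by
        have n1 := Int.emod_nonneg (a+b) h0.ne'
        have n2 := Int.emod_nonneg (a'+b') h0.ne'
        omega
      have hd : (M:ℤ) ∣ (a' + b') - (a + b) := Int.ModEq.dvd e1
      have hu := htile (a + b)
      obtain ⟨p₀, hp₀, hup⟩ := hu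
      have e2 : (a, b) = p₀ := hup (a,b) ⟨hab.1, hab.2, by simp⟩
      have e3 : (a', b') = p₀ := hup (a',b') ⟨hab'.1, hab'.2, by simpa using hd⟩
      rw [e2, e3]
    · intro n hn
      simp only [Finset.mem_range] at hn
      obtain ⟨p, ⟨hpA, hpB, hpd⟩, -⟩ := htile (n : ℤ)
      refine ⟨p, ?_, ?_⟩
      · simp [Finset.mem_product, hpA, hpB]
      · obtain ⟨t, ht⟩ := hpd
        have : p.1 + p.2 = (n:ℤ) + (M:ℤ) * t := by linarith
        rw [this]
        rw [Int.add_mul_emod_self_left, Int.emod_eq_of_lt (by positivity) (by exact_mod_cast hn)]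
        simp
    · rintro ⟨a, b⟩ hab
      dsimp only
      have h0 : (0:ℤ) < (M:ℤ) := by exact_mod_cast hM
      have hnn : 0 ≤ (a + b) % (M:ℤ) := Int.emod_nonneg _ h0.ne'
      rw [← zpow_add₀ hζ0, ← mul_add]
      have : (( ((a + b) % (M:ℤ)).toNat : ℤ)) = (a+b) % (M:ℤ) := Int.toNat_of_nonneg hnn
      rw [this]
      have hdvd : (M:ℤ) ∣ (a + b) - (a+b) % (M:ℤ) := Int.dvd_self_sub_of_emod_eq rfl
      obtain ⟨t, ht⟩ := hdvd
      have : (a + b) % (M:ℤ) = (a+b) - (M:ℤ)*t := by linarith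
      rw [this, mul_sub, zpow_sub₀ hζ0]
      have h1 : ζ ^ (k * ((M:ℤ)*t)) = 1 := by
        rw [show k * ((M:ℤ)*t) = (M:ℤ) * (t*k) by ring, zpow_mul,
          show ζ ^ ((M:ℤ)) = 1 from hζM, one_zpow]
      rw [h1, div_one]
  rw [key]
  have hrw : ∀ n : ℕ, ζ ^ (k * (n:ℤ)) = (ζ ^ k) ^ n := fun n => by
    rw [zpow_mul, zpow_natCast]
  simp only [hrw]
  exact aux_geom hk (by rw [← zpow_natCast (ζ^k), ← zpow_mul, mul_comm, zpow_mul,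
    show ζ ^ ((M:ℤ)) = 1 from hζM, one_zpow])
open Finset


lemma aux_gcd_shift (y b t : ℤ) : Int.gcd (y + b * t) b = Int.gcd y b := by
  apply Nat.dvd_antisymm
  · apply Int.natCast_dvd_natCast.mp
    apply Int.dvd_coe_gcd
    · have h1 : ((Int.gcd (y + b * t) b : ℕ) : ℤ) ∣ (y + b * t) := Int.gcd_dvd_left _ _
      have h2 : ((Int.gcd (y + b * t) b : ℕ) : ℤ) ∣ b * t := (Int.gcd_dvd_right _ _).mul_right t
      simpa using dvd_sub h1 h2
    · exact Int.gcd_dvd_right _ _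
  · apply Int.natCast_dvd_natCast.mp
    apply Int.dvd_coe_gcd
    · exact dvd_add (Int.gcd_dvd_left _ _) ((Int.gcd_dvd_right _ _).mul_right t)
    · exact Int.gcd_dvd_right _ _

-- fiber of a surjective hom between finite groups
lemma aux_fiber {G H : Type*} [Group G] [Group H] [Fintype G] [Fintype H] [DecidableEq H]
    (f : G →* H) (hf : Function.Surjective f) (ρ : H) :
    (univ.filter fun v => f v = ρ).card * Fintype.card H = Fintype.card G := by
  classical
  obtain ⟨v₀, hv₀⟩ := hf ρ
  have e : {v // f v = ρ} ≃ (MonoidHom.ker f) :=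
    { toFun := fun v => ⟨v.1 * v₀⁻¹, by
        rw [MonoidHom.mem_ker, map_mul, v.2, map_inv, hv₀, mul_inv_cancel]⟩
      invFun := fun w => ⟨w.1 * v₀, by rw [map_mul, MonoidHom.mem_ker.mp w.2, one_mul, hv₀]⟩
      left_inv := fun v => by simp
      right_inv := fun w => by simp }
  have h1 : (univ.filter fun v => f v = ρ).card = Nat.card (MonoidHom.ker f) := by
    rw [← Fintype.card_subtype, ← Nat.card_eq_fintype_card, Nat.card_congr e]
  have h2 : Nat.card G = Nat.card H * Nat.card (MonoidHom.ker f) := by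
    have hq : Nat.card (G ⧸ MonoidHom.ker f) = Nat.card H :=
      Nat.card_congr (QuotientGroup.quotientKerEquivOfSurjective f hf).toEquiv
    rw [Subgroup.card_eq_card_quotient_mul_card_subgroup (MonoidHom.ker f), hq]
  rw [h1, ← Nat.card_eq_fintype_card, ← Nat.card_eq_fintype_card, h2]
  ring

-- counting units in a congruence class
lemma aux_L {N n : ℕ} (hn : n ∣ N) (hN : 0 < N) (r : ℤ) (hr : IsCoprime r (n : ℤ)) :
    ((range N).filter fun u => Nat.Coprime u N ∧ (n : ℤ) ∣ (u : ℤ) - r).card * Nat.totient n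
      = Nat.totient N := by
  haveI : NeZero N := ⟨hN.ne'⟩
  have hn0 : 0 < n := Nat.pos_of_dvd_of_pos hn hN
  haveI : NeZero n := ⟨hn0.ne'⟩
  -- the unit ρ in ZMod n corresponding to r
  have hru : IsUnit ((r : ZMod n)) := by
    obtain ⟨a, b, hab⟩ := hr
    refine IsUnit.of_mul_eq_one ((a : ZMod n)) ?_
    have : (((a * r + b * n : ℤ)) : ZMod n) = ((1 : ℤ) : ZMod n) := by rw [hab]
    push_cast at this
    simpa [mul_comm] using this
  set ρ : (ZMod n)ˣ := hru.unit with hρ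
  have hρval : (ρ : ZMod n) = (r : ZMod n) := rfl
  set f := ZMod.unitsMap hn with hf
  have hfs : Function.Surjective f := ZMod.unitsMap_surjective hn
  -- identify the count with a fiber of f
  have hcard : ((range N).filter fun u => Nat.Coprime u N ∧ (n : ℤ) ∣ (u : ℤ) - r).card
      = (univ.filter fun v : (ZMod N)ˣ => f v = ρ).card := by
    refine Finset.card_bij (fun u hu => ZMod.unitOfCoprime u (by
      simp only [Finset.mem_filter] at hu; exact hu.2.1)) ?_ ?_ ?_
    · intro u hu
      simp only [Finset.mem_filter, Finset.mem_range] at hu ⊢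
      refine ⟨Finset.mem_univ _, ?_⟩
      apply Units.ext
      rw [hf, ZMod.unitsMap_def]
      simp only [Units.coe_map]
      have : ((ZMod.castHom hn (ZMod n)) ((ZMod.unitOfCoprime u hu.2.1 : (ZMod N)ˣ) : ZMod N))
          = ((u : ℕ) : ZMod n) := by
        rw [ZMod.coe_unitOfCoprime]
        simp [map_natCast]
      rw [MonoidHom.coe_coe, this, hρval]
      have : ((u : ℤ) : ZMod n) = ((r : ℤ) : ZMod n) := by
        rw [ZMod.intCast_eq_intCast_iff]
        exact Int.ModEq.symm (Int.modEq_iff_dvd.mpr (by simpa using hu.2.2))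
      push_cast at this
      exact this
    · intro u hu u' hu' hh
      simp only [Finset.mem_filter, Finset.mem_range] at hu hu'
      have : ((u : ℕ) : ZMod N) = ((u' : ℕ) : ZMod N) := by
        have := congrArg (fun v : (ZMod N)ˣ => (v : ZMod N)) hh
        simpa [ZMod.coe_unitOfCoprime] using this
      have := congrArg ZMod.val this
      rwa [ZMod.val_cast_of_lt hu.1, ZMod.val_cast_of_lt hu'.1] at this
    · intro v hv
      simp only [Finset.mem_filter, Finset.mem_univ, true_and] at hv
      refine ⟨(v : ZMod N).val, ?_, ?_⟩
      · simp only [Finset.mem_filter, Finset.mem_range]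
        refine ⟨ZMod.val_lt _, ZMod.val_coe_unit_coprime v, ?_⟩
        -- (n:ℤ) ∣ val v - r
        have h1 : (((v : ZMod N).val : ℤ) : ZMod n) = (r : ZMod n) := by
          have h2 : ((ZMod.castHom hn (ZMod n)) ((v : ZMod N))) = (r : ZMod n) := by
            have := congrArg (fun w : (ZMod n)ˣ => (w : ZMod n)) hv
            simpa [hf, ZMod.unitsMap_def, hρval] using this
          rw [← h2]
          push_cast
          try rw [ZMod.natCast_val, ZMod.castHom_apply]
        rw [ZMod.intCast_eq_intCast_iff] at h1
        exact (Int.modEq_iff_dvd.mp h1.symm)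
      · apply Units.ext
        simp [ZMod.coe_unitOfCoprime, ZMod.natCast_val, ZMod.cast_id]
  rw [hcard]
  have := aux_fiber f hfs ρ
  rwa [ZMod.card_units_eq_totient, ZMod.card_units_eq_totient] at this

lemma aux_unit_count0 {N : ℕ} (hN : 0 < N) {x y : ℤ} (h : Int.gcd x N ≠ Int.gcd y N) :
    ((range N).filter fun u => Nat.Coprime u N ∧ (N:ℤ) ∣ (u:ℤ) * x - y).card = 0 := by
  rw [Finset.card_eq_zero, Finset.filter_eq_empty_iff]
  rintro u -
  rintro ⟨hcop, hdvd⟩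
  apply h
  have h1 : Int.gcd ((u:ℤ) * x) N = Int.gcd x N := by
    unfold Int.gcd
    rw [Int.natAbs_mul, Int.natAbs_natCast]
    exact Nat.Coprime.gcd_mul_left_cancel _ (by simpa [Nat.Coprime, Int.natAbs_natCast] using hcop)
  have h2 : Int.gcd ((u:ℤ) * x) N = Int.gcd y N := by
    obtain ⟨t, ht⟩ := hdvd
    have : (u:ℤ) * x = y + (N:ℤ) * t := by linarith
    rw [this]
    exact aux_gcd_shift y (N:ℤ) t
  rw [← h1, h2]

lemma aux_unit_count {N : ℕ} (hN : 0 < N) {x y : ℤ} (h : Int.gcd x N = Int.gcd y N) :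
    ((range N).filter fun u => Nat.Coprime u N ∧ (N:ℤ) ∣ (u:ℤ) * x - y).card
      * Nat.totient (N / Int.gcd x N) = Nat.totient N := by
  set m : ℕ := Int.gcd x N with hm
  have hNz : ((N:ℤ)) ≠ 0 := by exact_mod_cast hN.ne'
  have hm0 : 0 < m := Int.gcd_pos_iff.mpr (Or.inr hNz)
  have hmz : ((m:ℤ)) ≠ 0 := by exact_mod_cast hm0.ne'
  have hmN : m ∣ N := by
    have : ((m:ℤ)) ∣ (N:ℤ) := Int.gcd_dvd_right _ _
    exact_mod_cast this
  set n : ℕ := N / m with hn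
  have hNmn' : N = m * n := (Nat.mul_div_cancel' hmN).symm
  have hNmn : (N:ℤ) = (m:ℤ) * (n:ℤ) := by exact_mod_cast congrArg (Nat.cast : ℕ → ℤ) hNmn'
  have hnZ : ((n:ℤ)) = (N:ℤ) / (m:ℤ) := by
    rw [hNmn]; rw [Int.mul_ediv_cancel_left _ hmz]
  -- decompositions
  have hmx : ((m:ℤ)) ∣ x := Int.gcd_dvd_left _ _
  have hmy : ((m:ℤ)) ∣ y := h ▸ Int.gcd_dvd_left y _
  set x₁ : ℤ := x / (m:ℤ) with hx₁
  set y₁ : ℤ := y / (m:ℤ) with hy₁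
  have hx : x = (m:ℤ) * x₁ := (Int.mul_ediv_cancel' hmx).symm
  have hy : y = (m:ℤ) * y₁ := (Int.mul_ediv_cancel' hmy).symm
  have hx₁n : Int.gcd x₁ (n:ℤ) = 1 := by
    rw [hx₁, hnZ, hm]
    exact Int.gcd_div_gcd_div_gcd (i := x) (j := (N:ℤ)) hm0
  have hy₁n : Int.gcd y₁ (n:ℤ) = 1 := by
    rw [hy₁, hnZ, h]
    exact Int.gcd_div_gcd_div_gcd (i := y) (j := (N:ℤ)) (h ▸ hm0)
  obtain ⟨a, b, hab⟩ := Int.isCoprime_iff_gcd_eq_one.mpr hx₁n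
  set r : ℤ := y₁ * a with hr
  have hcopr : IsCoprime r ((n:ℤ)) := by
    refine IsCoprime.mul_left (Int.isCoprime_iff_gcd_eq_one.mpr hy₁n) ⟨x₁, b, by linarith⟩
  have hiff : ∀ u : ℕ, ((N:ℤ) ∣ (u:ℤ) * x - y) ↔ ((n:ℤ) ∣ (u:ℤ) - r) := by
    intro u
    have e0 : (u:ℤ) * x - y = (m:ℤ) * ((u:ℤ) * x₁ - y₁) := by rw [hx, hy]; ring
    rw [e0, hNmn, mul_dvd_mul_iff_left hmz]
    constructor
    · rintro ⟨t, ht⟩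
      refine ⟨t * a + (u:ℤ) * b, ?_⟩
      have : (u:ℤ) - r = ((u:ℤ) * x₁ - y₁) * a + (u:ℤ) * (b * (n:ℤ)) := by
        have hb : b * (n:ℤ) = 1 - a * x₁ := by linarith
        rw [hr, hb]; ring
      rw [this, ht]; ring
    · rintro ⟨t, ht⟩
      refine ⟨t * x₁ - y₁ * b, ?_⟩
      have : (u:ℤ) * x₁ - y₁ = ((u:ℤ) - r) * x₁ + y₁ * (a * x₁ - 1) := by rw [hr]; ring
      rw [this, ht]
      have hax : a * x₁ - 1 = -(b * (n:ℤ)) := by linarith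
      rw [hax]; ring
  have : ((range N).filter fun u => Nat.Coprime u N ∧ (N:ℤ) ∣ (u:ℤ) * x - y)
      = ((range N).filter fun u => Nat.Coprime u N ∧ (n:ℤ) ∣ (u:ℤ) - r) := by
    apply Finset.filter_congr
    intro u _
    rw [hiff u]
  rw [this]
  exact aux_L ⟨m, by rw [hNmn']; ring⟩ hN r hcopr

lemma aux_vanish {M N : ℕ} (hM : 0 < M) (hNM : N ∣ M) {ζ : ℂ}
    (hζ : IsPrimitiveRoot ζ N) (A B : Finset ℤ)
    (htile : ∀ n : ℤ, ∃! p : ℤ × ℤ, p.1 ∈ A ∧ p.2 ∈ B ∧ (M : ℤ) ∣ p.1 + p.2 - n)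
    {k u : ℕ} (hk0 : k ≠ 0) (hkN : k < N) (hu : Nat.Coprime u N) :
    (∑ a ∈ A, ζ ^ (((k * u : ℕ) : ℤ) * a)) * (∑ a' ∈ A, ζ ^ (-(((k * u : ℕ) : ℤ)) * a'))
      * (∑ b ∈ B, ζ ^ (-(k : ℤ) * b)) = 0 := by
  have hN : 0 < N := Nat.pos_of_dvd_of_pos hNM hM
  have hζ0 : ζ ≠ 0 := hζ.ne_zero hN.ne'
  have hu0 : u ≠ 0 := by
    rintro rfl
    rw [Nat.coprime_zero_left] at hu
    omega
  have hgcdN : 0 < Nat.gcd N k := Nat.gcd_pos_of_pos_left k hN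
  set d : ℕ := N / Nat.gcd N k with hd
  have hd0 : 0 < d := Nat.div_pos (Nat.le_of_dvd hN (Nat.gcd_dvd_left N k)) hgcdN
  have hprimk : IsPrimitiveRoot (ζ ^ k) d := aux_pow_prim hN hζ hk0
  have hgcdku : Nat.gcd N (k * u) = Nat.gcd N k := by
    rw [Nat.gcd_comm N (k * u), mul_comm k u,
      Nat.Coprime.gcd_mul_left_cancel k hu, Nat.gcd_comm]
  have hprimku : IsPrimitiveRoot (ζ ^ (k * u)) d := by
    have := aux_pow_prim hN hζ (Nat.mul_ne_zero hk0 hu0)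
    rwa [hgcdku] at this
  have hpow1 : ∀ (j : ℕ) (a : ℤ), ζ ^ ((j : ℤ) * a) = (ζ ^ j) ^ a := fun j a => by
    rw [zpow_mul, zpow_natCast]
  have hpow2 : ∀ (j : ℕ) (a : ℤ), ζ ^ (-(j : ℤ) * a) = ((ζ ^ j)⁻¹) ^ a := fun j a => by
    rw [show -(j : ℤ) * a = (j : ℤ) * (-a) by ring, hpow1 j (-a), zpow_neg, ← inv_zpow]
  by_cases hA : (∑ a ∈ A, (ζ ^ (k * u)) ^ a) = 0
  · have : (∑ a ∈ A, ζ ^ (((k * u : ℕ) : ℤ) * a)) = 0 := by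
      rw [show (∑ a ∈ A, ζ ^ (((k * u : ℕ) : ℤ) * a)) = ∑ a ∈ A, (ζ ^ (k * u)) ^ a from
        Finset.sum_congr rfl fun a _ => hpow1 (k * u) a, hA]
    rw [this, zero_mul, zero_mul]
  · -- third factor vanishes
    have hinvprim : IsPrimitiveRoot ((ζ ^ k)⁻¹) d := hprimk.inv
    have hAinv : (∑ a ∈ A, ((ζ ^ k)⁻¹) ^ a) ≠ 0 := fun h0 =>
      hA (aux_classUnif hd0 hinvprim hprimku A h0)
    have hknd : ζ ^ (-(k : ℤ)) ≠ 1 := by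
      intro h1
      rw [hζ.zpow_eq_one_iff_dvd, Int.dvd_neg] at h1
      revert h1
      intro hdvd
      have : (N : ℤ) ≤ (k : ℤ) := Int.le_of_dvd (by exact_mod_cast hk0.bot_lt) hdvd
      omega
    have htl := aux_tiling hM hNM hζ A B htile (-(k : ℤ)) hknd
    have hfirst : (∑ a ∈ A, ζ ^ (-(k : ℤ) * a)) ≠ 0 := by
      rw [show (∑ a ∈ A, ζ ^ (-(k : ℤ) * a)) = ∑ a ∈ A, ((ζ ^ k)⁻¹) ^ a from
        Finset.sum_congr rfl fun a _ => hpow2 k a]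
      exact hAinv
    have hB0 : (∑ b ∈ B, ζ ^ (-(k : ℤ) * b)) = 0 := by
      rcases mul_eq_zero.mp htl with h | h
      · exact absurd h hfirst
      · exact h
    rw [hB0, mul_zero]

lemma sum3_factor (s t w : Finset ℤ) (f g h : ℤ → ℂ) (e : ℂ) :
    ∑ b ∈ w, ∑ a ∈ s, ∑ a' ∈ t, f a * (g a' * (h b * e))
      = (∑ a ∈ s, f a) * (∑ a' ∈ t, g a') * (∑ b ∈ w, h b) * e := by
  have step0 : ∀ b a, ∑ a' ∈ t, f a * (g a' * (h b * e))
      = f a * ((∑ a' ∈ t, g a') * (h b * e)) := by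
    intro b a
    calc ∑ a' ∈ t, f a * (g a' * (h b * e))
        = f a * ∑ a' ∈ t, g a' * (h b * e) := (Finset.mul_sum _ _ _).symm
      _ = f a * ((∑ a' ∈ t, g a') * (h b * e)) := by rw [Finset.sum_mul]
  have step1 : ∀ b, ∑ a ∈ s, ∑ a' ∈ t, f a * (g a' * (h b * e))
      = (∑ a ∈ s, f a) * ((∑ a' ∈ t, g a') * (h b * e)) := by
    intro b
    calc ∑ a ∈ s, ∑ a' ∈ t, f a * (g a' * (h b * e))
        = ∑ a ∈ s, f a * ((∑ a' ∈ t, g a') * (h b * e)) :=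
          Finset.sum_congr rfl fun a _ => step0 b a
      _ = (∑ a ∈ s, f a) * ((∑ a' ∈ t, g a') * (h b * e)) := (Finset.sum_mul _ _ _).symm
  calc ∑ b ∈ w, ∑ a ∈ s, ∑ a' ∈ t, f a * (g a' * (h b * e))
      = ∑ b ∈ w, (∑ a ∈ s, f a) * ((∑ a' ∈ t, g a') * (h b * e)) :=
        Finset.sum_congr rfl fun b _ => step1 b
    _ = ∑ b ∈ w, ((∑ a ∈ s, f a) * (∑ a' ∈ t, g a') * e) * h b :=
        Finset.sum_congr rfl fun b _ => by ring
    _ = ((∑ a ∈ s, f a) * (∑ a' ∈ t, g a') * e) * ∑ b ∈ w, h b :=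
        (Finset.mul_sum _ _ _).symm
    _ = (∑ a ∈ s, f a) * (∑ a' ∈ t, g a') * (∑ b ∈ w, h b) * e := by ring

lemma aux_stepB {M N : ℕ} (hM : 0 < M) (hN : 0 < N) (hNM : N ∣ M) (A B : Finset ℤ)
    (htile : ∀ n : ℤ, ∃! p : ℤ × ℤ, p.1 ∈ A ∧ p.2 ∈ B ∧ (M : ℤ) ∣ p.1 + p.2 - n)
    (c c' : ℤ) :
    (∑ q ∈ B ×ˢ A ×ˢ A, ((range N).filter (fun u : ℕ => Nat.Coprime u N ∧
        (N : ℤ) ∣ (u : ℤ) * (q.2.1 - q.2.2) - (q.1 - c))).card)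
    = (∑ q ∈ B ×ˢ A ×ˢ A, ((range N).filter (fun u : ℕ => Nat.Coprime u N ∧
        (N : ℤ) ∣ (u : ℤ) * (q.2.1 - q.2.2) - (q.1 - c'))).card) := by
  classical
  obtain ⟨ζ, hζ⟩ : ∃ ζ : ℂ, IsPrimitiveRoot ζ N :=
    ⟨Complex.exp (2 * Real.pi * Complex.I / N), Complex.isPrimitiveRoot_exp N hN.ne'⟩
  have hζ0 : ζ ≠ 0 := hζ.ne_zero hN.ne'
  set Ucop : Finset ℕ := (range N).filter (fun u : ℕ => Nat.Coprime u N) with hU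
  have key : ∀ c₀ : ℤ,
      (N : ℂ) * (∑ q ∈ B ×ˢ A ×ˢ A, (((range N).filter (fun u : ℕ => Nat.Coprime u N ∧
        (N : ℤ) ∣ (u : ℤ) * (q.2.1 - q.2.2) - (q.1 - c₀))).card : ℂ))
      = (Ucop.card : ℂ) * (B ×ˢ A ×ˢ A).card := by
    intro c₀
    have hvanish : ∀ k ∈ range N, k ≠ 0 →
        (∑ u ∈ Ucop, ∑ q ∈ B ×ˢ A ×ˢ A,
          ζ ^ ((k : ℤ) * ((u : ℤ) * (q.2.1 - q.2.2) - (q.1 - c₀)))) = 0 := by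
      intro k hk hk0
      rw [Finset.mem_range] at hk
      refine Finset.sum_eq_zero fun u hu => ?_
      rw [hU, Finset.mem_filter] at hu
      have expand : ∀ b a a' : ℤ,
          ζ ^ ((k : ℤ) * ((u : ℤ) * (a - a') - (b - c₀)))
          = ζ ^ (((k * u : ℕ) : ℤ) * a) * (ζ ^ (-(((k * u : ℕ) : ℤ)) * a')
              * (ζ ^ (-(k : ℤ) * b) * ζ ^ ((k : ℤ) * c₀))) := by
        intro b a a'
        rw [← zpow_add₀ hζ0, ← zpow_add₀ hζ0, ← zpow_add₀ hζ0]
        congr 1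
        push_cast
        ring
      calc ∑ q ∈ B ×ˢ A ×ˢ A,
            ζ ^ ((k : ℤ) * ((u : ℤ) * (q.2.1 - q.2.2) - (q.1 - c₀)))
          = ∑ b ∈ B, ∑ a ∈ A, ∑ a' ∈ A,
              ζ ^ (((k * u : ℕ) : ℤ) * a) * (ζ ^ (-(((k * u : ℕ) : ℤ)) * a')
                * (ζ ^ (-(k : ℤ) * b) * ζ ^ ((k : ℤ) * c₀))) := by
            rw [Finset.sum_product]
            refine Finset.sum_congr rfl fun b _ => ?_
            rw [Finset.sum_product]
            exact Finset.sum_congr rfl fun a _ =>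
              Finset.sum_congr rfl fun a' _ => expand b a a'
        _ = (∑ a ∈ A, ζ ^ (((k * u : ℕ) : ℤ) * a))
              * (∑ a' ∈ A, ζ ^ (-(((k * u : ℕ) : ℤ)) * a'))
              * (∑ b ∈ B, ζ ^ (-(k : ℤ) * b)) * ζ ^ ((k : ℤ) * c₀) :=
            sum3_factor A A B _ _ _ _
        _ = 0 := by
            rw [aux_vanish hM hNM hζ A B htile hk0 hk hu.2, zero_mul]
    have hw : ∀ q : ℤ × ℤ × ℤ,
        ((range N).filter (fun u : ℕ => Nat.Coprime u N ∧
          (N : ℤ) ∣ (u : ℤ) * (q.2.1 - q.2.2) - (q.1 - c₀)))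
        = Ucop.filter (fun u : ℕ => (N : ℤ) ∣ (u : ℤ) * (q.2.1 - q.2.2) - (q.1 - c₀)) := by
      intro q
      rw [hU, Finset.filter_filter]
    calc (N : ℂ) * (∑ q ∈ B ×ˢ A ×ˢ A, (((range N).filter (fun u : ℕ => Nat.Coprime u N ∧
          (N : ℤ) ∣ (u : ℤ) * (q.2.1 - q.2.2) - (q.1 - c₀))).card : ℂ))
        = ∑ q ∈ B ×ˢ A ×ˢ A, ∑ u ∈ Ucop, ∑ k ∈ range N,
            ζ ^ ((k : ℤ) * ((u : ℤ) * (q.2.1 - q.2.2) - (q.1 - c₀))) := by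
          rw [Finset.mul_sum]
          refine Finset.sum_congr rfl fun q _ => ?_
          rw [hw q, Finset.card_filter]
          push_cast
          rw [Finset.mul_sum]
          refine Finset.sum_congr rfl fun u _ => ?_
          rw [aux_orth hN hζ ((u : ℤ) * (q.2.1 - q.2.2) - (q.1 - c₀))]
          by_cases hdvd : (N : ℤ) ∣ (u : ℤ) * (q.2.1 - q.2.2) - (q.1 - c₀) <;>
            simp [hdvd]
      _ = ∑ u ∈ Ucop, ∑ k ∈ range N, ∑ q ∈ B ×ˢ A ×ˢ A,
            ζ ^ ((k : ℤ) * ((u : ℤ) * (q.2.1 - q.2.2) - (q.1 - c₀))) := by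
          rw [Finset.sum_comm]
          refine Finset.sum_congr rfl fun u _ => ?_
          rw [Finset.sum_comm]
      _ = ∑ k ∈ range N, ∑ u ∈ Ucop, ∑ q ∈ B ×ˢ A ×ˢ A,
            ζ ^ ((k : ℤ) * ((u : ℤ) * (q.2.1 - q.2.2) - (q.1 - c₀))) := Finset.sum_comm
      _ = ∑ u ∈ Ucop, ∑ q ∈ B ×ˢ A ×ˢ A,
            ζ ^ (((0 : ℕ) : ℤ) * ((u : ℤ) * (q.2.1 - q.2.2) - (q.1 - c₀))) :=
          Finset.sum_eq_single_of_mem 0 (Finset.mem_range.mpr hN) hvanish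
      _ = (Ucop.card : ℂ) * (B ×ˢ A ×ˢ A).card := by
          simp [Finset.sum_const]
  have h3 := (key c).trans (key c').symm
  have hNne : (N : ℂ) ≠ 0 := by exact_mod_cast hN.ne'
  have h4 := mul_left_cancel₀ hNne h3
  exact_mod_cast h4

theorem stmt_6 (M N : ℕ) (hM : 0 < M) (hN : 0 < N) (hNM : N ∣ M) (A B : Finset ℤ)
    (htile : ∀ n : ℤ, ∃! p : ℤ × ℤ, p.1 ∈ A ∧ p.2 ∈ B ∧ (M : ℤ) ∣ p.1 + p.2 - n)
    (c c' : ℤ) (hc : c ∉ B) (hc' : c' ∉ B) :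
    ∑ m ∈ N.divisors,
        (((B.filter (fun b => Int.gcd (b - c) N = m)).card *
          ((A ×ˢ A).filter (fun p => Int.gcd (p.1 - p.2) N = m)).card : ℝ) /
            (Nat.totient (N / m)))
    = ∑ m ∈ N.divisors,
        (((B.filter (fun b => Int.gcd (b - c') N = m)).card *
          ((A ×ˢ A).filter (fun p => Int.gcd (p.1 - p.2) N = m)).card : ℝ) /
            (Nat.totient (N / m))) := by
  classical
  have hφN : ((Nat.totient N : ℝ)) ≠ 0 := by
    have := Nat.totient_pos.mpr hN
    positivity
  have key : ∀ c₀ : ℤ,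
      (Nat.totient N : ℝ) * (∑ m ∈ N.divisors,
          (((B.filter (fun b => Int.gcd (b - c₀) N = m)).card *
            ((A ×ˢ A).filter (fun p => Int.gcd (p.1 - p.2) N = m)).card : ℝ) /
              (Nat.totient (N / m))))
      = ∑ q ∈ B ×ˢ A ×ˢ A, (((range N).filter (fun u : ℕ => Nat.Coprime u N ∧
          (N : ℤ) ∣ (u : ℤ) * (q.2.1 - q.2.2) - (q.1 - c₀))).card : ℝ) := by
    intro c₀
    rw [Finset.mul_sum]
    calc ∑ m ∈ N.divisors, (Nat.totient N : ℝ) *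
            (((B.filter (fun b => Int.gcd (b - c₀) N = m)).card *
              ((A ×ˢ A).filter (fun p => Int.gcd (p.1 - p.2) N = m)).card : ℝ) /
                (Nat.totient (N / m)))
        = ∑ m ∈ N.divisors, ∑ b ∈ B.filter (fun b => Int.gcd (b - c₀) N = m),
            ((Nat.totient N : ℝ) / (Nat.totient (N / Int.gcd (b - c₀) N)) *
              ((A ×ˢ A).filter (fun p =>
                Int.gcd (p.1 - p.2) N = Int.gcd (b - c₀) N)).card) := by
          refine Finset.sum_congr rfl fun m _ => ?_
          have : ∀ b ∈ B.filter (fun b => Int.gcd (b - c₀) N = m),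
              ((Nat.totient N : ℝ) / (Nat.totient (N / Int.gcd (b - c₀) N)) *
                ((A ×ˢ A).filter (fun p =>
                  Int.gcd (p.1 - p.2) N = Int.gcd (b - c₀) N)).card)
              = ((Nat.totient N : ℝ) / (Nat.totient (N / m)) *
                ((A ×ˢ A).filter (fun p => Int.gcd (p.1 - p.2) N = m)).card) := by
            intro b hb
            rw [(Finset.mem_filter.mp hb).2]
          rw [Finset.sum_congr rfl this, Finset.sum_const, nsmul_eq_mul]
          ring
      _ = ∑ b ∈ B, ((Nat.totient N : ℝ) / (Nat.totient (N / Int.gcd (b - c₀) N)) *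
            ((A ×ˢ A).filter (fun p =>
              Int.gcd (p.1 - p.2) N = Int.gcd (b - c₀) N)).card) := by
          refine Finset.sum_fiberwise_of_maps_to (fun b _ => ?_) _
          exact Nat.mem_divisors.mpr ⟨by exact_mod_cast (Int.gcd_dvd_right _ _ :
            ((Int.gcd (b - c₀) N : ℤ)) ∣ (N : ℤ)), hN.ne'⟩
      _ = ∑ b ∈ B, ∑ p ∈ A ×ˢ A, (((range N).filter (fun u : ℕ => Nat.Coprime u N ∧
            (N : ℤ) ∣ (u : ℤ) * (p.1 - p.2) - (b - c₀))).card : ℝ) := by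
          refine Finset.sum_congr rfl fun b _ => ?_
          have hgdvd : Int.gcd (b - c₀) N ∣ N := by
            exact_mod_cast (Int.gcd_dvd_right _ _ : ((Int.gcd (b - c₀) N : ℤ)) ∣ (N : ℤ))
          have hgpos : 0 < Int.gcd (b - c₀) N :=
            Int.gcd_pos_iff.mpr (Or.inr (by exact_mod_cast hN.ne'))
          have hφm : ((Nat.totient (N / Int.gcd (b - c₀) N) : ℝ)) ≠ 0 := by
            have : 0 < Nat.totient (N / Int.gcd (b - c₀) N) :=
              Nat.totient_pos.mpr (Nat.div_pos (Nat.le_of_dvd hN hgdvd) hgpos)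
            positivity
          calc (Nat.totient N : ℝ) / (Nat.totient (N / Int.gcd (b - c₀) N)) *
                ((A ×ˢ A).filter (fun p =>
                  Int.gcd (p.1 - p.2) N = Int.gcd (b - c₀) N)).card
              = ∑ p ∈ (A ×ˢ A).filter (fun p =>
                  Int.gcd (p.1 - p.2) N = Int.gcd (b - c₀) N),
                  (Nat.totient N : ℝ) / (Nat.totient (N / Int.gcd (b - c₀) N)) := by
                rw [Finset.sum_const, nsmul_eq_mul]
                ring
            _ = ∑ p ∈ (A ×ˢ A).filter (fun p =>
                  Int.gcd (p.1 - p.2) N = Int.gcd (b - c₀) N),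
                  (((range N).filter (fun u : ℕ => Nat.Coprime u N ∧
                    (N : ℤ) ∣ (u : ℤ) * (p.1 - p.2) - (b - c₀))).card : ℝ) := by
                refine Finset.sum_congr rfl fun p hp => ?_
                have hpg := (Finset.mem_filter.mp hp).2
                have hcnt := aux_unit_count hN (x := p.1 - p.2) (y := b - c₀) hpg
                rw [hpg] at hcnt
                have := congrArg (Nat.cast : ℕ → ℝ) hcnt
                push_cast at this
                field_simp
                linarith [this]
            _ = ∑ p ∈ A ×ˢ A, (((range N).filter (fun u : ℕ => Nat.Coprime u N ∧
                  (N : ℤ) ∣ (u : ℤ) * (p.1 - p.2) - (b - c₀))).card : ℝ) := by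
                refine Finset.sum_filter_of_ne fun p _ hne => ?_
                by_contra hng
                rw [aux_unit_count0 hN hng] at hne
                simp at hne
      _ = ∑ q ∈ B ×ˢ A ×ˢ A, (((range N).filter (fun u : ℕ => Nat.Coprime u N ∧
            (N : ℤ) ∣ (u : ℤ) * (q.2.1 - q.2.2) - (q.1 - c₀))).card : ℝ) := by
          rw [Finset.sum_product]
  have h1 := key c
  have h2 := key c'
  have h3 : (∑ q ∈ B ×ˢ A ×ˢ A, (((range N).filter (fun u : ℕ => Nat.Coprime u N ∧
      (N : ℤ) ∣ (u : ℤ) * (q.2.1 - q.2.2) - (q.1 - c))).card : ℝ))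
      = ∑ q ∈ B ×ˢ A ×ˢ A, (((range N).filter (fun u : ℕ => Nat.Coprime u N ∧
      (N : ℤ) ∣ (u : ℤ) * (q.2.1 - q.2.2) - (q.1 - c'))).card : ℝ) := by
    have := aux_stepB hM hN hNM A B htile c c'
    exact_mod_cast congrArg (Nat.cast : ℕ → ℝ) this
  rw [h3] at h1
  exact mul_left_cancel₀ hφN (h1.trans h2.symm)
end

section
/- Suppose A ⊕ B = ℤ/Mℤ, and take N = M. For c ∈ ℤ∖B lying in B + Mℤ, the quantity ∑_{m|M} b_m(c) A_m / φ(M/m), with A_m and b_m(c) as in the stability result, equals |A|. -/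
open Finset MulAction

private lemma filter_card_one_iff {α : Type*} [DecidableEq α] (s : Finset α) (P : α → Prop)
    [DecidablePred P] : (s.filter P).card = 1 ↔ ∃! a, a ∈ s ∧ P a := by
  rw [Finset.card_eq_one]
  constructor
  · rintro ⟨a, ha⟩
    have h := fun b => Finset.ext_iff.mp ha b
    refine ⟨a, ?_, ?_⟩
    · have := (h a).mpr (Finset.mem_singleton_self a)
      simpa using this
    · intro b hb
      have := (h b).mp (by simpa using hb)
      simpa using this
  · rintro ⟨a, ha, hu⟩
    refine ⟨a, Finset.ext fun b => ?_⟩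
    simp only [Finset.mem_filter, Finset.mem_singleton]
    exact ⟨fun hb => hu b hb, fun hb => hb ▸ ⟨ha.1, ha.2⟩⟩

private lemma gcd_congr {M : ℕ} {z z' : ℤ} (h : (M:ℤ) ∣ z - z') : Int.gcd z M = Int.gcd z' M := by
  have key : ∀ w w' : ℤ, (M:ℤ) ∣ w - w' → Int.gcd w M ∣ Int.gcd w' M := by
    intro w w' hw
    have h1 : (Int.gcd w M : ℤ) ∣ w' := by
      have : (Int.gcd w M : ℤ) ∣ w' - w := ((Int.gcd_dvd_right (a := w) (b := M))).trans (by
        simpa using hw.neg_right)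
      simpa using this.add ((Int.gcd_dvd_left (a := w) (b := M)))
    have := Int.dvd_gcd h1 ((Int.gcd_dvd_right (a := w) (b := M)))
    exact_mod_cast this
  exact Nat.dvd_antisymm (key z z' h) (key z' z (by simpa using h.neg_right))

private lemma gcd_eq_self_of_dvd {M : ℕ} {z : ℤ} (h : (M:ℤ) ∣ z) : Int.gcd z M = M := by
  refine Nat.dvd_antisymm ?_ ?_
  · exact_mod_cast (Int.gcd_dvd_right (a := z) (b := M))
  · exact_mod_cast Int.dvd_gcd h dvd_rfl

private lemma dvd_of_gcd_eq_self {M : ℕ} {z : ℤ} (h : Int.gcd z M = M) : (M:ℤ) ∣ z := by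
  have := (Int.gcd_dvd_left (a := z) (b := (M:ℤ)))
  rwa [h] at this

private lemma exists_unit_eq {M : ℕ} [NeZero M] (z : ℤ) :
    ∃ v : (ZMod M)ˣ, (z : ZMod M) = (v : ZMod M) * (Int.gcd z M : ZMod M) := by
  set m : ℕ := Int.gcd z M with hm
  have hMne : M ≠ 0 := NeZero.ne M
  have hmdvdM : m ∣ M := by
    exact_mod_cast (Int.gcd_dvd_right (a := z) (b := (M:ℤ)))
  have hm0 : m ≠ 0 := fun h0 => hMne (zero_dvd_iff.mp (h0 ▸ hmdvdM))
  obtain ⟨M', hM'⟩ := hmdvdM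
  have hM'0 : M' ≠ 0 := fun h => hMne (by simp [hM', h])
  have hmz : (m:ℤ) ∣ z := Int.gcd_dvd_left (a := z) (b := (M:ℤ))
  obtain ⟨r, hr⟩ := hmz
  have hmm : ((m:ℤ)) * (M':ℤ) = (M:ℤ) := by exact_mod_cast hM'.symm
  -- gcd r M' = 1
  have hrM' : Int.gcd r M' = 1 := by
    have h1 : Int.gcd ((m:ℤ) * r) ((m:ℤ) * (M':ℤ)) = m * Int.gcd r M' := by
      simpa using Int.gcd_mul_left (m:ℤ) r (M':ℤ)
    rw [← hr, hmm] at h1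
    have h2 : m * Int.gcd r M' = m := by rw [← h1]
    exact (Nat.mul_eq_left hm0).mp h2
  haveI : NeZero M' := ⟨hM'0⟩
  have hrunit : IsUnit (r : ZMod M') := by
    obtain ⟨a, b, hab⟩ := Int.isCoprime_iff_gcd_eq_one.mpr hrM'
    have h2 : (r : ZMod M') * (a : ZMod M') = 1 := by
      have := congrArg (fun t : ℤ => (t : ZMod M')) hab
      push_cast at this
      rw [ZMod.natCast_self] at this
      simpa [mul_comm] using this
    exact isUnit_iff_exists_inv.mpr ⟨_, h2⟩
  have hdvd : M' ∣ M := ⟨m, by rw [hM', Nat.mul_comm]⟩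
  obtain ⟨v, hv⟩ := ZMod.unitsMap_surjective (n := M') hdvd hrunit.unit
  refine ⟨v, ?_⟩
  -- (z : ZMod M) = v * m ; reduce to M ∣ m * (u - r) where u integer rep of v
  have hvcast : (ZMod.castHom hdvd (ZMod M') (v : ZMod M)) = (r : ZMod M') := by
    have := congrArg (Units.val) hv
    rw [ZMod.unitsMap_def] at this
    simpa [IsUnit.unit_spec] using this
  -- y := (v : ZMod M) - r maps to 0 in ZMod M'
  set y : ZMod M := (v : ZMod M) - (r : ZMod M) with hy
  have hy0 : (ZMod.castHom hdvd (ZMod M')) y = 0 := by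
    rw [hy, map_sub, hvcast, map_intCast]; ring
  have hMy : (m : ZMod M) * y = 0 := by
    have hyval : ((y.val : ℕ) : ZMod M') = 0 := by
      have : (ZMod.castHom hdvd (ZMod M')) ((y.val : ℕ) : ZMod M) = 0 := by
        rw [ZMod.natCast_rightInverse y]; exact hy0
      rwa [map_natCast] at this
    obtain ⟨t, ht⟩ := (ZMod.natCast_eq_zero_iff _ _).mp hyval
    calc (m : ZMod M) * y = (m : ZMod M) * ((y.val : ℕ) : ZMod M) := by
          rw [ZMod.natCast_rightInverse y]
      _ = ((m * (M' * t) : ℕ) : ZMod M) := by rw [ht]; push_cast; ring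
      _ = 0 := by rw [show m * (M' * t) = M * t by rw [← mul_assoc, ← hM']]; push_cast;
                  rw [ZMod.natCast_self]; ring
  have hzr : (z : ZMod M) = (m : ZMod M) * (r : ZMod M) := by
    rw [hr]; push_cast; ring
  have hfin : (m : ZMod M) * (v : ZMod M) = (m : ZMod M) * (r : ZMod M) := by
    have h2 : (m:ZMod M) * (v:ZMod M) - (m:ZMod M)*(r:ZMod M) = 0 := by
      rw [← mul_sub, ← hy]; exact hMy
    exact sub_eq_zero.mp h2
  rw [hzr, ← hfin]; ring

private lemma prime_step {M : ℕ} [NeZero M] (p : ℕ) (hp : p.Prime) (hpM : ¬ p ∣ M)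
    (C D : Finset (ZMod M)) (hcard : C.card * D.card = M) (W : ZMod M)
    (h : ∀ x : ZMod M, ((C ×ˢ D).filter (fun q => W * q.1 + q.2 = x)).card = 1) :
    ∀ x : ZMod M, ((C ×ˢ D).filter (fun q => ((p : ZMod M) * W) * q.1 + q.2 = x)).card = 1 := by
  haveI : Fact p.Prime := ⟨hp⟩
  set c : ZMod M → ℕ := fun x => ((C ×ˢ D).filter (fun q => ((p : ZMod M) * W) * q.1 + q.2 = x)).card with hc
  have hsum : ∑ x : ZMod M, c x = M := by
    have h1 : (C ×ˢ D).card = ∑ x : ZMod M, c x :=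
      Finset.card_eq_sum_card_fiberwise (fun q _ => Finset.mem_univ (((p : ZMod M) * W) * q.1 + q.2))
    rw [← h1, Finset.card_product, hcard]
  have hmod : ∀ x : ZMod M, c x ≡ 1 [MOD p] := by
    intro x
    set S : Finset ((ZMod p → ZMod M) × ZMod M) :=
      ((Fintype.piFinset fun _ : ZMod p => C) ×ˢ D).filter
        (fun q => W * (∑ i, q.1 i) + q.2 = x) with hS
    have memS : ∀ (F : ZMod p → ZMod M) (b : ZMod M),
        ((F, b) ∈ S ↔ (∀ i, F i ∈ C) ∧ b ∈ D ∧ W * (∑ i, F i) + b = x) := by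
      intro F b
      rw [hS]
      simp [Finset.mem_filter, Finset.mem_product, Fintype.mem_piFinset, and_assoc]
    have hsplit : ∀ f : ZMod p → ZMod M,
        ∑ i, f i = f 0 + ∑ j : {i : ZMod p // i ≠ 0}, f j.1 := by
      intro f
      rw [← Finset.sum_filter_add_sum_filter_not Finset.univ (· = 0) f]
      congr 1
      · rw [Finset.filter_eq']
        simp
      · exact Finset.sum_subtype _ (fun x => by simp) f
    have hB1 : S.card = C.card ^ (p - 1) := by
      have hsub : Fintype.card {i : ZMod p // i ≠ 0} = p - 1 := by
        have h1 : Fintype.card {i : ZMod p // i ≠ 0}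
            = Fintype.card (ZMod p) - Fintype.card {i : ZMod p // i = 0} :=
          Fintype.card_subtype_compl _
        rw [h1, ZMod.card, Fintype.card_subtype_eq (0 : ZMod p)]
      have htarget : C.card ^ (p - 1)
          = (Fintype.piFinset (fun _ : {i : ZMod p // i ≠ 0} => C)).card := by
        rw [Fintype.card_piFinset]
        simp [hsub]
      rw [htarget]
      apply Finset.card_bij (fun q _ => fun j : {i : ZMod p // i ≠ 0} => q.1 j.1)
      · intro q hq
        rw [hS, Finset.mem_filter, Finset.mem_product] at hq
        rw [Fintype.mem_piFinset]
        exact fun j => (Fintype.mem_piFinset.mp hq.1.1) j.1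
      · intro q hq q' hq' heq
        rw [hS, Finset.mem_filter, Finset.mem_product] at hq hq'
        have hsums : ∑ j : {i : ZMod p // i ≠ 0}, q.1 j.1
            = ∑ j : {i : ZMod p // i ≠ 0}, q'.1 j.1 :=
          Finset.sum_congr rfl (fun j _ => congrFun heq j)
        set y : ZMod M := x - W * (∑ j : {i : ZMod p // i ≠ 0}, q.1 j.1) with hy
        obtain ⟨q₀, hq₀, huniq⟩ := (filter_card_one_iff _ _).mp (h y)
        have h1 : (q.1 0, q.2) = q₀ := by
          apply huniq
          refine ⟨Finset.mem_product.mpr ⟨(Fintype.mem_piFinset.mp hq.1.1) 0, hq.1.2⟩, ?_⟩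
          have := hq.2
          rw [hsplit q.1] at this
          rw [hy]
          linear_combination this
        have h2 : (q'.1 0, q'.2) = q₀ := by
          apply huniq
          refine ⟨Finset.mem_product.mpr ⟨(Fintype.mem_piFinset.mp hq'.1.1) 0, hq'.1.2⟩, ?_⟩
          have := hq'.2
          rw [hsplit q'.1] at this
          rw [hy, hsums]
          linear_combination this
        have h3 := h1.trans h2.symm
        obtain ⟨hfst, hsnd⟩ := Prod.mk.inj h3
        refine Prod.ext_iff.mpr ⟨funext fun i => ?_, hsnd⟩
        by_cases hi : i = 0
        · rw [hi]; exact hfst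
        · exact congrFun heq ⟨i, hi⟩
      · intro f hf
        set s₀ : ZMod M := ∑ j : {i : ZMod p // i ≠ 0}, f j with hs₀
        obtain ⟨q₀, ⟨hq₀mem, hq₀cond⟩, _⟩ := (filter_card_one_iff _ _).mp (h (x - W * s₀))
        have hq₀C : q₀.1 ∈ C := (Finset.mem_product.mp hq₀mem).1
        have hq₀D : q₀.2 ∈ D := (Finset.mem_product.mp hq₀mem).2
        set g : ZMod p → ZMod M := fun i => if hi : i = 0 then q₀.1 else f ⟨i, hi⟩ with hg
        have hg0 : g 0 = q₀.1 := by rw [hg]; simp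
        have hgne : ∀ j : {i : ZMod p // i ≠ 0}, g j.1 = f j := by
          intro j
          rw [hg]
          simp only [dif_neg j.2]
        have hsumg : ∑ i, g i = q₀.1 + s₀ := by
          rw [hsplit g, hg0, hs₀]
          congr 1
          exact Finset.sum_congr rfl (fun j _ => hgne j)
        refine ⟨(g, q₀.2), ?_, ?_⟩
        · rw [(memS g q₀.2)]
          refine ⟨?_, hq₀D, ?_⟩
          · intro i
            by_cases hi : i = 0
            · rw [hi, hg0]; exact hq₀C
            · rw [show g i = f ⟨i, hi⟩ from hgne ⟨i, hi⟩]
              exact (Fintype.mem_piFinset.mp hf) ⟨i, hi⟩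
          · rw [hsumg]
            linear_combination hq₀cond
        · funext j
          exact hgne j
    have hB2 : S.card ≡ c x [MOD p] := by
      letI : SMul (Multiplicative (ZMod p)) {q // q ∈ S} :=
        ⟨fun g q => ⟨(fun i => q.1.1 (i + Multiplicative.toAdd g), q.1.2), by
          have hq := (memS q.1.1 q.1.2).mp (by rw [Prod.mk.eta]; exact q.2)
          refine (memS _ _).mpr ⟨fun i => hq.1 _, hq.2.1, ?_⟩
          have hshift : ∑ i, q.1.1 (i + Multiplicative.toAdd g) = ∑ i, q.1.1 i :=
            Fintype.sum_equiv (Equiv.addRight (Multiplicative.toAdd g)) _ _ (fun i => rfl)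
          rw [hshift]
          exact hq.2.2⟩⟩
      letI : MulAction (Multiplicative (ZMod p)) {q // q ∈ S} :=
        { one_smul := fun q => Subtype.ext (Prod.ext_iff.mpr
            ⟨funext fun i => by
              show q.1.1 (i + Multiplicative.toAdd 1) = q.1.1 i
              simp, rfl⟩)
          mul_smul := fun g₁ g₂ q => Subtype.ext (Prod.ext_iff.mpr
            ⟨funext fun i => by
              show q.1.1 (i + Multiplicative.toAdd (g₁ * g₂))
                  = q.1.1 (i + Multiplicative.toAdd g₁ + Multiplicative.toAdd g₂)
              rw [toAdd_mul, add_assoc], rfl⟩) }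
      have hpg : IsPGroup p (Multiplicative (ZMod p)) := by
        apply IsPGroup.of_card (n := 1)
        rw [pow_one, Nat.card_eq_fintype_card, Fintype.card_multiplicative]
        exact ZMod.card p
      have key := hpg.card_modEq_card_fixedPoints {q // q ∈ S}
      -- identify the two cardinalities
      have hcount : ∀ F : ZMod p → ZMod M, ∀ y : ZMod M, ∑ _i : ZMod p, y = (p : ZMod M) * y := by
        intro F y
        rw [Finset.sum_const, Finset.card_univ, ZMod.card, nsmul_eq_mul]
      have hconst : ∀ q : MulAction.fixedPoints (Multiplicative (ZMod p)) {q // q ∈ S},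
          ∀ i : ZMod p, q.1.1.1 i = q.1.1.1 0 := by
        intro q i
        have := q.2 (Multiplicative.ofAdd i)
        have h1 := congrFun (congrArg Prod.fst (Subtype.ext_iff.mp this)) 0
        show q.1.1.1 i = q.1.1.1 0
        calc q.1.1.1 i = q.1.1.1 (0 + Multiplicative.toAdd (Multiplicative.ofAdd i)) := by
              rw [toAdd_ofAdd, zero_add]
          _ = q.1.1.1 0 := h1
      let T : Finset (ZMod M × ZMod M) :=
        (C ×ˢ D).filter (fun q => ((p : ZMod M) * W) * q.1 + q.2 = x)
      have e : MulAction.fixedPoints (Multiplicative (ZMod p)) {q // q ∈ S} ≃ {q // q ∈ T} := by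
        refine ⟨fun q => ⟨(q.1.1.1 0, q.1.1.2), ?_⟩,
                fun q => ⟨⟨(fun _ => q.1.1, q.1.2), ?_⟩, ?_⟩, ?_, ?_⟩
        · have hq := (memS q.1.1.1 q.1.1.2).mp (by rw [Prod.mk.eta]; exact q.1.2)
          have hsc : ∑ i, q.1.1.1 i = (p : ZMod M) * q.1.1.1 0 := by
            rw [Finset.sum_congr rfl (fun i _ => hconst q i), Finset.sum_const,
              Finset.card_univ, ZMod.card, nsmul_eq_mul]
          refine Finset.mem_filter.mpr ⟨Finset.mem_product.mpr ⟨hq.1 0, hq.2.1⟩, ?_⟩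
          have := hq.2.2
          rw [hsc] at this
          linear_combination this
        · have hq := Finset.mem_filter.mp q.2
          have hq1 : q.1.1 ∈ C := (Finset.mem_product.mp hq.1).1
          have hq2 : q.1.2 ∈ D := (Finset.mem_product.mp hq.1).2
          refine (memS _ _).mpr ⟨fun _ => hq1, hq2, ?_⟩
          rw [Finset.sum_const, Finset.card_univ, ZMod.card, nsmul_eq_mul]
          linear_combination hq.2
        · intro g
          exact Subtype.ext (Prod.ext_iff.mpr ⟨rfl, rfl⟩)
        · intro q
          apply Subtype.ext
          apply Subtype.ext
          refine Prod.ext_iff.mpr ⟨funext fun i => ?_, rfl⟩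
          exact (hconst q i).symm
        · intro q
          apply Subtype.ext
          exact Prod.mk.eta
      have h1 : Nat.card {q // q ∈ S} = S.card := by
        rw [Nat.card_eq_fintype_card, Fintype.card_coe]
      have h2 : Nat.card (MulAction.fixedPoints (Multiplicative (ZMod p)) {q // q ∈ S}) = c x := by
        rw [Nat.card_congr e, Nat.card_eq_fintype_card, Fintype.card_coe]
      rw [h1, h2] at key
      exact key
    have hpC : ¬ p ∣ C.card := fun hd => hpM (hcard ▸ hd.mul_right _)
    have hB3 : C.card ^ (p - 1) ≡ 1 [MOD p] := by
      have hco : Nat.Coprime C.card p := ((hp.coprime_iff_not_dvd).mpr hpC).symm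
      have := Nat.ModEq.pow_totient hco
      rwa [Nat.totient_prime hp] at this
    have hS1 : S.card ≡ 1 [MOD p] := by rw [hB1]; exact hB3
    exact hB2.symm.trans hS1
  -- pigeonhole: all values ≥ 1, sum = M over M fibers ⇒ all = 1
  intro x
  have h1 : ∀ y : ZMod M, 1 ≤ c y := by
    intro y
    rcases Nat.eq_zero_or_pos (c y) with h0 | h1
    · exfalso
      have h2 := hmod y
      rw [h0] at h2
      have h3 : (0:ℕ) % p = 1 % p := h2
      rw [Nat.zero_mod, Nat.mod_eq_of_lt hp.one_lt] at h3
      exact one_ne_zero h3.symm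
    · exact h1
  show c x = 1
  by_contra hne
  have h2 : 2 ≤ c x := by
    have := h1 x
    omega
  have hlt : ∑ _y : ZMod M, (1:ℕ) < ∑ y : ZMod M, c y :=
    Finset.sum_lt_sum (fun i _ => h1 i) ⟨x, Finset.mem_univ x, by omega⟩
  rw [Finset.sum_const, Finset.card_univ, ZMod.card, smul_eq_mul, mul_one, hsum] at hlt
  exact lt_irrefl _ hlt

private lemma nat_tiling {M : ℕ} [NeZero M] (C D : Finset (ZMod M))
    (hcard : C.card * D.card = M)
    (h : ∀ x : ZMod M, ((C ×ˢ D).filter (fun q => q.1 + q.2 = x)).card = 1) :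
    ∀ u : ℕ, u ≠ 0 → u.Coprime M →
      ∀ x : ZMod M, ((C ×ˢ D).filter (fun q => (u : ZMod M) * q.1 + q.2 = x)).card = 1 := by
  intro u
  induction u using Nat.strong_induction_on with
  | _ u ih =>
    intro hu0 hco x
    rcases eq_or_ne u 1 with rfl | hu1
    · simpa using h x
    · obtain ⟨q, hq⟩ := Nat.exists_prime_and_dvd hu1
      obtain ⟨w, rfl⟩ := hq.2
      have hw0 : w ≠ 0 := by rintro rfl; exact hu0 (mul_zero q)
      have hwlt : w < q * w := by
        have := hq.1.one_lt
        calc w = 1 * w := (one_mul w).symm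
          _ < q * w := by
            exact (Nat.mul_lt_mul_right (Nat.pos_of_ne_zero hw0)).mpr this
      have hwco : w.Coprime M := Nat.Coprime.coprime_dvd_left ⟨q, mul_comm q w⟩ hco
      have hqM : ¬ q ∣ M := by
        intro hd
        have : q.Coprime M := Nat.Coprime.coprime_dvd_left ⟨w, rfl⟩ hco
        exact hq.1.one_lt.ne' (this.eq_one_of_dvd hd)
      have hbase := ih w hwlt hw0 hwco
      have := prime_step q hq.1 hqM C D hcard ((w : ZMod M)) hbase x
      have hcast : ((q * w : ℕ) : ZMod M) = (q : ZMod M) * (w : ZMod M) := by push_cast; ring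
      rw [hcast]
      exact this

private lemma unit_tiling {M : ℕ} [NeZero M] (C D : Finset (ZMod M))
    (hcard : C.card * D.card = M)
    (h : ∀ x : ZMod M, ((C ×ˢ D).filter (fun q => q.1 + q.2 = x)).card = 1)
    (v : (ZMod M)ˣ) :
    ∀ x : ZMod M, ((C ×ˢ D).filter (fun q => (v : ZMod M) * q.1 + q.2 = x)).card = 1 := by
  intro x
  rcases eq_or_ne M 1 with hM1 | hM1
  · subst hM1
    have hfull : ((C ×ˢ D).filter (fun q => (v : ZMod 1) * q.1 + q.2 = x)) = C ×ˢ D :=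
      Finset.filter_true_of_mem (fun q _ => Subsingleton.elim _ _)
    rw [hfull, Finset.card_product, hcard]
  · haveI : Fact (1 < M) := ⟨by
      have := Nat.pos_of_ne_zero (NeZero.ne M); omega⟩
    set n : ℕ := (v : ZMod M).val with hn
    have hco : n.Coprime M := ZMod.val_coe_unit_coprime v
    have hcast : ((n : ℕ) : ZMod M) = (v : ZMod M) := ZMod.natCast_rightInverse _
    rcases eq_or_ne n 0 with h0 | h0
    · exfalso
      have hv0 : (v : ZMod M) = 0 := by rw [← hcast, h0]; simp
      have : IsUnit (0 : ZMod M) := hv0 ▸ v.isUnit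
      exact zero_ne_one (isUnit_zero_iff.mp this)
    · rw [← hcast]
      exact nat_tiling C D hcard h n h0 hco x

theorem stmt_7 (M : ℕ) (hM : 0 < M) (A B : Finset ℤ)
    (htile : ∀ n : ℤ, ∃! p : ℤ × ℤ, p.1 ∈ A ∧ p.2 ∈ B ∧ (M : ℤ) ∣ p.1 + p.2 - n)
    (c : ℤ) (hc : c ∉ B) (hcB : ∃ b ∈ B, (M : ℤ) ∣ c - b) :
    ∑ m ∈ M.divisors,
        (((B.filter (fun b => Int.gcd (b - c) M = m)).card *
          ((A ×ˢ A).filter (fun p => Int.gcd (p.1 - p.2) M = m)).card : ℝ) /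
            (Nat.totient (M / m)))
    = A.card := by
  haveI : NeZero M := ⟨hM.ne'⟩
  obtain ⟨b₀, hb₀B, hb₀⟩ := hcB
  have hxn : ∀ x : ZMod M, (((x.val : ℤ)) : ZMod M) = x := by
    intro x; push_cast; exact ZMod.natCast_rightInverse x
  have T1 : ∀ x : ZMod M, ∃! q : ℤ × ℤ, (q.1 ∈ A ∧ q.2 ∈ B) ∧ ((q.1 + q.2 : ℤ) : ZMod M) = x := by
    intro x
    obtain ⟨q, ⟨hq1, hq2, hq3⟩, huniq⟩ := htile ((x.val : ℤ))
    refine ⟨q, ⟨⟨hq1, hq2⟩, ?_⟩, ?_⟩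
    · rw [← hxn x]
      exact ((ZMod.intCast_eq_intCast_iff_dvd_sub _ _ M).mpr hq3).symm
    · rintro q' ⟨⟨h1, h2⟩, h3⟩
      refine huniq q' ⟨h1, h2, ?_⟩
      rw [← hxn x] at h3
      exact (ZMod.intCast_eq_intCast_iff_dvd_sub _ _ M).mp h3.symm
  have injA : ∀ a ∈ A, ∀ a' ∈ A, ((a:ℤ) : ZMod M) = ((a':ℤ) : ZMod M) → a = a' := by
    intro a ha a' ha' heq
    obtain ⟨q, hq, huniq⟩ := T1 (((a + b₀ : ℤ)) : ZMod M)
    have h1 := huniq (a, b₀) ⟨⟨ha, hb₀B⟩, rfl⟩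
    have h2 := huniq (a', b₀) ⟨⟨ha', hb₀B⟩, by push_cast at heq ⊢; rw [heq]⟩
    have := h1.trans h2.symm
    exact congrArg Prod.fst this
  have hAne : ∃ a, a ∈ A := by
    obtain ⟨q, ⟨⟨hq1, _⟩, _⟩, _⟩ := T1 0
    exact ⟨q.1, hq1⟩
  obtain ⟨a₀, ha₀A⟩ := hAne
  have injB : ∀ b ∈ B, ∀ b' ∈ B, ((b:ℤ) : ZMod M) = ((b':ℤ) : ZMod M) → b = b' := by
    intro b hb b' hb' heq
    obtain ⟨q, hq, huniq⟩ := T1 (((a₀ + b : ℤ)) : ZMod M)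
    have h1 := huniq (a₀, b) ⟨⟨ha₀A, hb⟩, rfl⟩
    have h2 := huniq (a₀, b') ⟨⟨ha₀A, hb'⟩, by push_cast at heq ⊢; rw [heq]⟩
    have := h1.trans h2.symm
    exact congrArg Prod.snd this
  set A' : Finset (ZMod M) := A.image (fun a => ((a:ℤ) : ZMod M)) with hA'
  set B' : Finset (ZMod M) := B.image (fun b => ((b:ℤ) : ZMod M)) with hB'
  have TZ : ∀ x : ZMod M, ((A' ×ˢ B').filter (fun q => q.1 + q.2 = x)).card = 1 := by
    intro x
    rw [filter_card_one_iff]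
    obtain ⟨q, ⟨⟨hq1, hq2⟩, hq3⟩, huniq⟩ := T1 x
    refine ⟨((q.1 : ZMod M), (q.2 : ZMod M)),
      ⟨Finset.mem_product.mpr ⟨Finset.mem_image_of_mem _ hq1, Finset.mem_image_of_mem _ hq2⟩,
        by push_cast at hq3 ⊢; exact hq3⟩, ?_⟩
    rintro ⟨α, β⟩ ⟨hmem, hsum⟩
    obtain ⟨a, ha, rfl⟩ := Finset.mem_image.mp (Finset.mem_product.mp hmem).1
    obtain ⟨b, hb, rfl⟩ := Finset.mem_image.mp (Finset.mem_product.mp hmem).2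
    have := huniq (a, b) ⟨⟨ha, hb⟩, by push_cast; exact hsum⟩
    rw [← this]
  have cardM : A'.card * B'.card = M := by
    rw [← Finset.card_product]
    have hbij : (A' ×ˢ B').card = (Finset.univ : Finset (ZMod M)).card := by
      apply Finset.card_bij (fun q _ => q.1 + q.2)
      · intro q hq; exact Finset.mem_univ _
      · intro q hq q' hq' heq
        obtain ⟨q₀, hq₀, huniq⟩ := (filter_card_one_iff _ _).mp (TZ (q.1 + q.2))
        have h1 := huniq q ⟨hq, rfl⟩
        have h2 := huniq q' ⟨hq', heq.symm⟩
        rw [h1, h2]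
      · intro x _
        obtain ⟨q₀, hq₀, _⟩ := (filter_card_one_iff _ _).mp (TZ x)
        exact ⟨q₀, hq₀.1, hq₀.2⟩
    rw [hbij, Finset.card_univ, ZMod.card]
  have TZs : ∀ x : ZMod M, ((B' ×ˢ A').filter (fun q => q.1 + q.2 = x)).card = 1 := by
    intro x
    rw [filter_card_one_iff]
    obtain ⟨q, ⟨hmem, hsum⟩, huniq⟩ := (filter_card_one_iff _ _).mp (TZ x)
    obtain ⟨hq1, hq2⟩ := Finset.mem_product.mp hmem
    refine ⟨(q.2, q.1), ⟨Finset.mem_product.mpr ⟨hq2, hq1⟩, by rw [add_comm]; exact hsum⟩, ?_⟩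
    rintro ⟨β, α⟩ ⟨hmem', hsum'⟩
    obtain ⟨h1', h2'⟩ := Finset.mem_product.mp hmem'
    have := huniq (α, β) ⟨Finset.mem_product.mpr ⟨h2', h1'⟩, by rw [add_comm]; exact hsum'⟩
    rw [← this]
  have UT := unit_tiling B' A' (by rw [mul_comm]; exact cardM) TZs
  -- disjointness of gcd classes
  have disj : ∀ m : ℕ, m ≠ M →
      (B.filter (fun b => Int.gcd (b - c) M = m)) = ∅ ∨
      ((A ×ˢ A).filter (fun p => Int.gcd (p.1 - p.2) M = m)) = ∅ := by
    intro m hm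
    by_contra hcon
    push_neg at hcon
    obtain ⟨h1, h2⟩ := hcon
    obtain ⟨b, hbmem⟩ := h1
    obtain ⟨⟨a, a'⟩, hamem⟩ := h2
    rw [Finset.mem_filter] at hbmem hamem
    obtain ⟨hbB, hbg⟩ := hbmem
    obtain ⟨haA, hag⟩ := hamem
    obtain ⟨haA1, haA2⟩ := Finset.mem_product.mp haA
    have hgb : Int.gcd (b - b₀) M = m := by
      rw [← hbg]
      refine gcd_congr ?_
      have he : (b - b₀) - (b - c) = c - b₀ := by ring
      rw [he]
      exact hb₀
    obtain ⟨v₁, hv₁⟩ := exists_unit_eq (M := M) (a - a')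
    obtain ⟨v₂, hv₂⟩ := exists_unit_eq (M := M) (b - b₀)
    rw [hag] at hv₁
    rw [hgb] at hv₂
    set w : (ZMod M)ˣ := v₁ * v₂⁻¹ with hw
    have hkey : ((a - a' : ℤ) : ZMod M) = (w : ZMod M) * ((b - b₀ : ℤ) : ZMod M) := by
      rw [hv₁, hv₂, hw, Units.val_mul]
      have hinv : ((v₂⁻¹ : (ZMod M)ˣ) : ZMod M) * ((v₂ : (ZMod M)ˣ) : ZMod M) = 1 := by
        rw [← Units.val_mul]
        have : (v₂⁻¹ * v₂ : (ZMod M)ˣ) = 1 := by group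
        rw [this, Units.val_one]
      calc ((v₁ : (ZMod M)ˣ) : ZMod M) * (m : ZMod M)
          = (v₁ : ZMod M) * ((((v₂⁻¹ : (ZMod M)ˣ) : ZMod M) * ((v₂ : (ZMod M)ˣ) : ZMod M)) * (m : ZMod M)) := by
            rw [hinv, one_mul]
        _ = (v₁ : ZMod M) * ((v₂⁻¹ : (ZMod M)ˣ) : ZMod M) * (((v₂ : (ZMod M)ˣ) : ZMod M) * (m : ZMod M)) := by
            ring
    obtain ⟨q₀, hq₀, huniq⟩ := (filter_card_one_iff _ _).mp
      (UT w ((w : ZMod M) * ((b₀:ℤ) : ZMod M) + ((a:ℤ) : ZMod M)))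
    have hp1 := huniq (((b₀:ℤ) : ZMod M), ((a:ℤ) : ZMod M))
      ⟨Finset.mem_product.mpr ⟨Finset.mem_image_of_mem _ hb₀B, Finset.mem_image_of_mem _ haA1⟩, rfl⟩
    have hp2 := huniq (((b:ℤ) : ZMod M), ((a':ℤ) : ZMod M))
      ⟨Finset.mem_product.mpr ⟨Finset.mem_image_of_mem _ hbB, Finset.mem_image_of_mem _ haA2⟩, by
        push_cast at hkey
        linear_combination -hkey⟩
    have heq := hp1.trans hp2.symm
    have hsnd : ((a:ℤ) : ZMod M) = ((a':ℤ) : ZMod M) := congrArg Prod.snd heq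
    have hdvd : (M:ℤ) ∣ a - a' := by
      have h' := (ZMod.intCast_eq_intCast_iff_dvd_sub _ _ M).mp hsnd
      have h'' := h'.neg_right
      rwa [neg_sub] at h''
    exact hm (hag.symm.trans (gcd_eq_self_of_dvd hdvd))
  have hz : ∀ m ∈ M.divisors, m ≠ M →
      (((B.filter (fun b => Int.gcd (b - c) M = m)).card *
        ((A ×ˢ A).filter (fun p => Int.gcd (p.1 - p.2) M = m)).card : ℝ) /
          (Nat.totient (M / m))) = 0 := by
    intro m _ hmne
    rcases disj m hmne with h0 | h0 <;> rw [h0] <;> simp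
  rw [Finset.sum_eq_single_of_mem M (Nat.mem_divisors_self M hM.ne') hz]
  have hBM : B.filter (fun b => Int.gcd (b - c) M = M) = {b₀} := by
    ext b
    simp only [Finset.mem_filter, Finset.mem_singleton]
    constructor
    · rintro ⟨hbB, hbg⟩
      have hd : (M:ℤ) ∣ b - c := dvd_of_gcd_eq_self hbg
      have hd2 : (M:ℤ) ∣ b - b₀ := by
        have h3 := hd.add hb₀
        have he : (b - c) + (c - b₀) = b - b₀ := by ring
        rwa [he] at h3
      exact injB b hbB b₀ hb₀B ((ZMod.intCast_eq_intCast_iff_dvd_sub _ _ M).mpr hd2).symm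
    · rintro rfl
      refine ⟨hb₀B, gcd_eq_self_of_dvd ?_⟩
      have h4 := dvd_neg.mpr hb₀
      rwa [neg_sub] at h4
  have hAM : (A ×ˢ A).filter (fun p => Int.gcd (p.1 - p.2) M = M) = A.diag := by
    ext q
    simp only [Finset.mem_filter, Finset.mem_product, Finset.mem_diag]
    constructor
    · rintro ⟨⟨hq1, hq2⟩, hg⟩
      exact ⟨hq1, injA q.1 hq1 q.2 hq2
        ((ZMod.intCast_eq_intCast_iff_dvd_sub _ _ M).mpr (dvd_of_gcd_eq_self hg)).symm⟩
    · rintro ⟨hq1, heq⟩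
      refine ⟨⟨hq1, heq ▸ hq1⟩, ?_⟩
      rw [← heq, sub_self]
      simp [Int.gcd]
  rw [hBM, hAM, Finset.card_singleton, Finset.diag_card, Nat.div_self hM, Nat.totient_one]
  simp
end

section
/- Let A be a finite set of integers with |A|² = pqr·L for distinct primes p, q, r, and set N = pqr. Define α_m = A_m/φ(N/m) where A_m = #{(a,a') ∈ A×A : gcd(a-a', N) = m}. If the cyclotomic polynomials Φ_p, Φ_q, Φ_r divide A(x), then (q-1)(r-1)α_p + (r-1)α_{pq} + (q-1)α_{pr} + α_{pqr} = qrL, and the two analogous identities obtained by permuting p, q, r hold. -/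
open Finset


lemma geom_root (p : ℕ) (z : ℂ) (hz : z ^ p = 1) :
    ∑ k ∈ range p, z ^ k = if z = 1 then (p : ℂ) else 0 := by
  split_ifs with h
  · subst h; simp
  · rw [geom_sum_eq h, hz]; simp

lemma myFourier (p : ℕ) (hp : p.Prime) (A : Finset ℤ)
    (hΦ : ∀ ξ : ℂ, IsPrimitiveRoot ξ p → ∑ a ∈ A, ξ ^ a = 0) :
    p * ((A ×ˢ A).filter (fun x => (p : ℤ) ∣ x.1 - x.2)).card = A.card ^ 2 := by
  have hp0 : p ≠ 0 := hp.ne_zero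
  set ω : ℂ := Complex.exp (2 * Real.pi * Complex.I / p) with hωdef
  have hω : IsPrimitiveRoot ω p := Complex.isPrimitiveRoot_exp p hp0
  have hne : ω ≠ 0 := by
    intro h
    have := hω.pow_eq_one
    rw [h] at this
    simp [hp0] at this
  have inner : ∀ d : ℤ, ∑ k ∈ range p, ω ^ ((k : ℤ) * d)
      = if (p : ℤ) ∣ d then (p : ℂ) else 0 := by
    intro d
    have h1 : ∀ k ∈ range p, ω ^ ((k : ℤ) * d) = (ω ^ d) ^ k := by
      intro k _
      rw [mul_comm, zpow_mul, zpow_natCast]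
    rw [Finset.sum_congr rfl h1, geom_root p _ ?_,
      if_congr (hω.zpow_eq_one_iff_dvd d) rfl rfl]
    rw [← zpow_natCast (ω ^ d) p, ← zpow_mul, mul_comm, zpow_mul, zpow_natCast,
      hω.pow_eq_one, one_zpow]
  have lhs : ∑ x ∈ A ×ˢ A, ∑ k ∈ range p, ω ^ ((k : ℤ) * (x.1 - x.2))
      = (p : ℂ) * ((A ×ˢ A).filter (fun x => (p : ℤ) ∣ x.1 - x.2)).card := by
    rw [Finset.sum_congr rfl (fun x _ => inner (x.1 - x.2)), Finset.sum_ite,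
      Finset.sum_const, Finset.sum_const_zero, add_zero, nsmul_eq_mul, mul_comm]
  have rhs : ∑ x ∈ A ×ˢ A, ∑ k ∈ range p, ω ^ ((k : ℤ) * (x.1 - x.2))
      = (A.card : ℂ) ^ 2 := by
    rw [Finset.sum_comm]
    have step : ∀ k ∈ range p, ∑ x ∈ A ×ˢ A, ω ^ ((k : ℤ) * (x.1 - x.2))
        = (∑ a ∈ A, (ω ^ k) ^ a) * (∑ a ∈ A, ((ω ^ k)⁻¹) ^ a) := by
      intro k _
      rw [Finset.sum_mul_sum, Finset.sum_product]
      refine Finset.sum_congr rfl fun a _ => Finset.sum_congr rfl fun b _ => ?_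
      rw [mul_sub, zpow_sub₀ hne, zpow_mul, zpow_mul, zpow_natCast,
        div_eq_mul_inv, ← inv_zpow]
    rw [Finset.sum_congr rfl step]
    rw [Finset.sum_eq_single_of_mem 0 (Finset.mem_range.mpr hp.pos)]
    · simp [sq]
    · intro k hk hk0
      have hkp : k < p := Finset.mem_range.mp hk
      have hcop : Nat.Coprime k p := by
        have : ¬ p ∣ k := Nat.not_dvd_of_pos_of_lt (Nat.pos_of_ne_zero hk0) hkp
        exact (Nat.coprime_comm.mp (hp.coprime_iff_not_dvd.mpr this))
      have : IsPrimitiveRoot (ω ^ k) p := hω.pow_of_coprime k hcop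
      rw [hΦ _ this, zero_mul]
  have := lhs.symm.trans rhs
  exact_mod_cast this

lemma myClass (p q r g : ℕ) (hp : p.Prime) (hq : q.Prime) (hr : r.Prime)
    (hqr : q ≠ r) (hg : g ∣ p * q * r) (hpg : p ∣ g) :
    g = p ∨ g = p * q ∨ g = p * r ∨ g = p * q * r := by
  obtain ⟨h, rfl⟩ := hpg
  have hh : h ∣ q * r := by
    rw [mul_assoc] at hg
    exact (mul_dvd_mul_iff_left hp.pos.ne').mp hg
  by_cases hqh : q ∣ h
  · obtain ⟨h', rfl⟩ := hqh
    have : h' ∣ r := by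
      rw [mul_comm q h', mul_comm q r] at hh  -- h'*q ∣ r*q
      exact (mul_dvd_mul_iff_right hq.pos.ne').mp hh
    rcases (Nat.Prime.eq_one_or_self_of_dvd hr _ this) with h1 | h1 <;> subst h1
    · right; left; rw [mul_one]
    · right; right; right; ring
  · have hcop : h.Coprime q := Nat.coprime_comm.mp (hq.coprime_iff_not_dvd.mpr hqh)
    have : h ∣ r := hcop.dvd_of_dvd_mul_left hh
    rcases (Nat.Prime.eq_one_or_self_of_dvd hr _ this) with h1 | h1 <;> subst h1
    · left; rw [mul_one]
    · right; right; left; rfl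

lemma myCard4 {β : Type*} (s : Finset β) (f : β → ℕ) (a b c d : ℕ)
    (hab : a ≠ b) (hac : a ≠ c) (had : a ≠ d) (hbc : b ≠ c) (hbd : b ≠ d) (hcd : c ≠ d) :
    (s.filter (fun x => f x = a ∨ f x = b ∨ f x = c ∨ f x = d)).card
      = (s.filter (fun x => f x = a)).card + (s.filter (fun x => f x = b)).card
        + (s.filter (fun x => f x = c)).card + (s.filter (fun x => f x = d)).card := by
  classical
  have d3 : Disjoint (s.filter (fun x => f x = c)) (s.filter (fun x => f x = d)) := by
    rw [Finset.disjoint_left]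
    intro x hx hx'
    simp only [mem_filter] at hx hx'
    omega
  have d2 : Disjoint (s.filter (fun x => f x = b))
      (s.filter (fun x => f x = c) ∪ s.filter (fun x => f x = d)) := by
    rw [Finset.disjoint_left]
    intro x hx hx'
    simp only [mem_union, mem_filter] at hx hx'
    omega
  have d1 : Disjoint (s.filter (fun x => f x = a))
      (s.filter (fun x => f x = b) ∪ (s.filter (fun x => f x = c) ∪ s.filter (fun x => f x = d))) := by
    rw [Finset.disjoint_left]
    intro x hx hx'
    simp only [mem_union, mem_filter] at hx hx'
    omega
  rw [Finset.filter_or, Finset.filter_or, Finset.filter_or,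
    Finset.card_union_of_disjoint d1, Finset.card_union_of_disjoint d2,
    Finset.card_union_of_disjoint d3]
  ring

lemma myHelper (p q r L : ℕ) (hp : p.Prime) (hq : q.Prime) (hr : r.Prime)
    (hpq : p ≠ q) (hpr : p ≠ r) (hqr : q ≠ r)
    (A : Finset ℤ) (hL : A.card ^ 2 = p * q * r * L)
    (hΦ : ∀ ξ : ℂ, IsPrimitiveRoot ξ p → ∑ a ∈ A, ξ ^ a = 0) :
    ((q : ℝ) - 1) * ((r : ℝ) - 1) *
        ((((A ×ˢ A).filter (fun x => Int.gcd (x.1 - x.2) (p * q * r) = p)).card : ℝ) /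
          (Nat.totient (p * q * r / p)))
      + ((r : ℝ) - 1) *
        ((((A ×ˢ A).filter (fun x => Int.gcd (x.1 - x.2) (p * q * r) = p * q)).card : ℝ) /
          (Nat.totient (p * q * r / (p * q))))
      + ((q : ℝ) - 1) *
        ((((A ×ˢ A).filter (fun x => Int.gcd (x.1 - x.2) (p * q * r) = p * r)).card : ℝ) /
          (Nat.totient (p * q * r / (p * r))))
      + ((((A ×ˢ A).filter (fun x => Int.gcd (x.1 - x.2) (p * q * r) = p * q * r)).card : ℝ) /
          (Nat.totient (p * q * r / (p * q * r)))) = (q : ℝ) * r * L := by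
  classical
  have e1 : p * q * r / p = q * r := by
    rw [mul_assoc, Nat.mul_div_cancel_left _ hp.pos]
  have e2 : p * q * r / (p * q) = r := Nat.mul_div_cancel_left r (Nat.mul_pos hp.pos hq.pos)
  have e3 : p * q * r / (p * r) = q := by
    rw [show p * q * r = p * r * q by ring, Nat.mul_div_cancel_left q (Nat.mul_pos hp.pos hr.pos)]
  have e4 : p * q * r / (p * q * r) = 1 :=
    Nat.div_self (Nat.mul_pos (Nat.mul_pos hp.pos hq.pos) hr.pos)
  have tq : (Nat.totient q : ℝ) = (q : ℝ) - 1 := by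
    rw [Nat.totient_prime hq]; push_cast [Nat.cast_sub hq.one_le]; ring
  have tr : (Nat.totient r : ℝ) = (r : ℝ) - 1 := by
    rw [Nat.totient_prime hr]; push_cast [Nat.cast_sub hr.one_le]; ring
  have tqr : (Nat.totient (q * r) : ℝ) = ((q : ℝ) - 1) * ((r : ℝ) - 1) := by
    rw [Nat.totient_mul ((Nat.coprime_primes hq hr).mpr hqr)]
    push_cast [Nat.totient_prime hq, Nat.totient_prime hr,
      Nat.cast_sub hq.one_le, Nat.cast_sub hr.one_le]
    ring
  have hq1 : 1 < q := hq.one_lt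
  have hr1 : 1 < r := hr.one_lt
  have hp1 : 0 < p := hp.pos
  have lt1 : p < p * q := (Nat.lt_mul_iff_one_lt_right hp1).mpr hq1
  have lt2 : p * q < p * q * r :=
    (Nat.lt_mul_iff_one_lt_right (Nat.mul_pos hp1 hq.pos)).mpr hr1
  have lt3 : p < p * r := (Nat.lt_mul_iff_one_lt_right hp1).mpr hr1
  have lt4 : p * r < p * q * r := by
    rw [show p * q * r = p * r * q by ring]
    exact (Nat.lt_mul_iff_one_lt_right (Nat.mul_pos hp1 hr.pos)).mpr hq1
  have n1 : p ≠ p * q := Nat.ne_of_lt lt1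
  have n2 : p ≠ p * r := Nat.ne_of_lt lt3
  have n3 : p ≠ p * q * r := Nat.ne_of_lt (lt1.trans lt2)
  have n4 : p * q ≠ p * r := fun h => hqr (Nat.eq_of_mul_eq_mul_left hp1 h)
  have n5 : p * q ≠ p * q * r := Nat.ne_of_lt lt2
  have n6 : p * r ≠ p * q * r := Nat.ne_of_lt lt4
  have hB : ((A ×ˢ A).filter (fun x => (p : ℤ) ∣ x.1 - x.2)).card = q * r * L := by
    have h1 := myFourier p hp A hΦ
    rw [hL, show p * q * r * L = p * (q * r * L) by ring] at h1
    exact Nat.eq_of_mul_eq_mul_left hp1 h1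
  have hfilt : (A ×ˢ A).filter (fun x => (p : ℤ) ∣ x.1 - x.2)
      = (A ×ˢ A).filter (fun x => Int.gcd (x.1 - x.2) (p * q * r) = p
          ∨ Int.gcd (x.1 - x.2) (p * q * r) = p * q
          ∨ Int.gcd (x.1 - x.2) (p * q * r) = p * r
          ∨ Int.gcd (x.1 - x.2) (p * q * r) = p * q * r) := by
    refine Finset.filter_congr fun x _ => ?_
    constructor
    · intro hd
      refine myClass p q r _ hp hq hr hqr ?_ ?_
      · have h1 : ((Int.gcd (x.1 - x.2) ((p : ℤ) * q * r) : ℕ) : ℤ) ∣ ((p * q * r : ℕ) : ℤ) := by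
          push_cast
          exact Int.gcd_dvd_right _ _
        exact_mod_cast h1
      · have h2 : (p : ℤ) ∣ (p : ℤ) * q * r := ⟨(q : ℤ) * r, by ring⟩
        have h3 := Int.dvd_gcd hd h2
        exact_mod_cast h3
    · intro hd
      have h1 : ((Int.gcd (x.1 - x.2) ((p : ℤ) * q * r) : ℕ) : ℤ) ∣ x.1 - x.2 :=
        Int.gcd_dvd_left _ _
      have h2 : (p : ℤ) ∣ ((Int.gcd (x.1 - x.2) ((p : ℤ) * q * r) : ℕ) : ℤ) := by
        rcases hd with h | h | h | h
        · rw [h]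
        · rw [h]; exact_mod_cast dvd_mul_right p q
        · rw [h]; exact_mod_cast dvd_mul_right p r
        · rw [h]; exact_mod_cast (dvd_mul_right p q).mul_right r
      exact h2.trans h1
  have hcount : (((A ×ˢ A).filter (fun x => Int.gcd (x.1 - x.2) (p * q * r) = p)).card
      + ((A ×ˢ A).filter (fun x => Int.gcd (x.1 - x.2) (p * q * r) = p * q)).card
      + ((A ×ˢ A).filter (fun x => Int.gcd (x.1 - x.2) (p * q * r) = p * r)).card
      + ((A ×ˢ A).filter (fun x => Int.gcd (x.1 - x.2) (p * q * r) = p * q * r)).card)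
      = q * r * L := by
    rw [← myCard4 (A ×ˢ A) (fun x => Int.gcd (x.1 - x.2) (p * q * r)) p (p * q) (p * r)
      (p * q * r) n1 n2 n3 n4 n5 n6, ← hfilt, hB]
  rw [e1, e2, e3, e4, tqr, tq, tr, Nat.totient_one]
  have hsum : (((A ×ˢ A).filter (fun x => Int.gcd (x.1 - x.2) (p * q * r) = p)).card : ℝ)
      + (((A ×ˢ A).filter (fun x => Int.gcd (x.1 - x.2) (p * q * r) = p * q)).card : ℝ)
      + (((A ×ˢ A).filter (fun x => Int.gcd (x.1 - x.2) (p * q * r) = p * r)).card : ℝ)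
      + (((A ×ˢ A).filter (fun x => Int.gcd (x.1 - x.2) (p * q * r) = p * q * r)).card : ℝ)
      = (q : ℝ) * r * L := by exact_mod_cast hcount
  have hq0 : (q : ℝ) - 1 ≠ 0 := by
    have : (1 : ℝ) < q := by exact_mod_cast hq1
    linarith
  have hr0 : (r : ℝ) - 1 ≠ 0 := by
    have : (1 : ℝ) < r := by exact_mod_cast hr1
    linarith
  field_simp
  push_cast; linarith [hsum]

theorem stmt_10 (p q r L : ℕ) (hp : p.Prime) (hq : q.Prime) (hr : r.Prime)
    (hpq : p ≠ q) (hpr : p ≠ r) (hqr : q ≠ r)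
    (A : Finset ℤ) (hL : A.card ^ 2 = p * q * r * L)
    (hΦp : ∀ ξ : ℂ, IsPrimitiveRoot ξ p → ∑ a ∈ A, ξ ^ a = 0)
    (hΦq : ∀ ξ : ℂ, IsPrimitiveRoot ξ q → ∑ a ∈ A, ξ ^ a = 0)
    (hΦr : ∀ ξ : ℂ, IsPrimitiveRoot ξ r → ∑ a ∈ A, ξ ^ a = 0) :
    (let α : ℕ → ℝ := fun m =>
      (((A ×ˢ A).filter (fun x => Int.gcd (x.1 - x.2) (p * q * r) = m)).card : ℝ) /
        (Nat.totient (p * q * r / m));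
    ((q : ℝ) - 1) * ((r : ℝ) - 1) * α p + ((r : ℝ) - 1) * α (p * q) +
        ((q : ℝ) - 1) * α (p * r) + α (p * q * r) = (q : ℝ) * r * L ∧
      ((p : ℝ) - 1) * ((r : ℝ) - 1) * α q + ((r : ℝ) - 1) * α (p * q) +
        ((p : ℝ) - 1) * α (q * r) + α (p * q * r) = (p : ℝ) * r * L ∧
      ((p : ℝ) - 1) * ((q : ℝ) - 1) * α r + ((q : ℝ) - 1) * α (p * r) +
        ((p : ℝ) - 1) * α (q * r) + α (p * q * r) = (p : ℝ) * q * L) := by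
  have H1 := myHelper p q r L hp hq hr hpq hpr hqr A hL hΦp
  have H2 := myHelper q p r L hq hp hr hpq.symm hqr hpr A (by rw [hL]; ring) hΦq
  have H3 := myHelper r p q L hr hp hq hpr.symm hqr.symm hpq A (by rw [hL]; ring) hΦr
  simp only [show q * p = p * q from mul_comm q p,
    show (q : ℤ) * p = (p : ℤ) * q from mul_comm _ _] at H2
  simp only [show r * p = p * r from mul_comm r p,
    show r * q = q * r from mul_comm r q,
    show p * r * q = p * q * r from by ring,
    show (r : ℤ) * p = (p : ℤ) * r from mul_comm _ _,
    show (p : ℤ) * r * q = (p : ℤ) * q * r from by ring] at H3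
  exact ⟨H1, H2, H3⟩
end

section
/- Let A be a finite set of integers with |A|² = pqr·L for distinct primes p, q, r, N = pqr, and α_m = A_m/φ(N/m) with A_m = #{(a,a') ∈ A×A : gcd(a-a', N) = m}. If Φ_p, Φ_q, Φ_r, Φ_{pr} all divide A(x), then (q-1)α_{pr} + α_{pqr} = qL, (q-1)α_r + α_{qr} = qL, (q-1)α_p + α_{pq} = qL, and (q-1)α_1 + α_q = qL. -/
open Finset

lemma key_count (A : Finset ℤ) {d : ℕ} (hd : 0 < d) {ω : ℂ} (hω : IsPrimitiveRoot ω d)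
    (hv : ∀ k : ℕ, 0 < k → k < d → ∑ a ∈ A, (ω ^ k) ^ a = 0) :
    A.card ^ 2 = d * ((A ×ˢ A).filter (fun x => (d : ℤ) ∣ x.1 - x.2)).card := by
  classical
  have hω0 : ω ≠ 0 := by
    intro h
    have h1 := hω.pow_eq_one
    rw [h, zero_pow hd.ne'] at h1
    exact zero_ne_one h1
  set f : ℕ → ℂ := fun k => ∑ a ∈ A, ω ^ ((k : ℤ) * a) with hf
  have hgeom : ∀ m : ℤ, ∑ k ∈ Finset.range d, (ω ^ m) ^ k
      = if (d:ℤ) ∣ m then (d:ℂ) else 0 := by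
    intro m
    by_cases hdm : (d:ℤ) ∣ m
    · rw [if_pos hdm, (hω.zpow_eq_one_iff_dvd m).mpr hdm]
      simp
    · rw [if_neg hdm]
      have h1 : ω ^ m ≠ 1 := fun h => hdm ((hω.zpow_eq_one_iff_dvd m).mp h)
      have h2 : (ω ^ m) ^ d = 1 := by
        rw [← zpow_natCast (ω ^ m) d, ← zpow_mul, mul_comm, zpow_mul, zpow_natCast,
          hω.pow_eq_one, one_zpow]
      rw [geom_sum_eq h1, h2, sub_self, zero_div]
  have hmain : ∑ k ∈ Finset.range d, f k * (starRingEnd ℂ) (f k)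
      = (d : ℂ) * ((A ×ˢ A).filter (fun x => (d : ℤ) ∣ x.1 - x.2)).card := by
    have habs : ‖ω‖ = 1 := Complex.norm_eq_one_of_pow_eq_one hω.pow_eq_one hd.ne'
    have hconj : (starRingEnd ℂ) ω = ω⁻¹ := (Complex.inv_eq_conj habs).symm
    have h1 : ∀ k ∈ Finset.range d, f k * (starRingEnd ℂ) (f k)
        = ∑ x ∈ A ×ˢ A, (ω ^ (x.1 - x.2)) ^ k := by
      intro k _
      rw [hf]
      simp only
      rw [map_sum, Finset.sum_mul_sum, Finset.sum_product]
      refine Finset.sum_congr rfl fun a _ => Finset.sum_congr rfl fun b _ => ?_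
      rw [map_zpow₀, hconj, inv_zpow, ← zpow_neg, ← zpow_add₀ hω0,
        ← zpow_natCast (ω ^ (a - b)) k, ← zpow_mul]
      congr 1
      ring
    calc ∑ k ∈ Finset.range d, f k * (starRingEnd ℂ) (f k)
        = ∑ k ∈ Finset.range d, ∑ x ∈ A ×ˢ A, (ω ^ (x.1 - x.2)) ^ k :=
          Finset.sum_congr rfl h1
      _ = ∑ x ∈ A ×ˢ A, ∑ k ∈ Finset.range d, (ω ^ (x.1 - x.2)) ^ k := Finset.sum_comm
      _ = ∑ x ∈ A ×ˢ A, if (d:ℤ) ∣ x.1 - x.2 then (d:ℂ) else 0 :=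
          Finset.sum_congr rfl fun x _ => hgeom _
      _ = _ := by
          rw [Finset.sum_ite, Finset.sum_const, Finset.sum_const_zero, add_zero,
            nsmul_eq_mul, mul_comm]
  have hzero : ∀ k ∈ Finset.range d, k ≠ 0 → f k * (starRingEnd ℂ) (f k) = 0 := by
    intro k hk hk0
    have h2 : f k = 0 := by
      rw [hf]
      simp only
      rw [← hv k (Nat.pos_of_ne_zero hk0) (Finset.mem_range.mp hk)]
      refine Finset.sum_congr rfl fun a _ => ?_
      rw [← zpow_natCast ω k, ← zpow_mul]
    rw [h2, zero_mul]
  have h0 : f 0 = (A.card : ℂ) := by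
    rw [hf]
    simp
  rw [Finset.sum_eq_single 0 hzero (fun h => absurd (Finset.mem_range.mpr hd) h), h0,
    map_natCast] at hmain
  have hfin : ((A.card ^ 2 : ℕ) : ℂ)
      = ((d * ((A ×ˢ A).filter (fun x => (d : ℤ) ∣ x.1 - x.2)).card : ℕ) : ℂ) := by
    push_cast
    rw [sq]
    exact hmain
  exact_mod_cast hfin

lemma dvd2 {a b : ℕ} (ha : a.Prime) (hb : b.Prime) {t : ℕ} (ht : t ∣ a * b) :
    t = 1 ∨ t = a ∨ t = b ∨ t = a * b := by
  have h1 : t ∈ (a * b).divisors :=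
    Nat.mem_divisors.mpr ⟨ht, Nat.mul_ne_zero ha.pos.ne' hb.pos.ne'⟩
  rw [Nat.divisors_mul, ha.divisors, hb.divisors] at h1
  simp only [Finset.mem_mul, Finset.mem_insert, Finset.mem_singleton] at h1
  obtain ⟨x, hx, y, hy, hxy⟩ := h1
  rcases hx with rfl | rfl <;> rcases hy with rfl | rfl <;> simp_all

lemma dvd3 {a b c : ℕ} (ha : a.Prime) (hb : b.Prime) (hc : c.Prime) {t : ℕ} (ht : t ∣ a * b * c) :
    t = 1 ∨ t = a ∨ t = b ∨ t = c ∨ t = a * b ∨ t = a * c ∨ t = b * c ∨ t = a * b * c := by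
  have h1 : t ∈ (a * b * c).divisors :=
    Nat.mem_divisors.mpr ⟨ht, Nat.mul_ne_zero (Nat.mul_ne_zero ha.pos.ne' hb.pos.ne') hc.pos.ne'⟩
  rw [Nat.divisors_mul, Nat.divisors_mul, ha.divisors, hb.divisors, hc.divisors] at h1
  simp only [Finset.mem_mul, Finset.mem_insert, Finset.mem_singleton] at h1
  obtain ⟨x, ⟨u, hu, v, hv, huv⟩, y, hy, hxy⟩ := h1
  subst huv
  rcases hu with rfl | rfl <;> rcases hv with rfl | rfl <;> rcases hy with rfl | rfl <;> simp_all

lemma count_split (A : Finset ℤ) {p q r : ℕ} (hp : p.Prime) (hq : q.Prime) (hr : r.Prime)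
    (d : ℕ) (hd : d ∣ p * q * r) :
    ((A ×ˢ A).filter (fun x => (d : ℤ) ∣ x.1 - x.2)).card
      = ∑ m ∈ ({1, p, q, r, p*q, p*r, q*r, p*q*r} : Finset ℕ),
          if d ∣ m then ((A ×ˢ A).filter (fun x => Int.gcd (x.1 - x.2) (p * q * r) = m)).card
          else 0 := by
  classical
  have hgdvd : ∀ x : ℤ × ℤ, (Int.gcd (x.1 - x.2) (p * q * r) : ℕ) ∣ p * q * r := by
    intro x
    have h := @Int.gcd_dvd_right (x.1 - x.2) ((p : ℤ) * q * r)
    have h2 : ((Int.gcd (x.1 - x.2) ((p : ℤ) * q * r) : ℕ) : ℤ) ∣ ((p * q * r : ℕ) : ℤ) := by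
      push_cast
      exact h
    exact_mod_cast h2
  have hgF : ∀ x : ℤ × ℤ, (Int.gcd (x.1 - x.2) (p * q * r) : ℕ)
      ∈ ({1, p, q, r, p*q, p*r, q*r, p*q*r} : Finset ℕ) := by
    intro x
    have := dvd3 hp hq hr (hgdvd x)
    simp only [Finset.mem_insert, Finset.mem_singleton]
    tauto
  have hdvd_iff : ∀ x : ℤ × ℤ, ((d : ℤ) ∣ x.1 - x.2 ↔ d ∣ Int.gcd (x.1 - x.2) (p * q * r)) := by
    intro x
    constructor
    · intro h
      have h2 : (d : ℤ) ∣ ((p * q * r : ℕ) : ℤ) := Int.natCast_dvd_natCast.mpr hd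
      have h3 : (d : ℤ) ∣ ((Int.gcd (x.1 - x.2) ((p:ℤ) * q * r) : ℕ) : ℤ) :=
        Int.dvd_coe_gcd h (by push_cast at h2 ⊢; exact h2)
      exact_mod_cast h3
    · intro h
      exact dvd_trans (Int.natCast_dvd_natCast.mpr h) (Int.gcd_dvd_left _ _)
  rw [Finset.card_eq_sum_card_fiberwise
    (f := fun x : ℤ × ℤ => (Int.gcd (x.1 - x.2) (p * q * r) : ℕ))
    (t := ({1, p, q, r, p*q, p*r, q*r, p*q*r} : Finset ℕ)) (fun x _ => hgF x)]
  refine Finset.sum_congr rfl fun m hm => ?_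
  rw [Finset.filter_filter]
  by_cases hdm : d ∣ m
  · rw [if_pos hdm]
    congr 1
    refine Finset.filter_congr fun x hx => ?_
    constructor
    · exact fun h => h.2
    · exact fun h => ⟨(hdvd_iff x).mpr (h ▸ hdm), h⟩
  · rw [if_neg hdm]
    rw [Finset.card_eq_zero]
    refine Finset.filter_eq_empty_iff.mpr fun x hx h => ?_
    exact hdm (h.2 ▸ (hdvd_iff x).mp h.1)

set_option maxHeartbeats 1000000 in
theorem stmt_11 (p q r L : ℕ) (hp : p.Prime) (hq : q.Prime) (hr : r.Prime)
    (hpq : p ≠ q) (hpr : p ≠ r) (hqr : q ≠ r)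
    (A : Finset ℤ) (hL : A.card ^ 2 = p * q * r * L)
    (hΦp : ∀ ξ : ℂ, IsPrimitiveRoot ξ p → ∑ a ∈ A, ξ ^ a = 0)
    (hΦq : ∀ ξ : ℂ, IsPrimitiveRoot ξ q → ∑ a ∈ A, ξ ^ a = 0)
    (hΦr : ∀ ξ : ℂ, IsPrimitiveRoot ξ r → ∑ a ∈ A, ξ ^ a = 0)
    (hΦpr : ∀ ξ : ℂ, IsPrimitiveRoot ξ (p * r) → ∑ a ∈ A, ξ ^ a = 0) :
    (let α : ℕ → ℝ := fun m =>
      (((A ×ˢ A).filter (fun x => Int.gcd (x.1 - x.2) (p * q * r) = m)).card : ℝ) /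
        (Nat.totient (p * q * r / m));
    ((q : ℝ) - 1) * α (p * r) + α (p * q * r) = (q : ℝ) * L ∧
      ((q : ℝ) - 1) * α r + α (q * r) = (q : ℝ) * L ∧
      ((q : ℝ) - 1) * α p + α (p * q) = (q : ℝ) * L ∧
      ((q : ℝ) - 1) * α 1 + α q = (q : ℝ) * L) := by
  classical
  intro α
  set Am : ℕ → ℕ := fun m =>
    ((A ×ˢ A).filter (fun x => Int.gcd (x.1 - x.2) (p * q * r) = m)).card with hAmdef
  have hα : ∀ m, α m = (Am m : ℝ) / (Nat.totient (p * q * r / m)) := fun m => rfl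
  have hp2 := hp.two_le
  have hq2 := hq.two_le
  have hr2 := hr.two_le
  -- non-divisibility between distinct primes
  have ndpq : ¬ p ∣ q := fun h => hpq ((Nat.prime_dvd_prime_iff_eq hp hq).mp h)
  have ndpr : ¬ p ∣ r := fun h => hpr ((Nat.prime_dvd_prime_iff_eq hp hr).mp h)
  have ndqp : ¬ q ∣ p := fun h => hpq ((Nat.prime_dvd_prime_iff_eq hq hp).mp h).symm
  have ndqr : ¬ q ∣ r := fun h => hqr ((Nat.prime_dvd_prime_iff_eq hq hr).mp h)
  have ndrp : ¬ r ∣ p := fun h => hpr ((Nat.prime_dvd_prime_iff_eq hr hp).mp h).symm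
  have ndrq : ¬ r ∣ q := fun h => hqr ((Nat.prime_dvd_prime_iff_eq hr hq).mp h).symm
  -- size inequalities
  have hlt : ∀ a b : ℕ, 0 < a → 2 ≤ b → a < a * b := fun a b ha hb => by nlinarith
  have l1p : (1:ℕ) < p := hp.one_lt
  have l1q : (1:ℕ) < q := hq.one_lt
  have l1r : (1:ℕ) < r := hr.one_lt
  have l1pq : (1:ℕ) < p*q := lt_of_lt_of_le hp.one_lt (Nat.le_mul_of_pos_right _ hq.pos)
  have l1pr : (1:ℕ) < p*r := lt_of_lt_of_le hp.one_lt (Nat.le_mul_of_pos_right _ hr.pos)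
  have l1qr : (1:ℕ) < q*r := lt_of_lt_of_le hq.one_lt (Nat.le_mul_of_pos_right _ hr.pos)
  have l1N : (1:ℕ) < p*q*r := lt_of_lt_of_le l1pq (Nat.le_mul_of_pos_right _ hr.pos)
  have lppq : p < p*q := hlt p q hp.pos hq2
  have lppr : p < p*r := hlt p r hp.pos hr2
  have lpN : p < p*q*r := lt_of_lt_of_le lppq (Nat.le_mul_of_pos_right _ hr.pos)
  have lqpq : q < p*q := lt_of_lt_of_eq (hlt q p hq.pos hp2) (mul_comm q p)
  have lqqr : q < q*r := hlt q r hq.pos hr2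
  have lqN : q < p*q*r := lt_of_lt_of_le lqpq (Nat.le_mul_of_pos_right _ hr.pos)
  have lrpr : r < p*r := lt_of_lt_of_eq (hlt r p hr.pos hp2) (mul_comm r p)
  have lrqr : r < q*r := lt_of_lt_of_eq (hlt r q hr.pos hq2) (mul_comm r q)
  have lrN : r < p*q*r := lt_of_lt_of_eq (hlt r (p*q) hr.pos l1pq) (mul_comm r (p*q))
  have lpqN : p*q < p*q*r := hlt (p*q) r (by positivity) hr2
  have lprN : p*r < p*q*r := lt_of_lt_of_eq (hlt (p*r) q (by positivity) hq2)
    (by ring)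
  have lqrN : q*r < p*q*r := lt_of_lt_of_eq (hlt (q*r) p (by positivity) hp2)
    (by ring)
  -- cross ne facts
  have cpqr : p ≠ q*r := fun h => hpq ((Nat.prime_dvd_prime_iff_eq hq hp).mp ⟨r, h⟩).symm
  have cqpr : q ≠ p*r := fun h => hpq ((Nat.prime_dvd_prime_iff_eq hp hq).mp ⟨r, h⟩)
  have crpq : r ≠ p*q := fun h => hpr ((Nat.prime_dvd_prime_iff_eq hp hr).mp ⟨q, h⟩)
  have cpqpr : p*q ≠ p*r := fun h => hqr (Nat.eq_of_mul_eq_mul_left hp.pos h)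
  have cpqqr : p*q ≠ q*r := fun h => hpr (Nat.eq_of_mul_eq_mul_left hq.pos (by rw [mul_comm q p]; exact h))
  have cprqr : p*r ≠ q*r := fun h => hpq (Nat.eq_of_mul_eq_mul_right hr.pos h)
  -- sum over the 8-element divisor set
  have hsumF : ∀ f : ℕ → ℕ, ∑ m ∈ ({1, p, q, r, p*q, p*r, q*r, p*q*r} : Finset ℕ), f m
      = f 1 + f p + f q + f r + f (p*q) + f (p*r) + f (q*r) + f (p*q*r) := by
    intro f
    rw [Finset.sum_insert (by simp [l1p.ne, l1q.ne, l1r.ne, l1pq.ne, l1pr.ne, l1qr.ne, l1N.ne]),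
      Finset.sum_insert (by simp [hpq, hpr, lppq.ne, lppr.ne, cpqr, lpN.ne]),
      Finset.sum_insert (by simp [hqr, lqpq.ne, cqpr, lqqr.ne, lqN.ne]),
      Finset.sum_insert (by simp [crpq, lrpr.ne, lrqr.ne, lrN.ne]),
      Finset.sum_insert (by simp [cpqpr, cpqqr, lpqN.ne]),
      Finset.sum_insert (by simp [cprqr, lprN.ne]),
      Finset.sum_insert (by simp [lqrN.ne]),
      Finset.sum_singleton]
    ring
  -- divisibility facts
  have dppq : p ∣ p*q := dvd_mul_right p q
  have dppr : p ∣ p*r := dvd_mul_right p r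
  have dpN : p ∣ p*q*r := ⟨q*r, by ring⟩
  have ndp1 : ¬ p ∣ 1 := fun h => hp.ne_one (Nat.dvd_one.mp h)
  have ndpqr : ¬ p ∣ q*r := fun h => ((Nat.Prime.dvd_mul hp).mp h).elim ndpq ndpr
  have drr : r ∣ r := dvd_rfl
  have drpr : r ∣ p*r := dvd_mul_left r p
  have drqr : r ∣ q*r := dvd_mul_left r q
  have drN : r ∣ p*q*r := ⟨p*q, by ring⟩
  have ndr1 : ¬ r ∣ 1 := fun h => hr.ne_one (Nat.dvd_one.mp h)
  have ndrpq : ¬ r ∣ p*q := fun h => ((Nat.Prime.dvd_mul hr).mp h).elim ndrp ndrq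
  have dprpr : p*r ∣ p*r := dvd_rfl
  have dprN : p*r ∣ p*q*r := ⟨q, by ring⟩
  have ndpr1 : ¬ p*r ∣ 1 := fun h => l1pr.ne' (Nat.dvd_one.mp h)
  have ndprp : ¬ p*r ∣ p := fun h => ndrp (dvd_trans drpr h)
  have ndprq : ¬ p*r ∣ q := fun h => ndrq (dvd_trans drpr h)
  have ndprr : ¬ p*r ∣ r := fun h => ndpr (dvd_trans dppr h)
  have ndprpq : ¬ p*r ∣ p*q := fun h => ndrpq (dvd_trans drpr h)
  have ndprqr : ¬ p*r ∣ q*r := fun h => ndpqr (dvd_trans dppr h)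
  -- vanishing hypotheses for prime levels
  have mk_v : ∀ (s : ℕ), s.Prime → (∀ ξ : ℂ, IsPrimitiveRoot ξ s → ∑ a ∈ A, ξ ^ a = 0) →
      ∀ (ω : ℂ), IsPrimitiveRoot ω s → ∀ k : ℕ, 0 < k → k < s → ∑ a ∈ A, (ω ^ k) ^ a = 0 := by
    intro s hs hΦ ω hω k hk0 hks
    have hcop : Nat.Coprime k s :=
      (hs.coprime_iff_not_dvd.mpr
        (fun hd => absurd (Nat.le_of_dvd hk0 hd) (not_le.mpr hks))).symm
    exact hΦ _ (hω.pow_of_coprime k hcop)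
  have hωp := Complex.isPrimitiveRoot_exp p hp.pos.ne'
  have hωr := Complex.isPrimitiveRoot_exp r hr.pos.ne'
  have hωpr := Complex.isPrimitiveRoot_exp (p*r) (by positivity)
  -- the four main ℕ equations
  have Ep : A.card ^ 2 = p * ((A ×ˢ A).filter (fun x => (p : ℤ) ∣ x.1 - x.2)).card :=
    key_count A hp.pos hωp (mk_v p hp hΦp _ hωp)
  have Er : A.card ^ 2 = r * ((A ×ˢ A).filter (fun x => (r : ℤ) ∣ x.1 - x.2)).card :=
    key_count A hr.pos hωr (mk_v r hr hΦr _ hωr)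
  have hvpr : ∀ k : ℕ, 0 < k → k < p*r →
      ∑ a ∈ A, ((Complex.exp (2 * Real.pi * Complex.I / ((p*r : ℕ) : ℂ))) ^ k) ^ a = 0 := by
    intro k hk0 hkd
    set ω := Complex.exp (2 * Real.pi * Complex.I / ((p*r : ℕ) : ℂ))
    have hord : orderOf ω = p * r := (hωpr.eq_orderOf).symm
    have hOk : orderOf (ω ^ k) = (p*r) / Nat.gcd (p*r) k := by
      rw [orderOf_pow' ω hk0.ne', hord]
    have hgd : Nat.gcd (p*r) k ∣ p*r := Nat.gcd_dvd_left _ _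
    have hsdvd : (p*r) / Nat.gcd (p*r) k ∣ p*r := Nat.div_dvd_of_dvd hgd
    have hprim : IsPrimitiveRoot (ω ^ k) ((p*r) / Nat.gcd (p*r) k) := by
      rw [← hOk]
      exact IsPrimitiveRoot.orderOf _
    have hs1 : (p*r) / Nat.gcd (p*r) k ≠ 1 := by
      intro h1
      have hg : Nat.gcd (p*r) k = p * r := by
        have h2 := Nat.div_mul_cancel hgd
        rw [h1, one_mul] at h2
        exact h2
      have hdk : p * r ∣ k := hg ▸ Nat.gcd_dvd_right (p*r) k
      exact absurd (Nat.le_of_dvd hk0 hdk) (not_le.mpr hkd)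
    rcases dvd2 hp hr hsdvd with h | h | h | h
    · exact absurd h hs1
    · exact hΦp _ (h ▸ hprim)
    · exact hΦr _ (h ▸ hprim)
    · exact hΦpr _ (h ▸ hprim)
  have Epr : A.card ^ 2 = (p*r) * ((A ×ˢ A).filter (fun x => ((p*r : ℕ) : ℤ) ∣ x.1 - x.2)).card :=
    key_count A (by positivity) hωpr hvpr
  have E1 : A.card ^ 2 = ((A ×ˢ A).filter (fun x => ((1:ℕ) : ℤ) ∣ x.1 - x.2)).card := by
    have h1 : ∀ x ∈ A ×ˢ A, ((1:ℕ) : ℤ) ∣ x.1 - x.2 := fun x _ => by simp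
    rw [Finset.filter_true_of_mem h1, Finset.card_product, sq]
  -- expand counts
  have N1 : A.card ^ 2 = (p*r) * (Am (p*r) + Am (p*q*r)) := by
    rw [Epr, count_split A hp hq hr (p*r) dprN, hsumF]
    simp only [hAmdef]
    rw [if_neg ndpr1, if_neg ndprp, if_neg ndprq, if_neg ndprr, if_neg ndprpq,
      if_pos dprpr, if_neg ndprqr, if_pos dprN]
    ring
  have N2 : A.card ^ 2 = r * (Am r + Am (p*r) + Am (q*r) + Am (p*q*r)) := by
    rw [Er, count_split A hp hq hr r (drN), hsumF]
    simp only [hAmdef]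
    rw [if_neg ndr1, if_neg ndrp, if_neg ndrq, if_pos drr, if_neg ndrpq,
      if_pos drpr, if_pos drqr, if_pos drN]
    ring
  have N3 : A.card ^ 2 = p * (Am p + Am (p*q) + Am (p*r) + Am (p*q*r)) := by
    rw [Ep, count_split A hp hq hr p (dpN), hsumF]
    simp only [hAmdef]
    rw [if_neg ndp1, if_pos (dvd_refl p), if_neg ndpq, if_neg ndpr, if_pos dppq,
      if_pos dppr, if_neg ndpqr, if_pos dpN]
    ring
  have N4 : A.card ^ 2 = Am 1 + Am p + Am q + Am r + Am (p*q) + Am (p*r) + Am (q*r)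
      + Am (p*q*r) := by
    rw [E1, count_split A hp hq hr 1 (one_dvd _), hsumF]
    simp only [hAmdef]
    rw [if_pos (one_dvd _), if_pos (one_dvd _), if_pos (one_dvd _), if_pos (one_dvd _),
      if_pos (one_dvd _), if_pos (one_dvd _), if_pos (one_dvd _), if_pos (one_dvd _)]
  -- real versions
  have R0 : ((A.card : ℝ)) ^ 2 = p * q * r * L := by exact_mod_cast hL
  have R1 : ((A.card : ℝ)) ^ 2 = p * r * ((Am (p*r) : ℝ) + (Am (p*q*r) : ℝ)) := by
    exact_mod_cast N1
  have R2 : ((A.card : ℝ)) ^ 2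
      = r * ((Am r : ℝ) + (Am (p*r) : ℝ) + (Am (q*r) : ℝ) + (Am (p*q*r) : ℝ)) := by
    exact_mod_cast N2
  have R3 : ((A.card : ℝ)) ^ 2
      = p * ((Am p : ℝ) + (Am (p*q) : ℝ) + (Am (p*r) : ℝ) + (Am (p*q*r) : ℝ)) := by
    exact_mod_cast N3
  have R4 : ((A.card : ℝ)) ^ 2 = (Am 1 : ℝ) + (Am p : ℝ) + (Am q : ℝ) + (Am r : ℝ)
      + (Am (p*q) : ℝ) + (Am (p*r) : ℝ) + (Am (q*r) : ℝ) + (Am (p*q*r) : ℝ) := by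
    exact_mod_cast N4
  have hPne : (p : ℝ) ≠ 0 := by positivity
  have hQne : (q : ℝ) ≠ 0 := by positivity
  have hRne : (r : ℝ) ≠ 0 := by positivity
  have hP1 : (p : ℝ) - 1 ≠ 0 := sub_ne_zero.mpr (by exact_mod_cast hp.one_lt.ne')
  have hQ1 : (q : ℝ) - 1 ≠ 0 := sub_ne_zero.mpr (by exact_mod_cast hq.one_lt.ne')
  have hR1 : (r : ℝ) - 1 ≠ 0 := sub_ne_zero.mpr (by exact_mod_cast hr.one_lt.ne')
  have T1 : (Am (p*r) : ℝ) + (Am (p*q*r) : ℝ) = q * L :=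
    mul_left_cancel₀ (mul_ne_zero hPne hRne) (by linear_combination R0 - R1)
  have T2 : (Am r : ℝ) + (Am (q*r) : ℝ) = ((p:ℝ) - 1) * (q * L) :=
    mul_left_cancel₀ hRne (by linear_combination R0 - R2 - (r : ℝ) * T1)
  have T3 : (Am p : ℝ) + (Am (p*q) : ℝ) = ((r:ℝ) - 1) * (q * L) :=
    mul_left_cancel₀ hPne (by linear_combination R0 - R3 - (p : ℝ) * T1)
  have T4 : (Am 1 : ℝ) + (Am q : ℝ) = ((p:ℝ) - 1) * (((r:ℝ) - 1) * (q * L)) := by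
    linear_combination R0 - R4 - T1 - T2 - T3
  -- division facts
  have ht_pr : p*q*r/(p*r) = q := by
    rw [show p*q*r = p*r*q by ring]
    exact Nat.mul_div_cancel_left q (by positivity)
  have ht_self : p*q*r/(p*q*r) = 1 := Nat.div_self (by positivity)
  have ht_r : p*q*r/r = p*q := by
    rw [show p*q*r = r*(p*q) by ring]
    exact Nat.mul_div_cancel_left (p*q) hr.pos
  have ht_qr : p*q*r/(q*r) = p := by
    rw [show p*q*r = q*r*p by ring]
    exact Nat.mul_div_cancel_left p (by positivity)
  have ht_p : p*q*r/p = q*r := by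
    rw [show p*q*r = p*(q*r) by ring]
    exact Nat.mul_div_cancel_left (q*r) hp.pos
  have ht_pq : p*q*r/(p*q) = r := Nat.mul_div_cancel_left r (by positivity)
  have ht_one : p*q*r/1 = p*q*r := Nat.div_one _
  have ht_q : p*q*r/q = p*r := by
    rw [show p*q*r = q*(p*r) by ring]
    exact Nat.mul_div_cancel_left (p*r) hq.pos
  -- totients
  have cop_pq : Nat.Coprime p q := (Nat.coprime_primes hp hq).mpr hpq
  have cop_pr' : Nat.Coprime p r := (Nat.coprime_primes hp hr).mpr hpr
  have cop_qr' : Nat.Coprime q r := (Nat.coprime_primes hq hr).mpr hqr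
  have tp : Nat.totient p = p - 1 := Nat.totient_prime hp
  have tq : Nat.totient q = q - 1 := Nat.totient_prime hq
  have tr : Nat.totient r = r - 1 := Nat.totient_prime hr
  have tpq : Nat.totient (p*q) = (p-1)*(q-1) := by
    rw [Nat.totient_mul cop_pq, tp, tq]
  have tpr : Nat.totient (p*r) = (p-1)*(r-1) := by
    rw [Nat.totient_mul cop_pr', tp, tr]
  have tqr : Nat.totient (q*r) = (q-1)*(r-1) := by
    rw [Nat.totient_mul cop_qr', tq, tr]
  have tN : Nat.totient (p*q*r) = (p-1)*(q-1)*(r-1) := by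
    rw [Nat.totient_mul (Nat.Coprime.mul cop_pr' cop_qr'), tpq, tr]
  have t1 : Nat.totient 1 = 1 := Nat.totient_one
  have cast_p : ((p - 1 : ℕ) : ℝ) = (p : ℝ) - 1 := by
    rw [Nat.cast_sub hp.one_le, Nat.cast_one]
  have cast_q : ((q - 1 : ℕ) : ℝ) = (q : ℝ) - 1 := by
    rw [Nat.cast_sub hq.one_le, Nat.cast_one]
  have cast_r : ((r - 1 : ℕ) : ℝ) = (r : ℝ) - 1 := by
    rw [Nat.cast_sub hr.one_le, Nat.cast_one]
  refine ⟨?_, ?_, ?_, ?_⟩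
  · rw [hα, hα, ht_pr, ht_self, tq, t1]
    push_cast [cast_q]
    field_simp
    linear_combination T1
  · rw [hα, hα, ht_r, ht_qr, tpq, tp]
    push_cast [cast_p, cast_q]
    field_simp
    linear_combination T2
  · rw [hα, hα, ht_p, ht_pq, tqr, tr]
    push_cast [cast_q, cast_r]
    field_simp
    linear_combination T3
  · rw [hα, hα, ht_one, ht_q, tN, tpr]
    push_cast [cast_p, cast_q, cast_r]
    field_simp
    linear_combination T4
end

section
/- Let p, q, r be distinct primes and B ⊂ ℤ a finite set contained in the union of the three 'coordinate axes' through 0: B ⊂ [*,0,0] ∪ [0,*,0] ∪ [0,0,*] (residues mod p, q, r respectively), with |B∩[0,0,0]| = t and with |B∩[i,0,0]| = x for all i ≠ 0 mod p, |B∩[0,j,0]| = y for all j ≠ 0 mod q, |B∩[0,0,k]| = z for all k ≠ 0 mod r. Then: Φ_{pq} divides B(x) iff t = x+y+z-zr; Φ_{qr} divides B(x) iff t = x+y+z-xp; Φ_{pr} divides B(x) iff t = x+y+z-yq; and Φ_{pqr} divides B(x) iff t = x+y+z. -/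
open Finset

lemma zpow_val_eq_s12 {n : ℕ} [NeZero n] {ζ : ℂ} (hζ : IsPrimitiveRoot ζ n) (a : ℤ) :
    ζ ^ a = ζ ^ ((a : ZMod n).val) := by
  have hne : ζ ≠ 0 := hζ.ne_zero (NeZero.ne n)
  have hv : (((a : ZMod n).val : ℤ)) = a % n := ZMod.val_intCast a
  rw [← zpow_natCast, hv]
  have : ζ ^ (a - a % n) = 1 := by
    rw [hζ.zpow_eq_one_iff_dvd]
    exact Int.dvd_self_sub_of_emod_eq rfl
  calc ζ ^ a = ζ ^ (a - a % n) * ζ ^ (a % n) := by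
        rw [← zpow_add₀ hne]; ring_nf
    _ = ζ ^ (a % n) := by rw [this, one_mul]

lemma zpow_eq_one_of_dvd {ζ : ℂ} (hne : ζ ≠ 0) {n : ℕ} (h1 : ζ ^ n = 1) {a : ℤ}
    (h : (n : ℤ) ∣ a) : ζ ^ a = 1 := by
  obtain ⟨c, rfl⟩ := h
  rw [zpow_mul, zpow_natCast, h1, one_zpow]

lemma sum_val_eq_zero {P : ℕ} [NeZero P] (hP : 1 < P) {η : ℂ} (hη : IsPrimitiveRoot η P) :
    ∑ j : ZMod P, η ^ (j.val) = 0 := by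
  have : ∑ j : ZMod P, η ^ (j.val) = ∑ i ∈ Finset.range P, η ^ i := by
    apply Finset.sum_bij' (fun (j : ZMod P) _ => j.val) (fun i _ => ((i : ℕ) : ZMod P))
    · intro j _; exact Finset.mem_range.mpr (ZMod.val_lt j)
    · intro i _; exact Finset.mem_univ _
    · intro j _
      have : ((j.val : ℕ) : ZMod P) = j := by
        rw [ZMod.natCast_val, ZMod.cast_id]
      rw [this]
    · intro i hi; exact ZMod.val_cast_of_lt (Finset.mem_range.mp hi)
    · intro j _; rfl
  rw [this]
  exact hη.geom_sum_eq_zero hP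

lemma axis_sum {P : ℕ} (hP : P.Prime) {η : ℂ} (hη : IsPrimitiveRoot η P)
    (S : Finset ℤ) (f : ℤ → ℤ) (x : ℕ)
    (hf : ∀ b ∈ S, ¬ (P : ℤ) ∣ f b)
    (hcard : ∀ j : ZMod P, j ≠ 0 → (S.filter (fun b => ((f b : ZMod P)) = j)).card = x) :
    ∑ b ∈ S, η ^ (f b) = -(x : ℂ) := by
  haveI : Fact P.Prime := ⟨hP⟩
  have h1 : 1 < P := hP.one_lt
  rw [show (∑ b ∈ S, η ^ (f b)) = ∑ b ∈ S, η ^ (((f b : ZMod P)).val) from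
    Finset.sum_congr rfl fun b _ => zpow_val_eq_s12 hη (f b)]
  rw [← Finset.sum_fiberwise S (fun b => ((f b : ZMod P))) (fun b => η ^ (((f b : ZMod P)).val))]
  have hfib : ∀ j : ZMod P,
      (∑ b ∈ S.filter (fun b => ((f b : ZMod P)) = j), η ^ (((f b : ZMod P)).val))
      = if j = 0 then 0 else (x : ℂ) * η ^ j.val := by
    intro j
    by_cases hj : j = 0
    · rw [if_pos hj]
      have hempty : S.filter (fun b => ((f b : ZMod P)) = j) = ∅ := by
        rw [Finset.filter_eq_empty_iff]
        intro b hb hbj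
        rw [hj] at hbj
        exact hf b hb ((ZMod.intCast_zmod_eq_zero_iff_dvd _ _).mp hbj)
      rw [hempty, Finset.sum_empty]
    · rw [if_neg hj]
      calc (∑ b ∈ S.filter (fun b => ((f b : ZMod P)) = j), η ^ (((f b : ZMod P)).val))
          = ∑ _b ∈ S.filter (fun b => ((f b : ZMod P)) = j), η ^ j.val :=
            Finset.sum_congr rfl (fun b hb => by rw [(Finset.mem_filter.mp hb).2])
        _ = (x : ℂ) * η ^ j.val := by rw [Finset.sum_const, hcard j hj, nsmul_eq_mul]
  rw [Finset.sum_congr rfl (fun j _ => hfib j)]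
  have hsplit : ∀ j : ZMod P, (if j = 0 then 0 else (x : ℂ) * η ^ j.val)
      = (x : ℂ) * η ^ j.val - (if j = 0 then (x : ℂ) else 0) := by
    intro j
    by_cases hj : j = 0
    · rw [if_pos hj, if_pos hj, hj, ZMod.val_zero, pow_zero, mul_one, sub_self]
    · rw [if_neg hj, if_neg hj, sub_zero]
  rw [Finset.sum_congr rfl (fun j _ => hsplit j), Finset.sum_sub_distrib,
    ← Finset.mul_sum, sum_val_eq_zero h1 hη, mul_zero, zero_sub]
  rw [Finset.sum_ite_eq' Finset.univ (0 : ZMod P) (fun _ => (x : ℂ))]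
  rw [if_pos (Finset.mem_univ _)]

lemma card_eq_fib {P : ℕ} (hP : P.Prime) (S : Finset ℤ) (z : ℕ)
    (hf : ∀ b ∈ S, ¬ (P : ℤ) ∣ b)
    (hcard : ∀ j : ZMod P, j ≠ 0 → (S.filter (fun b : ℤ => ((b : ZMod P)) = j)).card = z) :
    S.card = z * (P - 1) := by
  haveI : Fact P.Prime := ⟨hP⟩
  rw [Finset.card_eq_sum_card_fiberwise (f := fun b : ℤ => ((b : ZMod P)))
    (t := Finset.univ) (fun b _ => Finset.mem_univ _)]
  have hfib : ∀ j : ZMod P, (S.filter (fun b : ℤ => ((b : ZMod P)) = j)).card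
      = if ¬ j = 0 then z else 0 := by
    intro j
    by_cases hj : j = 0
    · rw [if_neg (by simpa using hj), Finset.card_eq_zero, Finset.filter_eq_empty_iff]
      intro b hb hbj
      rw [hj] at hbj
      exact hf b hb ((ZMod.intCast_zmod_eq_zero_iff_dvd _ _).mp hbj)
    · rw [if_pos hj]; exact hcard j hj
  rw [Finset.sum_congr rfl (fun j _ => hfib j), ← Finset.sum_filter,
    Finset.sum_const, Finset.filter_ne', Finset.card_erase_of_mem (Finset.mem_univ _),
    Finset.card_univ, ZMod.card, smul_eq_mul, mul_comm]

lemma modeq_not_dvd {P : ℕ} {b i : ℤ} (h : b ≡ i [ZMOD (P : ℤ)]) (hi : ¬ (P : ℤ) ∣ i) :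
    ¬ (P : ℤ) ∣ b := by
  intro hb
  exact hi (by simpa using (Int.ModEq.dvd h).add hb)

lemma sum_eq_card (S : Finset ℤ) {ζ : ℂ} (hne : ζ ≠ 0) {n : ℕ} (h1 : ζ ^ n = 1)
    (hdvd : ∀ b ∈ S, (n : ℤ) ∣ b) : ∑ b ∈ S, ζ ^ b = (S.card : ℂ) := by
  rw [Finset.sum_congr rfl (fun b hb => zpow_eq_one_of_dvd hne h1 (hdvd b hb)),
    Finset.sum_const, nsmul_eq_mul, mul_one]

lemma card_app {P : ℕ} (hP : P.Prime) (S : Finset ℤ) (z : ℕ)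
    (hnd : ∀ b ∈ S, ¬ (P : ℤ) ∣ b)
    (hcard : ∀ i : ℤ, ¬ (P : ℤ) ∣ i →
      (S.filter (fun b : ℤ => b ≡ i [ZMOD (P : ℤ)])).card = z) :
    S.card = z * (P - 1) := by
  haveI : Fact P.Prime := ⟨hP⟩
  apply card_eq_fib hP S z hnd
  intro j hj
  have hjv : (((j.val : ℤ)) : ZMod P) = j := by push_cast [ZMod.natCast_val, ZMod.cast_id]; rfl
  have hji : ¬ (P : ℤ) ∣ ((j.val : ℤ)) := by
    rw [← ZMod.intCast_zmod_eq_zero_iff_dvd, hjv]; exact hj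
  rw [show S.filter (fun b : ℤ => ((b : ZMod P)) = j)
      = S.filter (fun b : ℤ => b ≡ ((j.val : ℤ)) [ZMOD (P : ℤ)]) from
    Finset.filter_congr (fun b _ => by rw [← ZMod.intCast_eq_intCast_iff, hjv])]
  exact hcard _ hji

lemma axis_sum_app {P d : ℕ} (hP : P.Prime) (hd : d ≠ 0) (hPd : ¬ (P : ℤ) ∣ (d : ℤ))
    {ξ : ℂ} (hξ : IsPrimitiveRoot ξ (d * P))
    (S : Finset ℤ) (x : ℕ)
    (hdvd : ∀ b ∈ S, (d : ℤ) ∣ b)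
    (hnd : ∀ b ∈ S, ¬ (P : ℤ) ∣ b)
    (hcard : ∀ i : ℤ, ¬ (P : ℤ) ∣ i →
      (S.filter (fun b : ℤ => b ≡ i [ZMOD (P : ℤ)])).card = x) :
    ∑ b ∈ S, ξ ^ b = -(x : ℂ) := by
  haveI : Fact P.Prime := ⟨hP⟩
  have hη : IsPrimitiveRoot (ξ ^ d) P :=
    hξ.pow (Nat.mul_pos (Nat.pos_of_ne_zero hd) hP.pos) rfl
  have hd0 : ((d : ℤ) : ZMod P) ≠ 0 := by
    rw [Ne, ZMod.intCast_zmod_eq_zero_iff_dvd]; exact hPd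
  have key : ∀ b ∈ S, ξ ^ b = (ξ ^ d) ^ (b / (d : ℤ)) := by
    intro b hb
    conv_lhs => rw [← Int.mul_ediv_cancel' (hdvd b hb)]
    rw [zpow_mul, zpow_natCast]
  rw [Finset.sum_congr rfl key]
  apply axis_sum hP hη S (fun b => b / (d : ℤ)) x
  · intro b hb hPb
    exact hnd b hb (by
      have := mul_dvd_mul_left (d : ℤ) hPb
      rw [Int.mul_ediv_cancel' (hdvd b hb)] at this
      exact dvd_trans (Dvd.intro_left _ rfl) this)
  · intro j hj
    have hjv2 : ((j.val : ℕ) : ZMod P) = j := by rw [ZMod.natCast_val, ZMod.cast_id]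
    have hi : ¬ (P : ℤ) ∣ ((d : ℤ) * (j.val : ℤ)) := by
      rw [← ZMod.intCast_zmod_eq_zero_iff_dvd]
      push_cast
      rw [hjv2]
      refine mul_ne_zero ?_ hj
      intro h
      exact hd0 (by push_cast; exact h)
    have hfe : S.filter (fun b : ℤ => (((b / (d : ℤ)) : ℤ) : ZMod P) = j)
        = S.filter (fun b : ℤ => b ≡ (d : ℤ) * (j.val : ℤ) [ZMOD (P : ℤ)]) := by
      apply Finset.filter_congr
      intro b hb
      have hb' : (d : ℤ) * (b / (d : ℤ)) = b := Int.mul_ediv_cancel' (hdvd b hb)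
      have hbc : ((b : ZMod P)) = ((d : ℤ) : ZMod P) * (((b / (d : ℤ)) : ℤ) : ZMod P) := by
        conv_lhs => rw [← hb']
        push_cast
        ring
      have hic : ((((d : ℤ) * (j.val : ℤ) : ℤ)) : ZMod P) = ((d : ℤ) : ZMod P) * j := by
        push_cast
        rw [hjv2]
      rw [show (b ≡ (d : ℤ) * (j.val : ℤ) [ZMOD (P : ℤ)]) ↔
          ((b : ZMod P) = (((d : ℤ) * (j.val : ℤ) : ℤ) : ZMod P)) from
        (ZMod.intCast_eq_intCast_iff _ _ _).symm]
      rw [hbc, hic]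
      constructor
      · intro h; rw [h]
      · intro h; exact mul_left_cancel₀ hd0 h
    rw [hfe]
    exact hcard _ hi

theorem stmt_12 (p q r : ℕ) (hp : p.Prime) (hq : q.Prime) (hr : r.Prime)
    (hpq : p ≠ q) (hpr : p ≠ r) (hqr : q ≠ r)
    (B : Finset ℤ) (t x y z : ℕ)
    (haxes : ∀ b ∈ B,
      ((q : ℤ) ∣ b ∧ (r : ℤ) ∣ b) ∨ ((p : ℤ) ∣ b ∧ (r : ℤ) ∣ b) ∨ ((p : ℤ) ∣ b ∧ (q : ℤ) ∣ b))
    (ht : (B.filter (fun b => (p : ℤ) ∣ b ∧ (q : ℤ) ∣ b ∧ (r : ℤ) ∣ b)).card = t)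
    (hx : ∀ i : ℤ, ¬ (p : ℤ) ∣ i →
      (B.filter (fun b => b ≡ i [ZMOD (p : ℤ)] ∧ (q : ℤ) ∣ b ∧ (r : ℤ) ∣ b)).card = x)
    (hy : ∀ j : ℤ, ¬ (q : ℤ) ∣ j →
      (B.filter (fun b => (p : ℤ) ∣ b ∧ b ≡ j [ZMOD (q : ℤ)] ∧ (r : ℤ) ∣ b)).card = y)
    (hz : ∀ k : ℤ, ¬ (r : ℤ) ∣ k →
      (B.filter (fun b => (p : ℤ) ∣ b ∧ (q : ℤ) ∣ b ∧ b ≡ k [ZMOD (r : ℤ)])).card = z) :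
    ((∀ ξ : ℂ, IsPrimitiveRoot ξ (p * q) → ∑ b ∈ B, ξ ^ b = 0) ↔
        (t : ℤ) = x + y + z - z * r) ∧
      ((∀ ξ : ℂ, IsPrimitiveRoot ξ (q * r) → ∑ b ∈ B, ξ ^ b = 0) ↔
        (t : ℤ) = x + y + z - x * p) ∧
      ((∀ ξ : ℂ, IsPrimitiveRoot ξ (p * r) → ∑ b ∈ B, ξ ^ b = 0) ↔
        (t : ℤ) = x + y + z - y * q) ∧
      ((∀ ξ : ℂ, IsPrimitiveRoot ξ (p * q * r) → ∑ b ∈ B, ξ ^ b = 0) ↔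
        (t : ℤ) = x + y + z) := by
  classical
  -- non-divisibilities among the primes
  have hdd : ∀ {a b : ℕ}, a.Prime → b.Prime → a ≠ b → ¬ (a : ℤ) ∣ (b : ℤ) := by
    intro a b ha hb hab h
    rw [Int.natCast_dvd_natCast] at h
    exact hab ((Nat.prime_dvd_prime_iff_eq ha hb).mp h)
  have hpq' := hdd hp hq hpq
  have hqp' := hdd hq hp (Ne.symm hpq)
  have hpr' := hdd hp hr hpr
  have hrp' := hdd hr hp (Ne.symm hpr)
  have hqr' := hdd hq hr hqr
  have hrq' := hdd hr hq (Ne.symm hqr)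
  have cpq : IsCoprime (p : ℤ) (q : ℤ) :=
    Nat.isCoprime_iff_coprime.mpr ((Nat.coprime_primes hp hq).mpr hpq)
  have cpr : IsCoprime (p : ℤ) (r : ℤ) :=
    Nat.isCoprime_iff_coprime.mpr ((Nat.coprime_primes hp hr).mpr hpr)
  have cqr : IsCoprime (q : ℤ) (r : ℤ) :=
    Nat.isCoprime_iff_coprime.mpr ((Nat.coprime_primes hq hr).mpr hqr)
  have hndm : ∀ {a b c : ℕ}, a.Prime → ¬ (a : ℤ) ∣ (b : ℤ) → ¬ (a : ℤ) ∣ (c : ℤ) →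
      ¬ (a : ℤ) ∣ ((b * c : ℕ) : ℤ) := by
    intro a b c ha hb hc h
    push_cast at h
    rcases Int.Prime.dvd_mul' ha h with h' | h'
    · exact hb h'
    · exact hc h'
  set T := B.filter (fun b => (p : ℤ) ∣ b ∧ (q : ℤ) ∣ b ∧ (r : ℤ) ∣ b) with hTdef
  set X := B.filter (fun b => ¬ (p : ℤ) ∣ b ∧ (q : ℤ) ∣ b ∧ (r : ℤ) ∣ b) with hXdef
  set Y := B.filter (fun b => (p : ℤ) ∣ b ∧ ¬ (q : ℤ) ∣ b ∧ (r : ℤ) ∣ b) with hYdef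
  set Z := B.filter (fun b => (p : ℤ) ∣ b ∧ (q : ℤ) ∣ b ∧ ¬ (r : ℤ) ∣ b) with hZdef
  have hTmem : ∀ b ∈ T, (p : ℤ) ∣ b ∧ (q : ℤ) ∣ b ∧ (r : ℤ) ∣ b :=
    fun b hb => (Finset.mem_filter.mp hb).2
  have hXmem : ∀ b ∈ X, ¬ (p : ℤ) ∣ b ∧ (q : ℤ) ∣ b ∧ (r : ℤ) ∣ b :=
    fun b hb => (Finset.mem_filter.mp hb).2
  have hYmem : ∀ b ∈ Y, (p : ℤ) ∣ b ∧ ¬ (q : ℤ) ∣ b ∧ (r : ℤ) ∣ b :=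
    fun b hb => (Finset.mem_filter.mp hb).2
  have hZmem : ∀ b ∈ Z, (p : ℤ) ∣ b ∧ (q : ℤ) ∣ b ∧ ¬ (r : ℤ) ∣ b :=
    fun b hb => (Finset.mem_filter.mp hb).2
  -- the partition of the sum
  have hsplit : ∀ F : ℤ → ℂ, ∑ b ∈ B, F b =
      ∑ b ∈ T, F b + ∑ b ∈ X, F b + ∑ b ∈ Y, F b + ∑ b ∈ Z, F b := by
    intro F
    have eX : B.filter (fun b => ¬ (p : ℤ) ∣ b) = X := by
      rw [hXdef]; ext b
      simp only [Finset.mem_filter]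
      constructor
      · rintro ⟨hb, hnp⟩
        refine ⟨hb, hnp, ?_⟩
        rcases haxes b hb with h | h | h
        · exact h
        · exact absurd h.1 hnp
        · exact absurd h.1 hnp
      · rintro ⟨hb, hnp, _⟩; exact ⟨hb, hnp⟩
    have eY : (B.filter (fun b => (p : ℤ) ∣ b)).filter (fun b => ¬ (q : ℤ) ∣ b) = Y := by
      rw [Finset.filter_filter, hYdef]; ext b
      simp only [Finset.mem_filter]
      constructor
      · rintro ⟨hb, hp', hnq⟩
        refine ⟨hb, hp', hnq, ?_⟩
        rcases haxes b hb with h | h | h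
        · exact absurd h.1 hnq
        · exact h.2
        · exact absurd h.2 hnq
      · rintro ⟨hb, hp', hnq, _⟩; exact ⟨hb, hp', hnq⟩
    have eT : ((B.filter (fun b => (p : ℤ) ∣ b)).filter (fun b => (q : ℤ) ∣ b)).filter
        (fun b => (r : ℤ) ∣ b) = T := by
      rw [Finset.filter_filter, Finset.filter_filter, hTdef]
    have eZ : ((B.filter (fun b => (p : ℤ) ∣ b)).filter (fun b => (q : ℤ) ∣ b)).filter
        (fun b => ¬ (r : ℤ) ∣ b) = Z := by
      rw [Finset.filter_filter, Finset.filter_filter, hZdef]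
    rw [← Finset.sum_filter_add_sum_filter_not B (fun b => (p : ℤ) ∣ b) F, eX,
      ← Finset.sum_filter_add_sum_filter_not (B.filter (fun b => (p : ℤ) ∣ b))
        (fun b => (q : ℤ) ∣ b) F, eY,
      ← Finset.sum_filter_add_sum_filter_not ((B.filter (fun b => (p : ℤ) ∣ b)).filter
        (fun b => (q : ℤ) ∣ b)) (fun b => (r : ℤ) ∣ b) F, eT, eZ]
    ring
  -- fiber counts over the three pure axes
  have hXc : ∀ i : ℤ, ¬ (p : ℤ) ∣ i →
      (X.filter (fun b : ℤ => b ≡ i [ZMOD (p : ℤ)])).card = x := by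
    intro i hi
    rw [hXdef, Finset.filter_filter,
      show B.filter (fun b => (¬ (p : ℤ) ∣ b ∧ (q : ℤ) ∣ b ∧ (r : ℤ) ∣ b) ∧
          b ≡ i [ZMOD (p : ℤ)])
        = B.filter (fun b => b ≡ i [ZMOD (p : ℤ)] ∧ (q : ℤ) ∣ b ∧ (r : ℤ) ∣ b) from
      Finset.filter_congr (fun b _ => by
        constructor
        · rintro ⟨⟨_, h2, h3⟩, hm⟩; exact ⟨hm, h2, h3⟩
        · rintro ⟨hm, h2, h3⟩; exact ⟨⟨modeq_not_dvd hm hi, h2, h3⟩, hm⟩)]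
    exact hx i hi
  have hYc : ∀ i : ℤ, ¬ (q : ℤ) ∣ i →
      (Y.filter (fun b : ℤ => b ≡ i [ZMOD (q : ℤ)])).card = y := by
    intro i hi
    rw [hYdef, Finset.filter_filter,
      show B.filter (fun b => ((p : ℤ) ∣ b ∧ ¬ (q : ℤ) ∣ b ∧ (r : ℤ) ∣ b) ∧
          b ≡ i [ZMOD (q : ℤ)])
        = B.filter (fun b => (p : ℤ) ∣ b ∧ b ≡ i [ZMOD (q : ℤ)] ∧ (r : ℤ) ∣ b) from
      Finset.filter_congr (fun b _ => by
        constructor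
        · rintro ⟨⟨h1, _, h3⟩, hm⟩; exact ⟨h1, hm, h3⟩
        · rintro ⟨h1, hm, h3⟩; exact ⟨⟨h1, modeq_not_dvd hm hi, h3⟩, hm⟩)]
    exact hy i hi
  have hZc : ∀ i : ℤ, ¬ (r : ℤ) ∣ i →
      (Z.filter (fun b : ℤ => b ≡ i [ZMOD (r : ℤ)])).card = z := by
    intro i hi
    rw [hZdef, Finset.filter_filter,
      show B.filter (fun b => ((p : ℤ) ∣ b ∧ (q : ℤ) ∣ b ∧ ¬ (r : ℤ) ∣ b) ∧
          b ≡ i [ZMOD (r : ℤ)])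
        = B.filter (fun b => (p : ℤ) ∣ b ∧ (q : ℤ) ∣ b ∧ b ≡ i [ZMOD (r : ℤ)]) from
      Finset.filter_congr (fun b _ => by
        constructor
        · rintro ⟨⟨h1, h2, _⟩, hm⟩; exact ⟨h1, h2, hm⟩
        · rintro ⟨h1, h2, hm⟩; exact ⟨⟨h1, h2, modeq_not_dvd hm hi⟩, hm⟩)]
    exact hz i hi
  refine ⟨?_, ?_, ?_, ?_⟩
  -- case pq
  · have hval : ∀ ξ : ℂ, IsPrimitiveRoot ξ (p * q) → ∑ b ∈ B, ξ ^ b =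
        (((t : ℤ) - x - y + z * ((r : ℤ) - 1) : ℤ) : ℂ) := by
      intro ξ hξ
      have hξ0 : ξ ≠ 0 := hξ.ne_zero (Nat.mul_pos hp.pos hq.pos).ne'
      have h1 : ξ ^ (p * q) = 1 := hξ.pow_eq_one
      have hT : ∑ b ∈ T, ξ ^ b = (T.card : ℂ) := by
        apply sum_eq_card T hξ0 h1
        intro b hb
        obtain ⟨h1', h2', _⟩ := hTmem b hb
        push_cast
        exact cpq.mul_dvd h1' h2'
      have hZs : ∑ b ∈ Z, ξ ^ b = (Z.card : ℂ) := by
        apply sum_eq_card Z hξ0 h1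
        intro b hb
        obtain ⟨h1', h2', _⟩ := hZmem b hb
        push_cast
        exact cpq.mul_dvd h1' h2'
      have hXs : ∑ b ∈ X, ξ ^ b = -(x : ℂ) :=
        axis_sum_app hp hq.pos.ne' hpq' (by rwa [mul_comm] at hξ) X x
          (fun b hb => (hXmem b hb).2.1) (fun b hb => (hXmem b hb).1) hXc
      have hYs : ∑ b ∈ Y, ξ ^ b = -(y : ℂ) :=
        axis_sum_app hq hp.pos.ne' hqp' hξ Y y
          (fun b hb => (hYmem b hb).1) (fun b hb => (hYmem b hb).2.1) hYc
      rw [hsplit (fun b => ξ ^ b), hT, hXs, hYs, hZs, ht,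
        card_app hr Z z (fun b hb => (hZmem b hb).2.2) hZc]
      push_cast [Nat.cast_sub hr.one_lt.le]
      ring
    have hex := Complex.isPrimitiveRoot_exp (p * q) (Nat.mul_pos hp.pos hq.pos).ne'
    constructor
    · intro h
      have h0 := h _ hex
      rw [hval _ hex] at h0
      have h1 : (t : ℤ) - x - y + z * ((r : ℤ) - 1) = 0 := by exact_mod_cast h0
      linarith
    · intro h ξ hξ
      rw [hval ξ hξ, show (t : ℤ) - x - y + z * ((r : ℤ) - 1) = 0 from by linarith,
        Int.cast_zero]
  -- case qr
  · have hval : ∀ ξ : ℂ, IsPrimitiveRoot ξ (q * r) → ∑ b ∈ B, ξ ^ b =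
        (((t : ℤ) + x * ((p : ℤ) - 1) - y - z : ℤ) : ℂ) := by
      intro ξ hξ
      have hξ0 : ξ ≠ 0 := hξ.ne_zero (Nat.mul_pos hq.pos hr.pos).ne'
      have h1 : ξ ^ (q * r) = 1 := hξ.pow_eq_one
      have hT : ∑ b ∈ T, ξ ^ b = (T.card : ℂ) := by
        apply sum_eq_card T hξ0 h1
        intro b hb
        obtain ⟨_, h2', h3'⟩ := hTmem b hb
        push_cast
        exact cqr.mul_dvd h2' h3'
      have hXs : ∑ b ∈ X, ξ ^ b = (X.card : ℂ) := by
        apply sum_eq_card X hξ0 h1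
        intro b hb
        obtain ⟨_, h2', h3'⟩ := hXmem b hb
        push_cast
        exact cqr.mul_dvd h2' h3'
      have hYs : ∑ b ∈ Y, ξ ^ b = -(y : ℂ) :=
        axis_sum_app hq hr.pos.ne' hqr' (by rwa [mul_comm] at hξ) Y y
          (fun b hb => (hYmem b hb).2.2) (fun b hb => (hYmem b hb).2.1) hYc
      have hZs : ∑ b ∈ Z, ξ ^ b = -(z : ℂ) :=
        axis_sum_app hr hq.pos.ne' hrq' hξ Z z
          (fun b hb => (hZmem b hb).2.1) (fun b hb => (hZmem b hb).2.2) hZc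
      rw [hsplit (fun b => ξ ^ b), hT, hXs, hYs, hZs, ht,
        card_app hp X x (fun b hb => (hXmem b hb).1) hXc]
      push_cast [Nat.cast_sub hp.one_lt.le]
      ring
    have hex := Complex.isPrimitiveRoot_exp (q * r) (Nat.mul_pos hq.pos hr.pos).ne'
    constructor
    · intro h
      have h0 := h _ hex
      rw [hval _ hex] at h0
      have h1 : (t : ℤ) + x * ((p : ℤ) - 1) - y - z = 0 := by exact_mod_cast h0
      linarith
    · intro h ξ hξ
      rw [hval ξ hξ, show (t : ℤ) + x * ((p : ℤ) - 1) - y - z = 0 from by linarith,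
        Int.cast_zero]
  -- case pr
  · have hval : ∀ ξ : ℂ, IsPrimitiveRoot ξ (p * r) → ∑ b ∈ B, ξ ^ b =
        (((t : ℤ) - x + y * ((q : ℤ) - 1) - z : ℤ) : ℂ) := by
      intro ξ hξ
      have hξ0 : ξ ≠ 0 := hξ.ne_zero (Nat.mul_pos hp.pos hr.pos).ne'
      have h1 : ξ ^ (p * r) = 1 := hξ.pow_eq_one
      have hT : ∑ b ∈ T, ξ ^ b = (T.card : ℂ) := by
        apply sum_eq_card T hξ0 h1
        intro b hb
        obtain ⟨h1', _, h3'⟩ := hTmem b hb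
        push_cast
        exact cpr.mul_dvd h1' h3'
      have hYs : ∑ b ∈ Y, ξ ^ b = (Y.card : ℂ) := by
        apply sum_eq_card Y hξ0 h1
        intro b hb
        obtain ⟨h1', _, h3'⟩ := hYmem b hb
        push_cast
        exact cpr.mul_dvd h1' h3'
      have hXs : ∑ b ∈ X, ξ ^ b = -(x : ℂ) :=
        axis_sum_app hp hr.pos.ne' hpr' (by rwa [mul_comm] at hξ) X x
          (fun b hb => (hXmem b hb).2.2) (fun b hb => (hXmem b hb).1) hXc
      have hZs : ∑ b ∈ Z, ξ ^ b = -(z : ℂ) :=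
        axis_sum_app hr hp.pos.ne' hrp' hξ Z z
          (fun b hb => (hZmem b hb).1) (fun b hb => (hZmem b hb).2.2) hZc
      rw [hsplit (fun b => ξ ^ b), hT, hXs, hYs, hZs, ht,
        card_app hq Y y (fun b hb => (hYmem b hb).2.1) hYc]
      push_cast [Nat.cast_sub hq.one_lt.le]
      ring
    have hex := Complex.isPrimitiveRoot_exp (p * r) (Nat.mul_pos hp.pos hr.pos).ne'
    constructor
    · intro h
      have h0 := h _ hex
      rw [hval _ hex] at h0
      have h1 : (t : ℤ) - x + y * ((q : ℤ) - 1) - z = 0 := by exact_mod_cast h0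
      linarith
    · intro h ξ hξ
      rw [hval ξ hξ, show (t : ℤ) - x + y * ((q : ℤ) - 1) - z = 0 from by linarith,
        Int.cast_zero]
  -- case pqr
  · have hval : ∀ ξ : ℂ, IsPrimitiveRoot ξ (p * q * r) → ∑ b ∈ B, ξ ^ b =
        (((t : ℤ) - x - y - z : ℤ) : ℂ) := by
      intro ξ hξ
      have hξ0 : ξ ≠ 0 :=
        hξ.ne_zero (Nat.mul_pos (Nat.mul_pos hp.pos hq.pos) hr.pos).ne'
      have h1 : ξ ^ (p * q * r) = 1 := hξ.pow_eq_one
      have hT : ∑ b ∈ T, ξ ^ b = (T.card : ℂ) := by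
        apply sum_eq_card T hξ0 h1
        intro b hb
        obtain ⟨h1', h2', h3'⟩ := hTmem b hb
        push_cast
        exact (cpr.mul_left cqr).mul_dvd (cpq.mul_dvd h1' h2') h3'
      have hXs : ∑ b ∈ X, ξ ^ b = -(x : ℂ) :=
        axis_sum_app hp (Nat.mul_pos hq.pos hr.pos).ne' (hndm hp hpq' hpr')
          (by rw [show q * r * p = p * q * r from by ring]; exact hξ) X x
          (fun b hb => by push_cast; exact cqr.mul_dvd (hXmem b hb).2.1 (hXmem b hb).2.2)
          (fun b hb => (hXmem b hb).1) hXc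
      have hYs : ∑ b ∈ Y, ξ ^ b = -(y : ℂ) :=
        axis_sum_app hq (Nat.mul_pos hp.pos hr.pos).ne' (hndm hq hqp' hqr')
          (by rw [show p * r * q = p * q * r from by ring]; exact hξ) Y y
          (fun b hb => by push_cast; exact cpr.mul_dvd (hYmem b hb).1 (hYmem b hb).2.2)
          (fun b hb => (hYmem b hb).2.1) hYc
      have hZs : ∑ b ∈ Z, ξ ^ b = -(z : ℂ) :=
        axis_sum_app hr (Nat.mul_pos hp.pos hq.pos).ne' (hndm hr hrp' hrq') hξ Z z
          (fun b hb => by push_cast; exact cpq.mul_dvd (hZmem b hb).1 (hZmem b hb).2.1)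
          (fun b hb => (hZmem b hb).2.2) hZc
      rw [hsplit (fun b => ξ ^ b), hT, hXs, hYs, hZs, ht]
      push_cast
      ring
    have hex := Complex.isPrimitiveRoot_exp (p * q * r)
      (Nat.mul_pos (Nat.mul_pos hp.pos hq.pos) hr.pos).ne'
    constructor
    · intro h
      have h0 := h _ hex
      rw [hval _ hex] at h0
      have h1 : (t : ℤ) - x - y - z = 0 := by exact_mod_cast h0
      linarith
    · intro h ξ hξ
      rw [hval ξ hξ, show (t : ℤ) - x - y - z = 0 from by linarith, Int.cast_zero]
end

section
/- Let p, q, r be distinct primes and B a finite set of integers satisfying the axis structure of the preceding lemma (B lies in the union of axes [*,0,0] ∪ [0,*,0] ∪ [0,0,*] with constant counts x, y, z > 0 on nonzero positions of each axis and t at the origin). If Φ_{pqr} divides B(x), then none of Φ_{pq}, Φ_{qr}, Φ_{pr} divides B(x). -/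
open Finset


lemma key_pow (p q r : ℕ) (hp : p.Prime) (hq : q.Prime) (hr : r.Prime)
    (hpq : p ≠ q) (hpr : p ≠ r) (hqr : q ≠ r) (ξ : ℂ) (hξ : ξ ^ (p * q * r) = 1)
    (b : ℤ) (hqb : (q : ℤ) ∣ b) (hrb : (r : ℤ) ∣ b) :
    ξ ^ b = (ξ ^ (q * r)) ^ (((b : ZMod p) * ((q : ZMod p) * (r : ZMod p))⁻¹).val) := by
  haveI := Fact.mk hp
  have hpqr0 : p * q * r ≠ 0 := Nat.mul_ne_zero (Nat.mul_ne_zero hp.pos.ne' hq.pos.ne') hr.pos.ne'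
  have hξ0 : ξ ≠ 0 := by
    intro h; rw [h, zero_pow hpqr0] at hξ; exact one_ne_zero hξ.symm
  set j : ZMod p := (b : ZMod p) * ((q : ZMod p) * (r : ZMod p))⁻¹ with hj
  have hq0 : (q : ZMod p) ≠ 0 := by
    rw [Ne, ZMod.natCast_eq_zero_iff]
    exact fun h => hpq ((Nat.prime_dvd_prime_iff_eq hp hq).mp h)
  have hr0 : (r : ZMod p) ≠ 0 := by
    rw [Ne, ZMod.natCast_eq_zero_iff]
    exact fun h => hpr ((Nat.prime_dvd_prime_iff_eq hp hr).mp h)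
  have hjb : j * ((q : ZMod p) * (r : ZMod p)) = (b : ZMod p) := by
    rw [hj, mul_assoc, inv_mul_cancel₀ (mul_ne_zero hq0 hr0), mul_one]
  have h1 : (p : ℤ) ∣ ((q : ℤ) * r * j.val - b) := by
    rw [← ZMod.intCast_zmod_eq_zero_iff_dvd]
    push_cast
    rw [ZMod.natCast_val, ZMod.cast_id]
    linear_combination hjb
  have h2 : (q : ℤ) ∣ ((q : ℤ) * r * j.val - b) :=
    dvd_sub ⟨(r:ℤ)*j.val, by ring⟩ hqb
  have h3 : (r : ℤ) ∣ ((q : ℤ) * r * j.val - b) :=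
    dvd_sub ⟨(q:ℤ)*j.val, by ring⟩ hrb
  have cpq : IsCoprime (p : ℤ) (q : ℤ) :=
    Nat.isCoprime_iff_coprime.mpr ((Nat.coprime_primes hp hq).mpr hpq)
  have cpr : IsCoprime (p : ℤ) (r : ℤ) :=
    Nat.isCoprime_iff_coprime.mpr ((Nat.coprime_primes hp hr).mpr hpr)
  have cqr : IsCoprime (q : ℤ) (r : ℤ) :=
    Nat.isCoprime_iff_coprime.mpr ((Nat.coprime_primes hq hr).mpr hqr)
  have hdvd : ((p : ℤ) * q * r) ∣ ((q : ℤ) * r * j.val - b) := by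
    rw [mul_assoc]
    exact (cpq.mul_right cpr).mul_dvd h1 (cqr.mul_dvd h2 h3)
  obtain ⟨c, hc⟩ := hdvd
  have hb : b = ((q * r * j.val : ℕ) : ℤ) - ((p * q * r : ℕ) : ℤ) * c := by
    push_cast; linarith
  rw [hb, zpow_sub₀ hξ0, zpow_mul, zpow_natCast, zpow_natCast, hξ, one_zpow, div_one,
    pow_mul]


lemma zmod_val_geom_sum (P : ℕ) [NeZero P] (Ω : ℂ) :
    ∑ j : ZMod P, Ω ^ j.val = ∑ k ∈ range P, Ω ^ k := by
  refine Finset.sum_nbij' (fun j => j.val) (fun k => (k : ZMod P)) ?_ ?_ ?_ ?_ ?_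
  · intro a _; exact Finset.mem_range.mpr (ZMod.val_lt a)
  · intro a _; exact Finset.mem_univ _
  · intro a _; exact ZMod.natCast_rightInverse a
  · intro a ha; exact ZMod.val_cast_of_lt (Finset.mem_range.mp ha)
  · intro a _; rfl

lemma axis_sum_s13 (P : ℕ) (hP : 0 < P) (S : Finset ℤ) (x : ℕ) (ξ Ω : ℂ)
    (φ : ℤ → ZMod P)
    (hval : ∀ b ∈ S, ξ ^ b = Ω ^ (φ b).val)
    (hfib : ∀ j : ZMod P, j ≠ 0 → (S.filter (fun b => φ b = j)).card = x)
    (hfib0 : S.filter (fun b => φ b = 0) = ∅) :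
    ∑ b ∈ S, ξ ^ b = x * ((∑ k ∈ range P, Ω ^ k) - 1) := by
  haveI : NeZero P := ⟨hP.ne'⟩
  have h1 : ∑ b ∈ S, ξ ^ b
      = ∑ j : ZMod P, ∑ b ∈ S.filter (fun b => φ b = j), Ω ^ (φ b).val := by
    rw [Finset.sum_fiberwise S φ (fun b => Ω ^ (φ b).val)]
    exact Finset.sum_congr rfl hval
  have h2 : ∀ j : ZMod P, ∑ b ∈ S.filter (fun b => φ b = j), Ω ^ (φ b).val
      = (S.filter (fun b => φ b = j)).card * Ω ^ j.val := by
    intro j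
    rw [Finset.sum_congr rfl (fun b hb => ?_), Finset.sum_const, nsmul_eq_mul]
    rw [(Finset.mem_filter.mp hb).2]
  simp only [h2] at h1
  rw [h1, ← Finset.sum_erase_add _ _ (Finset.mem_univ (0 : ZMod P)), hfib0]
  simp only [Finset.card_empty, Nat.cast_zero, zero_mul, add_zero]
  have h3 : ∀ j ∈ Finset.univ.erase (0 : ZMod P),
      ((S.filter (fun b => φ b = j)).card : ℂ) * Ω ^ j.val = x * Ω ^ j.val := by
    intro j hj
    rw [hfib j (Finset.mem_erase.mp hj).1]
  rw [Finset.sum_congr rfl h3, ← Finset.mul_sum,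
    Finset.sum_erase_eq_sub (Finset.mem_univ (0 : ZMod P)), zmod_val_geom_sum P]
  simp

lemma axis_eval (p q r : ℕ) (hp : p.Prime) (hq : q.Prime) (hr : r.Prime)
    (hpq : p ≠ q) (hpr : p ≠ r) (hqr : q ≠ r) (B : Finset ℤ) (x : ℕ)
    (hx : ∀ i : ℤ, ¬ (p : ℤ) ∣ i →
      (B.filter (fun b => b ≡ i [ZMOD (p : ℤ)] ∧ (q : ℤ) ∣ b ∧ (r : ℤ) ∣ b)).card = x)
    (ξ : ℂ) (hξ : ξ ^ (p * q * r) = 1) :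
    ∑ b ∈ B.filter (fun b => ¬ (p : ℤ) ∣ b ∧ (q : ℤ) ∣ b ∧ (r : ℤ) ∣ b), ξ ^ b
      = x * ((∑ k ∈ range p, (ξ ^ (q * r)) ^ k) - 1) := by
  haveI := Fact.mk hp
  have hq0 : (q : ZMod p) ≠ 0 := by
    rw [Ne, ZMod.natCast_eq_zero_iff]
    exact fun h => hpq ((Nat.prime_dvd_prime_iff_eq hp hq).mp h)
  have hr0 : (r : ZMod p) ≠ 0 := by
    rw [Ne, ZMod.natCast_eq_zero_iff]
    exact fun h => hpr ((Nat.prime_dvd_prime_iff_eq hp hr).mp h)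
  have hqr0 : ((q : ZMod p) * (r : ZMod p)) ≠ 0 := mul_ne_zero hq0 hr0
  set u : ZMod p := ((q : ZMod p) * (r : ZMod p))⁻¹ with hu
  have hu0 : u ≠ 0 := inv_ne_zero hqr0
  have hiff : ∀ (b : ℤ) (j : ZMod p), ((b : ZMod p) * u = j ↔ (b : ZMod p) = (q : ZMod p) * r * j) := by
    intro b j
    constructor
    · intro h
      rw [← h, hu]; field_simp
    · intro h
      rw [h, hu]; field_simp
  apply axis_sum_s13 p hp.pos _ x ξ _ (fun b => (b : ZMod p) * u)
  · intro b hb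
    simp only [mem_filter] at hb
    exact key_pow p q r hp hq hr hpq hpr hqr ξ hξ b hb.2.2.1 hb.2.2.2
  · intro j hj
    set i : ℤ := ((q * r * j.val : ℕ) : ℤ) with hi
    have hicast : ((i : ℤ) : ZMod p) = (q : ZMod p) * r * j := by
      rw [hi]; push_cast
      rw [ZMod.natCast_val, ZMod.cast_id]
    have hpi : ¬ (p : ℤ) ∣ i := by
      rw [← ZMod.intCast_zmod_eq_zero_iff_dvd, hicast]
      exact mul_ne_zero hqr0 hj
    rw [← hx i hpi]
    congr 1
    ext b
    simp only [mem_filter]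
    constructor
    · rintro ⟨⟨hb, hnp, hqb, hrb⟩, hφ⟩
      refine ⟨hb, ?_, hqb, hrb⟩
      rw [← ZMod.intCast_eq_intCast_iff, hicast]
      exact (hiff b j).mp hφ
    · rintro ⟨hb, hmod, hqb, hrb⟩
      have hbz : (b : ZMod p) = (q : ZMod p) * r * j := by
        rw [← hicast, ZMod.intCast_eq_intCast_iff]; exact hmod
      refine ⟨⟨hb, ?_, hqb, hrb⟩, (hiff b j).mpr hbz⟩
      rw [← ZMod.intCast_zmod_eq_zero_iff_dvd, hbz]
      exact mul_ne_zero hqr0 hj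
  · rw [Finset.filter_eq_empty_iff]
    intro b hb
    simp only [mem_filter] at hb
    intro h0
    apply hb.2.1
    rw [← ZMod.intCast_zmod_eq_zero_iff_dvd]
    have := mul_eq_zero.mp h0
    tauto

lemma eval_sum (p q r : ℕ) (hp : p.Prime) (hq : q.Prime) (hr : r.Prime)
    (hpq : p ≠ q) (hpr : p ≠ r) (hqr : q ≠ r)
    (B : Finset ℤ) (t x y z : ℕ)
    (haxes : ∀ b ∈ B,
      ((q : ℤ) ∣ b ∧ (r : ℤ) ∣ b) ∨ ((p : ℤ) ∣ b ∧ (r : ℤ) ∣ b) ∨ ((p : ℤ) ∣ b ∧ (q : ℤ) ∣ b))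
    (ht : (B.filter (fun b => (p : ℤ) ∣ b ∧ (q : ℤ) ∣ b ∧ (r : ℤ) ∣ b)).card = t)
    (hx : ∀ i : ℤ, ¬ (p : ℤ) ∣ i →
      (B.filter (fun b => b ≡ i [ZMOD (p : ℤ)] ∧ (q : ℤ) ∣ b ∧ (r : ℤ) ∣ b)).card = x)
    (hy : ∀ j : ℤ, ¬ (q : ℤ) ∣ j →
      (B.filter (fun b => (p : ℤ) ∣ b ∧ b ≡ j [ZMOD (q : ℤ)] ∧ (r : ℤ) ∣ b)).card = y)
    (hz : ∀ k : ℤ, ¬ (r : ℤ) ∣ k →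
      (B.filter (fun b => (p : ℤ) ∣ b ∧ (q : ℤ) ∣ b ∧ b ≡ k [ZMOD (r : ℤ)])).card = z)
    (ξ : ℂ) (hξ : ξ ^ (p * q * r) = 1) :
    ∑ b ∈ B, ξ ^ b = t + x * ((∑ k ∈ range p, (ξ ^ (q * r)) ^ k) - 1)
      + y * ((∑ k ∈ range q, (ξ ^ (p * r)) ^ k) - 1)
      + z * ((∑ k ∈ range r, (ξ ^ (p * q)) ^ k) - 1) := by
  have hξ0 : ξ ≠ 0 := by
    intro h; rw [h, zero_pow (Nat.mul_ne_zero (Nat.mul_ne_zero hp.pos.ne' hq.pos.ne') hr.pos.ne')] at hξ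
    exact one_ne_zero hξ.symm
  -- coprimality
  have cpq : IsCoprime (p : ℤ) (q : ℤ) :=
    Nat.isCoprime_iff_coprime.mpr ((Nat.coprime_primes hp hq).mpr hpq)
  have cpr : IsCoprime (p : ℤ) (r : ℤ) :=
    Nat.isCoprime_iff_coprime.mpr ((Nat.coprime_primes hp hr).mpr hpr)
  have cqr : IsCoprime (q : ℤ) (r : ℤ) :=
    Nat.isCoprime_iff_coprime.mpr ((Nat.coprime_primes hq hr).mpr hqr)
  -- split B step by step
  rw [← Finset.sum_filter_add_sum_filter_not B (fun b => (p : ℤ) ∣ b) (fun b => ξ ^ b)]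
  -- X part
  have hXset : B.filter (fun b => ¬ (p : ℤ) ∣ b)
      = B.filter (fun b => ¬ (p : ℤ) ∣ b ∧ (q : ℤ) ∣ b ∧ (r : ℤ) ∣ b) := by
    ext b
    simp only [mem_filter]
    constructor
    · rintro ⟨hb, hnp⟩
      rcases haxes b hb with h | h | h
      · exact ⟨hb, hnp, h.1, h.2⟩
      · exact absurd h.1 hnp
      · exact absurd h.1 hnp
    · rintro ⟨hb, hnp, -⟩; exact ⟨hb, hnp⟩
  rw [hXset, axis_eval p q r hp hq hr hpq hpr hqr B x hx ξ hξ]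
  -- split the p∣b part on q
  rw [← Finset.sum_filter_add_sum_filter_not (B.filter (fun b => (p : ℤ) ∣ b))
    (fun b => (q : ℤ) ∣ b) (fun b => ξ ^ b), Finset.filter_filter, Finset.filter_filter]
  -- Y part
  have hYset : B.filter (fun b => (p : ℤ) ∣ b ∧ ¬ (q : ℤ) ∣ b)
      = B.filter (fun b => ¬ (q : ℤ) ∣ b ∧ (p : ℤ) ∣ b ∧ (r : ℤ) ∣ b) := by
    ext b
    simp only [mem_filter]
    constructor
    · rintro ⟨hb, hpb, hnq⟩
      rcases haxes b hb with h | h | h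
      · exact absurd h.1 hnq
      · exact ⟨hb, hnq, hpb, h.2⟩
      · exact absurd h.2 hnq
    · rintro ⟨hb, hnq, hpb, -⟩; exact ⟨hb, hpb, hnq⟩
  have hy' : ∀ j : ℤ, ¬ (q : ℤ) ∣ j →
      (B.filter (fun b => b ≡ j [ZMOD (q : ℤ)] ∧ (p : ℤ) ∣ b ∧ (r : ℤ) ∣ b)).card = y := by
    intro j hj
    rw [← hy j hj]
    congr 1
    ext b; simp only [mem_filter]; tauto
  have hYeq := axis_eval q p r hq hp hr (Ne.symm hpq) hqr hpr B y hy' ξ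
    (by rw [show q * p * r = p * q * r by ring]; exact hξ)
  rw [hYset, hYeq]
  -- split the p∣b ∧ q∣b part on r
  rw [← Finset.sum_filter_add_sum_filter_not (B.filter (fun b => (p : ℤ) ∣ b ∧ (q : ℤ) ∣ b))
    (fun b => (r : ℤ) ∣ b) (fun b => ξ ^ b), Finset.filter_filter, Finset.filter_filter]
  -- Z part
  have hZset : B.filter (fun b => ((p : ℤ) ∣ b ∧ (q : ℤ) ∣ b) ∧ ¬ (r : ℤ) ∣ b)
      = B.filter (fun b => ¬ (r : ℤ) ∣ b ∧ (p : ℤ) ∣ b ∧ (q : ℤ) ∣ b) := by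
    ext b; simp only [mem_filter]; tauto
  have hz' : ∀ k : ℤ, ¬ (r : ℤ) ∣ k →
      (B.filter (fun b => b ≡ k [ZMOD (r : ℤ)] ∧ (p : ℤ) ∣ b ∧ (q : ℤ) ∣ b)).card = z := by
    intro k hk
    rw [← hz k hk]
    congr 1
    ext b; simp only [mem_filter]; tauto
  have hZeq := axis_eval r p q hr hp hq (Ne.symm hpr) (Ne.symm hqr) hpq B z hz' ξ
    (by rw [show r * p * q = p * q * r by ring]; exact hξ)
  rw [hZset, hZeq]
  -- T part
  have hTset : B.filter (fun b => ((p : ℤ) ∣ b ∧ (q : ℤ) ∣ b) ∧ (r : ℤ) ∣ b)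
      = B.filter (fun b => (p : ℤ) ∣ b ∧ (q : ℤ) ∣ b ∧ (r : ℤ) ∣ b) := by
    ext b; simp only [mem_filter]; tauto
  have hTone : ∀ b ∈ B.filter (fun b => (p : ℤ) ∣ b ∧ (q : ℤ) ∣ b ∧ (r : ℤ) ∣ b),
      ξ ^ b = 1 := by
    intro b hb
    simp only [mem_filter] at hb
    obtain ⟨-, hpb, hqb, hrb⟩ := hb
    have hdvd : ((p * q * r : ℕ) : ℤ) ∣ b := by
      push_cast
      rw [mul_assoc]
      exact (cpq.mul_right cpr).mul_dvd hpb (cqr.mul_dvd hqb hrb)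
    obtain ⟨c, rfl⟩ := hdvd
    rw [zpow_mul, zpow_natCast, hξ, one_zpow]
  have hTeq : ∑ b ∈ B.filter (fun b => (p : ℤ) ∣ b ∧ (q : ℤ) ∣ b ∧ (r : ℤ) ∣ b), ξ ^ b
      = (t : ℂ) := by
    rw [Finset.sum_congr rfl hTone, Finset.sum_const, ht, nsmul_eq_mul, mul_one]
  rw [hTset, hTeq]
  ring

theorem stmt_13 (p q r : ℕ) (hp : p.Prime) (hq : q.Prime) (hr : r.Prime)
    (hpq : p ≠ q) (hpr : p ≠ r) (hqr : q ≠ r)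
    (B : Finset ℤ) (t x y z : ℕ) (hx0 : 1 ≤ x) (hy0 : 1 ≤ y) (hz0 : 1 ≤ z)
    (haxes : ∀ b ∈ B,
      ((q : ℤ) ∣ b ∧ (r : ℤ) ∣ b) ∨ ((p : ℤ) ∣ b ∧ (r : ℤ) ∣ b) ∨ ((p : ℤ) ∣ b ∧ (q : ℤ) ∣ b))
    (ht : (B.filter (fun b => (p : ℤ) ∣ b ∧ (q : ℤ) ∣ b ∧ (r : ℤ) ∣ b)).card = t)
    (hx : ∀ i : ℤ, ¬ (p : ℤ) ∣ i →
      (B.filter (fun b => b ≡ i [ZMOD (p : ℤ)] ∧ (q : ℤ) ∣ b ∧ (r : ℤ) ∣ b)).card = x)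
    (hy : ∀ j : ℤ, ¬ (q : ℤ) ∣ j →
      (B.filter (fun b => (p : ℤ) ∣ b ∧ b ≡ j [ZMOD (q : ℤ)] ∧ (r : ℤ) ∣ b)).card = y)
    (hz : ∀ k : ℤ, ¬ (r : ℤ) ∣ k →
      (B.filter (fun b => (p : ℤ) ∣ b ∧ (q : ℤ) ∣ b ∧ b ≡ k [ZMOD (r : ℤ)])).card = z)
    (hΦpqr : ∀ ξ : ℂ, IsPrimitiveRoot ξ (p * q * r) → ∑ b ∈ B, ξ ^ b = 0) :
    ¬ (∀ ξ : ℂ, IsPrimitiveRoot ξ (p * q) → ∑ b ∈ B, ξ ^ b = 0) ∧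
      ¬ (∀ ξ : ℂ, IsPrimitiveRoot ξ (q * r) → ∑ b ∈ B, ξ ^ b = 0) ∧
      ¬ (∀ ξ : ℂ, IsPrimitiveRoot ξ (p * r) → ∑ b ∈ B, ξ ^ b = 0) := by
  have hcrp : Nat.Coprime r p := (Nat.coprime_primes hr hp).mpr (Ne.symm hpr)
  have hcrq : Nat.Coprime r q := (Nat.coprime_primes hr hq).mpr (Ne.symm hqr)
  have hcqp : Nat.Coprime q p := (Nat.coprime_primes hq hp).mpr (Ne.symm hpq)
  have hcqr : Nat.Coprime q r := (Nat.coprime_primes hq hr).mpr hqr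
  have hcpq : Nat.Coprime p q := (Nat.coprime_primes hp hq).mpr hpq
  have hcpr : Nat.Coprime p r := (Nat.coprime_primes hp hr).mpr hpr
  have EV := eval_sum p q r hp hq hr hpq hpr hqr B t x y z haxes ht hx hy hz
  -- Step 1 : t = x + y + z
  have htxyz : (t : ℂ) = (x : ℂ) + y + z := by
    set ξ := Complex.exp (2 * Real.pi * Complex.I / (p * q * r)) with hξdef
    have hprim : IsPrimitiveRoot ξ (p * q * r) := by
      have := Complex.isPrimitiveRoot_exp (p * q * r)
        (Nat.mul_ne_zero (Nat.mul_ne_zero hp.pos.ne' hq.pos.ne') hr.pos.ne')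
      simpa [hξdef] using this
    have h0 := hΦpqr ξ hprim
    have hpow : ξ ^ (p * q * r) = 1 := hprim.pow_eq_one
    have hGp : (∑ k ∈ range p, (ξ ^ (q * r)) ^ k) = 0 :=
      (hprim.pow (by exact Nat.pos_of_ne_zero (by intro h; simp [Nat.mul_eq_zero, hp.pos.ne', hq.pos.ne', hr.pos.ne'] at h)) (show p * q * r = (q * r) * p by ring)).geom_sum_eq_zero hp.one_lt
    have hGq : (∑ k ∈ range q, (ξ ^ (p * r)) ^ k) = 0 :=
      (hprim.pow (by exact Nat.pos_of_ne_zero (by intro h; simp [Nat.mul_eq_zero, hp.pos.ne', hq.pos.ne', hr.pos.ne'] at h)) (show p * q * r = (p * r) * q by ring)).geom_sum_eq_zero hq.one_lt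
    have hGr : (∑ k ∈ range r, (ξ ^ (p * q)) ^ k) = 0 :=
      (hprim.pow (by exact Nat.pos_of_ne_zero (by intro h; simp [Nat.mul_eq_zero, hp.pos.ne', hq.pos.ne', hr.pos.ne'] at h)) (show p * q * r = (p * q) * r by ring)).geom_sum_eq_zero hr.one_lt
    have := EV ξ hpow
    rw [h0, hGp, hGq, hGr] at this
    linear_combination -this
  have htn : t = x + y + z := by exact_mod_cast htxyz
  refine ⟨?_, ?_, ?_⟩
  -- pq
  · intro hfal
    set ξ := Complex.exp (2 * Real.pi * Complex.I / (p * q)) with hξdef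
    have hprim : IsPrimitiveRoot ξ (p * q) := by
      have := Complex.isPrimitiveRoot_exp (p * q) (Nat.mul_ne_zero hp.pos.ne' hq.pos.ne')
      simpa [hξdef] using this
    have h0 := hfal ξ hprim
    have hpow : ξ ^ (p * q * r) = 1 := by rw [pow_mul, hprim.pow_eq_one, one_pow]
    have hGp : (∑ k ∈ range p, (ξ ^ (q * r)) ^ k) = 0 := by
      have h1 : IsPrimitiveRoot (ξ ^ q) p := hprim.pow (by exact Nat.pos_of_ne_zero (by intro h; simp [Nat.mul_eq_zero, hp.pos.ne', hq.pos.ne', hr.pos.ne'] at h))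
        (show p * q = q * p by ring)
      have h2 : IsPrimitiveRoot ((ξ ^ q) ^ r) p := h1.pow_of_coprime r hcrp
      rw [← pow_mul] at h2
      exact h2.geom_sum_eq_zero hp.one_lt
    have hGq : (∑ k ∈ range q, (ξ ^ (p * r)) ^ k) = 0 := by
      have h1 : IsPrimitiveRoot (ξ ^ p) q := hprim.pow (by exact Nat.pos_of_ne_zero (by intro h; simp [Nat.mul_eq_zero, hp.pos.ne', hq.pos.ne', hr.pos.ne'] at h)) rfl
      have h2 : IsPrimitiveRoot ((ξ ^ p) ^ r) q := h1.pow_of_coprime r hcrq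
      rw [← pow_mul] at h2
      exact h2.geom_sum_eq_zero hq.one_lt
    have hGr : (∑ k ∈ range r, (ξ ^ (p * q)) ^ k) = 0 + (r : ℂ) := by
      rw [hprim.pow_eq_one]
      simp
    have := EV ξ hpow
    rw [h0, hGp, hGq, hGr, htxyz] at this
    have hzr : (z : ℂ) * r = 0 := by linear_combination -this
    have : z * r = 0 := by exact_mod_cast hzr
    rcases Nat.mul_eq_zero.mp this with h | h
    · omega
    · exact hr.pos.ne' h
  -- qr
  · intro hfal
    set ξ := Complex.exp (2 * Real.pi * Complex.I / (q * r)) with hξdef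
    have hprim : IsPrimitiveRoot ξ (q * r) := by
      have := Complex.isPrimitiveRoot_exp (q * r) (Nat.mul_ne_zero hq.pos.ne' hr.pos.ne')
      simpa [hξdef] using this
    have h0 := hfal ξ hprim
    have hpow : ξ ^ (p * q * r) = 1 := by
      rw [show p * q * r = (q * r) * p by ring, pow_mul, hprim.pow_eq_one, one_pow]
    have hGp : (∑ k ∈ range p, (ξ ^ (q * r)) ^ k) = 0 + (p : ℂ) := by
      rw [hprim.pow_eq_one]
      simp
    have hGq : (∑ k ∈ range q, (ξ ^ (p * r)) ^ k) = 0 := by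
      have h1 : IsPrimitiveRoot (ξ ^ r) q := hprim.pow (by exact Nat.pos_of_ne_zero (by intro h; simp [Nat.mul_eq_zero, hp.pos.ne', hq.pos.ne', hr.pos.ne'] at h))
        (show q * r = r * q by ring)
      have h2 : IsPrimitiveRoot ((ξ ^ r) ^ p) q := h1.pow_of_coprime p hcpq
      rw [← pow_mul, show r * p = p * r by ring] at h2
      exact h2.geom_sum_eq_zero hq.one_lt
    have hGr : (∑ k ∈ range r, (ξ ^ (p * q)) ^ k) = 0 := by
      have h1 : IsPrimitiveRoot (ξ ^ q) r := hprim.pow (by exact Nat.pos_of_ne_zero (by intro h; simp [Nat.mul_eq_zero, hp.pos.ne', hq.pos.ne', hr.pos.ne'] at h)) rfl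
      have h2 : IsPrimitiveRoot ((ξ ^ q) ^ p) r := h1.pow_of_coprime p hcpr
      rw [← pow_mul, show q * p = p * q by ring] at h2
      exact h2.geom_sum_eq_zero hr.one_lt
    have := EV ξ hpow
    rw [h0, hGp, hGq, hGr, htxyz] at this
    have hxp : (x : ℂ) * p = 0 := by linear_combination -this
    have : x * p = 0 := by exact_mod_cast hxp
    rcases Nat.mul_eq_zero.mp this with h | h
    · omega
    · exact hp.pos.ne' h
  -- pr
  · intro hfal
    set ξ := Complex.exp (2 * Real.pi * Complex.I / (p * r)) with hξdef
    have hprim : IsPrimitiveRoot ξ (p * r) := by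
      have := Complex.isPrimitiveRoot_exp (p * r) (Nat.mul_ne_zero hp.pos.ne' hr.pos.ne')
      simpa [hξdef] using this
    have h0 := hfal ξ hprim
    have hpow : ξ ^ (p * q * r) = 1 := by
      rw [show p * q * r = (p * r) * q by ring, pow_mul, hprim.pow_eq_one, one_pow]
    have hGp : (∑ k ∈ range p, (ξ ^ (q * r)) ^ k) = 0 := by
      have h1 : IsPrimitiveRoot (ξ ^ r) p := hprim.pow (by exact Nat.pos_of_ne_zero (by intro h; simp [Nat.mul_eq_zero, hp.pos.ne', hq.pos.ne', hr.pos.ne'] at h))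
        (show p * r = r * p by ring)
      have h2 : IsPrimitiveRoot ((ξ ^ r) ^ q) p := h1.pow_of_coprime q hcqp
      rw [← pow_mul, show r * q = q * r by ring] at h2
      exact h2.geom_sum_eq_zero hp.one_lt
    have hGq : (∑ k ∈ range q, (ξ ^ (p * r)) ^ k) = 0 + (q : ℂ) := by
      rw [hprim.pow_eq_one]
      simp
    have hGr : (∑ k ∈ range r, (ξ ^ (p * q)) ^ k) = 0 := by
      have h1 : IsPrimitiveRoot (ξ ^ p) r := hprim.pow (by exact Nat.pos_of_ne_zero (by intro h; simp [Nat.mul_eq_zero, hp.pos.ne', hq.pos.ne', hr.pos.ne'] at h)) rfl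
      have h2 : IsPrimitiveRoot ((ξ ^ p) ^ q) r := h1.pow_of_coprime q hcqr
      rw [← pow_mul] at h2
      exact h2.geom_sum_eq_zero hr.one_lt
    have := EV ξ hpow
    rw [h0, hGp, hGq, hGr, htxyz] at this
    have hyq : (y : ℂ) * q = 0 := by linear_combination -this
    have : y * q = 0 := by exact_mod_cast hyq
    rcases Nat.mul_eq_zero.mp this with h | h
    · omega
    · exact hq.pos.ne' h
end
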